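/- arXiv:1606.03745 — 7 statements merged into one kernel-verified Lean document; each statement's English description precedes it below -/
import Mathlib

section
/- Let γ > -1/2 and c > 0. Define h(x) = ∫₀^∞ (x + s²)^γ e^{-c s²} ds for x ≥ 0. Then there exist constants C₁, C₂ > 0 depending only on γ and c such that C₁ (1+x)^γ ≤ h(x) ≤ C₂ (1+x)^γ for all x ≥ 0. -/
open MeasureTheory Real Set

private lemma meas_aux (x γ c : ℝ) :
    AEStronglyMeasurable (fun s : ℝ => (x + s^2)^γ * Real.exp (-c*s^2))
      (volume.restrict (Ioi 0)) := by
  apply Measurable.aestronglyMeasurable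
  fun_prop

private lemma sq_rpow (s : ℝ) (hs : 0 < s) (γ : ℝ) : (s^2)^γ = s^(2*γ) := by
  rw [← Real.rpow_natCast s 2, ← Real.rpow_mul hs.le]
  norm_num

theorem stmt0 (γ c : ℝ) (hγ : -1/2 < γ) (hc : 0 < c) :
    ∃ C₁ C₂ : ℝ, 0 < C₁ ∧ 0 < C₂ ∧ ∀ x : ℝ, 0 ≤ x →
      C₁ * (1 + x) ^ γ ≤ ∫ s in Set.Ioi (0:ℝ), (x + s^2) ^ γ * Real.exp (-c * s^2) ∧
      ∫ s in Set.Ioi (0:ℝ), (x + s^2) ^ γ * Real.exp (-c * s^2) ≤ C₂ * (1 + x) ^ γ := by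
  have h2γ : (-1:ℝ) < 2*γ := by linarith
  rcases le_or_gt 0 γ with hγ0 | hγ0
  · -- case 0 ≤ γ
    set g : ℝ → ℝ := fun s => (1+s^2)^γ * Real.exp (-c*s^2) with hg_def
    have hgint : IntegrableOn g (Ioi 0) := by
      apply Integrable.mono'
        (g := fun s => 2^γ * Real.exp (-c*s^2) + 2^γ * (s^(2*γ) * Real.exp (-c*s^2)))
      · exact (((integrable_exp_neg_mul_sq hc).integrableOn).const_mul (2^γ)).add
          ((integrableOn_rpow_mul_exp_neg_mul_sq hc h2γ).const_mul (2^γ))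
      · apply Measurable.aestronglyMeasurable; fun_prop
      · filter_upwards [ae_restrict_mem measurableSet_Ioi] with s hs
        have hs0 : (0:ℝ) < s := hs
        have hgpos : 0 ≤ g s := by
          apply mul_nonneg (Real.rpow_nonneg (by positivity) _) (Real.exp_nonneg _)
        rw [Real.norm_of_nonneg hgpos]
        rcases le_total s 1 with h1 | h1
        · have : (1+s^2)^γ ≤ 2^γ := Real.rpow_le_rpow (by positivity) (by nlinarith) hγ0
          have h2 : 0 ≤ 2^γ * (s^(2*γ) * Real.exp (-c*s^2)) := by positivity
          have := mul_le_mul_of_nonneg_right this (Real.exp_nonneg (-c*s^2))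
          simp only [hg_def]
          nlinarith
        · have : (1+s^2)^γ ≤ 2^γ * s^(2*γ) := by
            have h2 : (1+s^2) ≤ 2*s^2 := by nlinarith
            calc (1+s^2)^γ ≤ (2*s^2)^γ := Real.rpow_le_rpow (by positivity) h2 hγ0
              _ = 2^γ * (s^2)^γ := Real.mul_rpow (by norm_num) (by positivity)
              _ = 2^γ * s^(2*γ) := by rw [sq_rpow s hs0]
          have h2 : 0 ≤ 2^γ * Real.exp (-c*s^2) := by positivity
          have := mul_le_mul_of_nonneg_right this (Real.exp_nonneg (-c*s^2))
          simp only [hg_def]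
          nlinarith
    refine ⟨Real.exp (-(4*c)), max (∫ s in Ioi (0:ℝ), g s) 1, Real.exp_pos _,
      lt_max_of_lt_right one_pos, fun x hx => ?_⟩
    have hxp : (0:ℝ) < 1 + x := by linarith
    have hfnonneg : ∀ s : ℝ, 0 ≤ (x + s^2)^γ * Real.exp (-c*s^2) := fun s =>
      mul_nonneg (Real.rpow_nonneg (by positivity) _) (Real.exp_nonneg _)
    -- pointwise upper bound
    have hptw : ∀ s ∈ Ioi (0:ℝ), (x + s^2)^γ * Real.exp (-c*s^2) ≤ (1+x)^γ * g s := by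
      intro s hs
      have key : (x+s^2)^γ ≤ (1+x)^γ * (1+s^2)^γ := by
        calc (x+s^2)^γ ≤ ((1+x)*(1+s^2))^γ :=
              Real.rpow_le_rpow (by positivity) (by nlinarith) hγ0
          _ = (1+x)^γ * (1+s^2)^γ := Real.mul_rpow hxp.le (by positivity)
      calc (x+s^2)^γ * Real.exp (-c*s^2) ≤ ((1+x)^γ * (1+s^2)^γ) * Real.exp (-c*s^2) :=
            mul_le_mul_of_nonneg_right key (Real.exp_nonneg _)
        _ = (1+x)^γ * g s := by rw [hg_def]; ring
    have hGint : IntegrableOn (fun s => (1+x)^γ * g s) (Ioi 0) := hgint.const_mul _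
    have hfint : IntegrableOn (fun s => (x + s^2)^γ * Real.exp (-c*s^2)) (Ioi 0) := by
      apply Integrable.mono' hGint (meas_aux x γ c)
      filter_upwards [ae_restrict_mem measurableSet_Ioi] with s hs
      rw [Real.norm_of_nonneg (hfnonneg s)]
      exact hptw s hs
    constructor
    · -- lower bound
      have h1 : ∫ s in Ioc (1:ℝ) 2, (x + s^2)^γ * Real.exp (-c*s^2) ≤
          ∫ s in Ioi (0:ℝ), (x + s^2)^γ * Real.exp (-c*s^2) := by
        apply setIntegral_mono_set hfint
        · filter_upwards with s using hfnonneg s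
        · filter_upwards with s hs
          exact lt_trans one_pos hs.1
      have h2 : Real.exp (-(4*c)) * (1+x)^γ ≤
          ∫ s in Ioc (1:ℝ) 2, (x + s^2)^γ * Real.exp (-c*s^2) := by
        have := setIntegral_mono_on (μ := volume) (s := Ioc (1:ℝ) 2)
          (f := fun _ => Real.exp (-(4*c)) * (1+x)^γ)
          (g := fun s => (x + s^2)^γ * Real.exp (-c*s^2))
          (integrableOn_const measure_Ioc_lt_top.ne)
          (hfint.mono_set (fun s hs => lt_trans one_pos hs.1))
          measurableSet_Ioc ?_
        · rw [setIntegral_const, Real.volume_real_Ioc, smul_eq_mul] at this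
          rw [show ((2:ℝ) - 1) = 1 by norm_num, max_eq_left zero_le_one,
            one_mul] at this
          exact this
        · intro s hs
          have hs1 : 1 < s := hs.1
          have hs2 : s ≤ 2 := hs.2
          have hb : (1+x)^γ ≤ (x+s^2)^γ :=
            Real.rpow_le_rpow hxp.le (by nlinarith) hγ0
          have he : Real.exp (-(4*c)) ≤ Real.exp (-c*s^2) := by
            apply Real.exp_le_exp.2
            nlinarith [mul_le_mul_of_nonneg_left (show s^2 ≤ 4 by nlinarith) hc.le]
          rw [mul_comm]
          exact mul_le_mul hb he (Real.exp_nonneg _) (Real.rpow_nonneg (by positivity) _)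
      calc Real.exp (-(4*c)) * (1+x)^γ ≤ _ := h2
        _ ≤ _ := h1
    · -- upper bound
      have hInt := integral_mono_of_nonneg (μ := volume.restrict (Ioi 0))
        (f := fun s => (x + s^2)^γ * Real.exp (-c*s^2))
        (g := fun s => (1+x)^γ * g s)
        (Filter.Eventually.of_forall hfnonneg) hGint ?_
      · rw [integral_const_mul] at hInt
        have hCg : (∫ s in Ioi (0:ℝ), g s) ≤ max (∫ s in Ioi (0:ℝ), g s) 1 := le_max_left _ _
        calc ∫ s in Ioi (0:ℝ), (x + s^2)^γ * Real.exp (-c*s^2)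
            ≤ (1+x)^γ * ∫ s in Ioi (0:ℝ), g s := hInt
          _ ≤ (1+x)^γ * max (∫ s in Ioi (0:ℝ), g s) 1 :=
              mul_le_mul_of_nonneg_left hCg (Real.rpow_nonneg hxp.le _)
          _ = max (∫ s in Ioi (0:ℝ), g s) 1 * (1+x)^γ := by ring
      · filter_upwards [ae_restrict_mem measurableSet_Ioi] with s hs
        exact hptw s hs
  · -- case γ < 0
    set g : ℝ → ℝ := fun s => (s^(2*γ) * (1+s^2)^(-γ)) * Real.exp (-c*s^2) with hg_def
    have hγ0' : γ ≤ 0 := hγ0.le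
    have hgint : IntegrableOn g (Ioi 0) := by
      apply Integrable.mono'
        (g := fun s => 2^(-γ) * (s^(2*γ) * Real.exp (-c*s^2)) + 2^(-γ) * Real.exp (-c*s^2))
      · exact ((integrableOn_rpow_mul_exp_neg_mul_sq hc h2γ).const_mul (2^(-γ))).add
          (((integrable_exp_neg_mul_sq hc).integrableOn).const_mul (2^(-γ)))
      · apply Measurable.aestronglyMeasurable; fun_prop
      · filter_upwards [ae_restrict_mem measurableSet_Ioi] with s hs
        have hs0 : (0:ℝ) < s := hs
        have hgpos : 0 ≤ g s := by
          apply mul_nonneg (mul_nonneg (Real.rpow_nonneg hs0.le _)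
            (Real.rpow_nonneg (by positivity) _)) (Real.exp_nonneg _)
        rw [Real.norm_of_nonneg hgpos]
        rcases le_total s 1 with h1 | h1
        · have hbb : (1+s^2)^(-γ) ≤ 2^(-γ) :=
            Real.rpow_le_rpow (by positivity) (by nlinarith) (by linarith)
          have : s^(2*γ) * (1+s^2)^(-γ) ≤ 2^(-γ) * s^(2*γ) := by
            have := mul_le_mul_of_nonneg_left hbb (Real.rpow_nonneg hs0.le (2*γ))
            linarith [this]
          have h2 : 0 ≤ 2^(-γ) * Real.exp (-c*s^2) := by positivity
          have h3 := mul_le_mul_of_nonneg_right this (Real.exp_nonneg (-c*s^2))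
          simp only [hg_def]
          nlinarith
        · have hbb : (1+s^2)^(-γ) ≤ 2^(-γ) * s^(-(2*γ)) := by
            calc (1+s^2)^(-γ) ≤ (2*s^2)^(-γ) :=
                  Real.rpow_le_rpow (by positivity) (by nlinarith) (by linarith)
              _ = 2^(-γ) * (s^2)^(-γ) := Real.mul_rpow (by norm_num) (by positivity)
              _ = 2^(-γ) * s^(-(2*γ)) := by rw [sq_rpow s hs0]; ring_nf
          have : s^(2*γ) * (1+s^2)^(-γ) ≤ 2^(-γ) := by
            have h4 := mul_le_mul_of_nonneg_left hbb (Real.rpow_nonneg hs0.le (2*γ))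
            have h5 : s^(2*γ) * (2^(-γ) * s^(-(2*γ))) = 2^(-γ) := by
              rw [show s^(2*γ) * (2^(-γ) * s^(-(2*γ))) = 2^(-γ) * (s^(2*γ) * s^(-(2*γ))) by ring,
                ← Real.rpow_add hs0]
              norm_num
            linarith
          have h3 := mul_le_mul_of_nonneg_right this (Real.exp_nonneg (-c*s^2))
          have h6 : 0 ≤ 2^(-γ) * (s^(2*γ) * Real.exp (-c*s^2)) := by positivity
          simp only [hg_def]
          nlinarith
    refine ⟨Real.exp (-c), max (∫ s in Ioi (0:ℝ), g s) 1, Real.exp_pos _,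
      lt_max_of_lt_right one_pos, fun x hx => ?_⟩
    have hxp : (0:ℝ) < 1 + x := by linarith
    have hfnonneg : ∀ s : ℝ, 0 ≤ (x + s^2)^γ * Real.exp (-c*s^2) := fun s =>
      mul_nonneg (Real.rpow_nonneg (by positivity) _) (Real.exp_nonneg _)
    have hptw : ∀ s ∈ Ioi (0:ℝ), (x + s^2)^γ * Real.exp (-c*s^2) ≤ (1+x)^γ * g s := by
      intro s hs
      have hs0 : (0:ℝ) < s := hs
      have hlow : (1+x) * (s^2/(1+s^2)) ≤ x + s^2 := by
        have hpos : (0:ℝ) < 1 + s^2 := by positivity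
        calc (1+x) * (s^2/(1+s^2)) = ((1+x) * s^2)/(1+s^2) := by ring
          _ ≤ x + s^2 := by rw [div_le_iff₀ hpos]; nlinarith
      have hlowpos : (0:ℝ) < (1+x) * (s^2/(1+s^2)) := by positivity
      have key : (x+s^2)^γ ≤ (1+x)^γ * (s^(2*γ) * (1+s^2)^(-γ)) := by
        calc (x+s^2)^γ ≤ ((1+x) * (s^2/(1+s^2)))^γ :=
              Real.rpow_le_rpow_of_nonpos hlowpos hlow hγ0'
          _ = (1+x)^γ * (s^2/(1+s^2))^γ := Real.mul_rpow hxp.le (by positivity)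
          _ = (1+x)^γ * (s^(2*γ) * (1+s^2)^(-γ)) := by
              rw [Real.div_rpow (by positivity) (by positivity), sq_rpow s hs0,
                Real.rpow_neg (by positivity), div_eq_mul_inv]
      calc (x+s^2)^γ * Real.exp (-c*s^2)
          ≤ ((1+x)^γ * (s^(2*γ) * (1+s^2)^(-γ))) * Real.exp (-c*s^2) :=
            mul_le_mul_of_nonneg_right key (Real.exp_nonneg _)
        _ = (1+x)^γ * g s := by rw [hg_def]; ring
    have hGint : IntegrableOn (fun s => (1+x)^γ * g s) (Ioi 0) := hgint.const_mul _
    have hfint : IntegrableOn (fun s => (x + s^2)^γ * Real.exp (-c*s^2)) (Ioi 0) := by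
      apply Integrable.mono' hGint (meas_aux x γ c)
      filter_upwards [ae_restrict_mem measurableSet_Ioi] with s hs
      rw [Real.norm_of_nonneg (hfnonneg s)]
      exact hptw s hs
    constructor
    · have h1 : ∫ s in Ioc (0:ℝ) 1, (x + s^2)^γ * Real.exp (-c*s^2) ≤
          ∫ s in Ioi (0:ℝ), (x + s^2)^γ * Real.exp (-c*s^2) := by
        apply setIntegral_mono_set hfint
        · filter_upwards with s using hfnonneg s
        · filter_upwards with s hs using hs.1
      have h2 : Real.exp (-c) * (1+x)^γ ≤
          ∫ s in Ioc (0:ℝ) 1, (x + s^2)^γ * Real.exp (-c*s^2) := by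
        have := setIntegral_mono_on (μ := volume) (s := Ioc (0:ℝ) 1)
          (f := fun _ => Real.exp (-c) * (1+x)^γ)
          (g := fun s => (x + s^2)^γ * Real.exp (-c*s^2))
          (integrableOn_const measure_Ioc_lt_top.ne)
          (hfint.mono_set (fun s hs => hs.1))
          measurableSet_Ioc ?_
        · rw [setIntegral_const, Real.volume_real_Ioc, smul_eq_mul] at this
          rw [show ((1:ℝ) - 0) = 1 by norm_num, max_eq_left zero_le_one,
            one_mul] at this
          exact this
        · intro s hs
          have hs1 : 0 < s := hs.1
          have hs2 : s ≤ 1 := hs.2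
          have hb : (1+x)^γ ≤ (x+s^2)^γ :=
            Real.rpow_le_rpow_of_nonpos (by positivity) (by nlinarith) hγ0'
          have he : Real.exp (-c) ≤ Real.exp (-c*s^2) := by
            apply Real.exp_le_exp.2
            nlinarith [mul_le_mul_of_nonneg_left (show s^2 ≤ 1 by nlinarith) hc.le]
          rw [mul_comm]
          exact mul_le_mul hb he (Real.exp_nonneg _) (Real.rpow_nonneg (by positivity) _)
      calc Real.exp (-c) * (1+x)^γ ≤ _ := h2
        _ ≤ _ := h1
    · have hInt := integral_mono_of_nonneg (μ := volume.restrict (Ioi 0))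
        (f := fun s => (x + s^2)^γ * Real.exp (-c*s^2))
        (g := fun s => (1+x)^γ * g s)
        (Filter.Eventually.of_forall hfnonneg) hGint ?_
      · rw [integral_const_mul] at hInt
        have hCg : (∫ s in Ioi (0:ℝ), g s) ≤ max (∫ s in Ioi (0:ℝ), g s) 1 := le_max_left _ _
        calc ∫ s in Ioi (0:ℝ), (x + s^2)^γ * Real.exp (-c*s^2)
            ≤ (1+x)^γ * ∫ s in Ioi (0:ℝ), g s := hInt
          _ ≤ (1+x)^γ * max (∫ s in Ioi (0:ℝ), g s) 1 :=
              mul_le_mul_of_nonneg_left hCg (Real.rpow_nonneg hxp.le _)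
          _ = max (∫ s in Ioi (0:ℝ), g s) 1 * (1+x)^γ := by ring
      · filter_upwards [ae_restrict_mem measurableSet_Ioi] with s hs
        exact hptw s hs
end

section
/- Let c > 0 and β > 1. Define I_app(a,b) = ∫₀^∞ ((s + √(4ab + s²))/(2a))^{2(β-1)} · e^{-c s²}/√(4ab + s²) ds for a, b > 0. Then there exist constants C₁, C₂ > 0 depending only on β and c such that C₁ (1 + 4ab)^{β - 3/2} / a^{2(β-1)} ≤ I_app(a,b) ≤ C₂ (1 + 4ab)^{β - 3/2} / a^{2(β-1)} for all a, b > 0. -/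
open MeasureTheory Real Set

lemma gmeas (c p m : ℝ) :
    Measurable (fun s : ℝ => (m + s^2) ^ p * Real.exp (-c * s^2)) := by
  fun_prop

lemma core_low (c p : ℝ) (hc : 0 < c) (m : ℝ) (hm : 0 < m)
    (hgint : IntegrableOn (fun s => (m + s^2) ^ p * Real.exp (-c * s^2)) (Ioi 0)) :
    (4:ℝ) ^ (-|p|) * Real.exp (-(4*c)) * (1+m)^p
      ≤ ∫ s in Ioi (0:ℝ), (m + s^2)^p * Real.exp (-c*s^2) := by
  have hgnn : ∀ s : ℝ, 0 ≤ (m + s^2) ^ p * Real.exp (-c * s^2) := fun s =>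
    mul_nonneg (Real.rpow_nonneg (by positivity) _) (Real.exp_pos _).le
  have hsub : Ioc (1:ℝ) 2 ⊆ Ioi 0 := fun x hx => lt_trans one_pos hx.1
  have h1 : (∫ s in Ioc (1:ℝ) 2, (m + s^2)^p * Real.exp (-c*s^2))
      ≤ ∫ s in Ioi (0:ℝ), (m + s^2)^p * Real.exp (-c*s^2) := by
    apply setIntegral_mono_set hgint
    · exact Filter.Eventually.of_forall hgnn
    · exact HasSubset.Subset.eventuallyLE hsub
  refine le_trans ?_ h1
  have hconst : (∫ _ in Ioc (1:ℝ) 2, (4:ℝ) ^ (-|p|) * Real.exp (-(4*c)) * (1+m)^p)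
      = (4:ℝ) ^ (-|p|) * Real.exp (-(4*c)) * (1+m)^p := by
    rw [setIntegral_const, Real.volume_real_Ioc]
    norm_num
  rw [← hconst]
  apply setIntegral_mono_on
  · exact integrable_const _
  · exact hgint.mono_set hsub
  · exact measurableSet_Ioc
  · intro s hs
    have hs1 : (1:ℝ) < s := hs.1
    have hs2 : s ≤ 2 := hs.2
    have hexp : Real.exp (-(4*c)) ≤ Real.exp (-c * s^2) := by
      apply Real.exp_le_exp.2
      nlinarith [mul_nonneg (mul_nonneg hc.le (sub_nonneg.2 hs2)) (show (0:ℝ) ≤ 2+s by linarith)]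
    have hrp : (4:ℝ) ^ (-|p|) * (1+m)^p ≤ (m + s^2)^p := by
      rcases le_or_gt 0 p with hp0 | hp0
      · rw [abs_of_nonneg hp0]
        have h4 : (4:ℝ) ^ (-p) ≤ 1 :=
          Real.rpow_le_one_of_one_le_of_nonpos (by norm_num) (by linarith)
        have hb : (1+m)^p ≤ (m + s^2)^p :=
          Real.rpow_le_rpow (by positivity) (by nlinarith) hp0
        nlinarith [Real.rpow_nonneg (show (0:ℝ) ≤ 1+m by positivity) p,
          Real.rpow_nonneg (show (0:ℝ) ≤ (4:ℝ) by norm_num) (-p)]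
      · rw [abs_of_neg hp0, neg_neg]
        rw [← Real.mul_rpow (by norm_num) (by positivity)]
        apply Real.rpow_le_rpow_of_nonpos (by positivity) (by nlinarith) hp0.le
    calc (4:ℝ) ^ (-|p|) * Real.exp (-(4*c)) * (1+m)^p
        = ((4:ℝ) ^ (-|p|) * (1+m)^p) * Real.exp (-(4*c)) := by ring
      _ ≤ (m + s^2)^p * Real.exp (-c * s^2) := by
          apply mul_le_mul hrp hexp (Real.exp_pos _).le
          exact Real.rpow_nonneg (by positivity) _

lemma core_up (c p : ℝ) (D : ℝ → ℝ)
    (hD : IntegrableOn D (Ioi 0)) (hDpos : ∀ s ∈ Ioi (0:ℝ), 0 ≤ D s)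
    (m : ℝ) (hm : 0 < m)
    (hbound : ∀ s ∈ Ioi (0:ℝ),
      (m + s^2)^p * Real.exp (-c * s^2) ≤ (1+m)^p * D s) :
    IntegrableOn (fun s => (m + s^2) ^ p * Real.exp (-c * s^2)) (Ioi 0) ∧
    (∫ s in Ioi (0:ℝ), (m + s^2)^p * Real.exp (-c*s^2))
      ≤ ((∫ s in Ioi (0:ℝ), D s) + 1) * (1+m)^p := by
  have hgnn : ∀ s : ℝ, 0 ≤ (m + s^2) ^ p * Real.exp (-c * s^2) := fun s =>
    mul_nonneg (Real.rpow_nonneg (by positivity) _) (Real.exp_pos _).le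
  have hint : IntegrableOn (fun s => (m + s^2) ^ p * Real.exp (-c * s^2)) (Ioi 0) := by
    apply Integrable.mono' (hD.const_mul ((1+m)^p)) ((gmeas c p m).aestronglyMeasurable)
    filter_upwards [ae_restrict_mem measurableSet_Ioi] with s hs
    rw [Real.norm_eq_abs, abs_of_nonneg (hgnn s)]
    exact hbound s hs
  refine ⟨hint, ?_⟩
  have h2 : (∫ s in Ioi (0:ℝ), (m + s^2)^p * Real.exp (-c*s^2))
      ≤ ∫ s in Ioi (0:ℝ), (1+m)^p * D s := by
    apply setIntegral_mono_on hint (hD.const_mul _) measurableSet_Ioi hbound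
  rw [MeasureTheory.integral_const_mul] at h2
  have hDnn : 0 ≤ ∫ s in Ioi (0:ℝ), D s := setIntegral_nonneg measurableSet_Ioi hDpos
  have hmp : 0 ≤ (1+m)^p := Real.rpow_nonneg (by positivity) _
  nlinarith

lemma domex (c p : ℝ) (hc : 0 < c) (hp : -(1/2) < p) :
    ∃ D : ℝ → ℝ, IntegrableOn D (Ioi 0) ∧ (∀ s ∈ Ioi (0:ℝ), 0 ≤ D s) ∧
      ∀ m : ℝ, 0 < m → ∀ s ∈ Ioi (0:ℝ),
        (m + s^2)^p * Real.exp (-c * s^2) ≤ (1+m)^p * D s := by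
  have h2p : (-1 : ℝ) < 2 * p := by linarith
  have hsq : ∀ s : ℝ, 0 < s → (s^2 : ℝ) ^ p = s ^ (2*p) := by
    intro s hs
    rw [← Real.rpow_natCast s 2, ← Real.rpow_mul hs.le]
    norm_num
  rcases le_or_gt 0 p with hp0 | hp0
  · refine ⟨fun s => (1 + s^2)^p * Real.exp (-c * s^2), ?_, ?_, ?_⟩
    · apply Integrable.mono'
        (((integrable_exp_neg_mul_sq hc).integrableOn.const_mul ((2:ℝ)^p)).add
          ((integrableOn_rpow_mul_exp_neg_mul_sq hc h2p).const_mul ((2:ℝ)^p)))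
        ((show Measurable fun s : ℝ => (1 + s^2)^p * Real.exp (-c * s^2) by
          fun_prop).aestronglyMeasurable)
      filter_upwards [ae_restrict_mem measurableSet_Ioi] with s hs
      have hs0 : (0:ℝ) < s := hs
      rw [Real.norm_eq_abs, abs_of_nonneg (by positivity)]
      simp only [Pi.add_apply]
      rcases le_or_gt s 1 with h1 | h1
      · have hb : (1 + s^2 : ℝ)^p ≤ 2^p :=
          Real.rpow_le_rpow (by positivity) (by nlinarith) hp0
        calc (1 + s^2)^p * Real.exp (-c * s^2)
            ≤ 2^p * Real.exp (-c * s^2) :=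
              mul_le_mul_of_nonneg_right hb (Real.exp_pos _).le
          _ ≤ _ := le_add_of_nonneg_right (by positivity)
      · have hb : (1 + s^2 : ℝ)^p ≤ 2^p * s^(2*p) := by
          calc (1 + s^2 : ℝ)^p ≤ (2 * s^2)^p :=
                Real.rpow_le_rpow (by positivity) (by nlinarith) hp0
            _ = 2^p * s^(2*p) := by
                rw [Real.mul_rpow (by norm_num) (by positivity), hsq s hs0]
        calc (1 + s^2)^p * Real.exp (-c * s^2)
            ≤ (2^p * s^(2*p)) * Real.exp (-c * s^2) :=
              mul_le_mul_of_nonneg_right hb (Real.exp_pos _).le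
          _ = 2^p * (s^(2*p) * Real.exp (-c * s^2)) := by ring
          _ ≤ _ := le_add_of_nonneg_left (by positivity)
    · intro s _; positivity
    · intro m hm s hs
      have hle : (m + s^2 : ℝ) ≤ (1+m) * (1+s^2) := by nlinarith [sq_nonneg s]
      calc (m + s^2)^p * Real.exp (-c * s^2)
          ≤ ((1+m) * (1+s^2))^p * Real.exp (-c * s^2) :=
            mul_le_mul_of_nonneg_right
              (Real.rpow_le_rpow (by positivity) hle hp0) (Real.exp_pos _).le
        _ = (1+m)^p * ((1 + s^2)^p * Real.exp (-c * s^2)) := by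
            rw [Real.mul_rpow (by positivity) (by positivity)]; ring
  · refine ⟨fun s => (s^2 / (2 * (1 + s^2)))^p * Real.exp (-c * s^2), ?_, ?_, ?_⟩
    · apply Integrable.mono'
        (((integrableOn_rpow_mul_exp_neg_mul_sq hc h2p).const_mul (((4:ℝ)^p)⁻¹)).add
          ((integrable_exp_neg_mul_sq hc).integrableOn.const_mul (((4:ℝ)^p)⁻¹)))
        ((show Measurable fun s : ℝ => (s^2 / (2 * (1 + s^2)))^p * Real.exp (-c * s^2) by
          fun_prop).aestronglyMeasurable)
      filter_upwards [ae_restrict_mem measurableSet_Ioi] with s hs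
      have hs0 : (0:ℝ) < s := hs
      rw [Real.norm_eq_abs, abs_of_nonneg (by positivity)]
      simp only [Pi.add_apply]
      rcases le_or_gt s 1 with h1 | h1
      · have hb : (s^2 / (2 * (1 + s^2)))^p ≤ ((4:ℝ)^p)⁻¹ * s^(2*p) := by
          calc (s^2 / (2 * (1 + s^2)))^p ≤ (s^2/4)^p := by
                apply Real.rpow_le_rpow_of_nonpos (by positivity) ?_ hp0.le
                apply div_le_div_of_nonneg_left (by positivity) (by positivity) (by nlinarith)
            _ = ((4:ℝ)^p)⁻¹ * s^(2*p) := by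
                rw [Real.div_rpow (by positivity) (by norm_num), hsq s hs0, div_eq_mul_inv]
                ring
        calc (s^2 / (2 * (1 + s^2)))^p * Real.exp (-c * s^2)
            ≤ (((4:ℝ)^p)⁻¹ * s^(2*p)) * Real.exp (-c * s^2) :=
              mul_le_mul_of_nonneg_right hb (Real.exp_pos _).le
          _ = ((4:ℝ)^p)⁻¹ * (s^(2*p) * Real.exp (-c * s^2)) := by ring
          _ ≤ _ := le_add_of_nonneg_right (by positivity)
      · have hb : (s^2 / (2 * (1 + s^2)))^p ≤ ((4:ℝ)^p)⁻¹ := by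
          calc (s^2 / (2 * (1 + s^2)))^p ≤ ((1:ℝ)/4)^p := by
                apply Real.rpow_le_rpow_of_nonpos (by norm_num) ?_ hp0.le
                rw [div_le_div_iff₀ (by norm_num) (by positivity)]; nlinarith
            _ = ((4:ℝ)^p)⁻¹ := by
                rw [Real.div_rpow (by norm_num) (by norm_num), Real.one_rpow, one_div]
        calc (s^2 / (2 * (1 + s^2)))^p * Real.exp (-c * s^2)
            ≤ ((4:ℝ)^p)⁻¹ * Real.exp (-c * s^2) :=
              mul_le_mul_of_nonneg_right hb (Real.exp_pos _).le
          _ ≤ _ := le_add_of_nonneg_left (by positivity)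
    · intro s _; positivity
    · intro m hm s hs
      have hs0 : (0:ℝ) < s := hs
      have hY : (0:ℝ) < (1+m) * (s^2 / (2 * (1 + s^2))) := by positivity
      have hYX : (1+m) * (s^2 / (2 * (1 + s^2))) ≤ m + s^2 := by
        calc (1+m) * (s^2 / (2 * (1 + s^2))) = ((1+m) * s^2) / (2 * (1 + s^2)) :=
              (mul_div_assoc _ _ _).symm
          _ ≤ m + s^2 := by
              rw [div_le_iff₀ (by positivity)]
              nlinarith [sq_nonneg s, mul_pos hm (by positivity : (0:ℝ) < s^2)]
      calc (m + s^2)^p * Real.exp (-c * s^2)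
          ≤ ((1+m) * (s^2 / (2 * (1 + s^2))))^p * Real.exp (-c * s^2) :=
            mul_le_mul_of_nonneg_right
              (Real.rpow_le_rpow_of_nonpos hY hYX hp0.le) (Real.exp_pos _).le
        _ = (1+m)^p * ((s^2 / (2 * (1 + s^2)))^p * Real.exp (-c * s^2)) := by
            rw [Real.mul_rpow (by positivity) (by positivity)]; ring

lemma key (c p : ℝ) (hc : 0 < c) (hp : -(1/2) < p) :
    ∃ K₁ K₂ : ℝ, 0 < K₁ ∧ 0 < K₂ ∧ ∀ m : ℝ, 0 < m →
      IntegrableOn (fun s => (m + s^2)^p * Real.exp (-c*s^2)) (Ioi 0) ∧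
      K₁ * (1+m)^p ≤ (∫ s in Ioi (0:ℝ), (m + s^2)^p * Real.exp (-c*s^2)) ∧
      (∫ s in Ioi (0:ℝ), (m + s^2)^p * Real.exp (-c*s^2)) ≤ K₂ * (1+m)^p := by
  obtain ⟨D, hDint, hDpos, hDb⟩ := domex c p hc hp
  have hDnn : 0 ≤ ∫ s in Ioi (0:ℝ), D s := setIntegral_nonneg measurableSet_Ioi hDpos
  refine ⟨(4:ℝ)^(-|p|) * Real.exp (-(4*c)), (∫ s in Ioi (0:ℝ), D s) + 1,
    by positivity, by linarith, ?_⟩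
  intro m hm
  obtain ⟨hint, hup⟩ := core_up c p D hDint hDpos m hm (hDb m hm)
  exact ⟨hint, core_low c p hc m hm hint, hup⟩

lemma sandwich (c β a b s : ℝ) (hβ : 1 < β) (ha : 0 < a) (hb : 0 < b) (hs : 0 < s) :
    (1/(2*a)^(2*(β-1))) * ((4*a*b + s^2)^(β-3/2) * Real.exp (-c*s^2))
      ≤ ((s + Real.sqrt (4*a*b + s^2)) / (2*a)) ^ (2*(β-1)) *
          (Real.exp (-c * s^2) / Real.sqrt (4*a*b + s^2))
    ∧ ((s + Real.sqrt (4*a*b + s^2)) / (2*a)) ^ (2*(β-1)) *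
          (Real.exp (-c * s^2) / Real.sqrt (4*a*b + s^2))
      ≤ (1/a^(2*(β-1))) * ((4*a*b + s^2)^(β-3/2) * Real.exp (-c*s^2)) := by
  set x := 4*a*b + s^2 with hxdef
  have hx : 0 < x := by positivity
  set v := Real.sqrt x with hvdef
  have hv : 0 < v := Real.sqrt_pos.2 hx
  have hsv : s ≤ v := by
    rw [hvdef, show s = Real.sqrt (s^2) from (Real.sqrt_sq hs.le).symm]
    exact Real.sqrt_le_sqrt (by nlinarith)
  have he : 0 < 2*(β-1) := by linarith
  have hv1 : v ^ (2*(β-1)) / v = x ^ (β - 3/2) := by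
    have : v ^ (2*(β-1)) / v = v ^ ((2*(β-1)) - 1) := by
      rw [Real.rpow_sub hv, Real.rpow_one]
    rw [this, hvdef, Real.sqrt_eq_rpow, ← Real.rpow_mul hx.le]
    congr 1
    ring
  have hsplit : ∀ t : ℝ, 0 < t → (v/t)^(2*(β-1)) * (Real.exp (-c*s^2) / v)
      = (1/t^(2*(β-1))) * (x^(β-3/2) * Real.exp (-c*s^2)) := by
    intro t ht
    rw [Real.div_rpow (Real.sqrt_nonneg x) ht.le]
    rw [show v ^ (2*(β-1)) / t ^ (2*(β-1)) * (Real.exp (-c*s^2) / v)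
      = (v ^ (2*(β-1)) / v) * Real.exp (-c*s^2) * (1/t^(2*(β-1))) from by ring, hv1]
    ring
  constructor
  · rw [← hsplit (2*a) (by positivity)]
    apply mul_le_mul_of_nonneg_right _ (by positivity)
    apply Real.rpow_le_rpow (by positivity) _ he.le
    apply div_le_div_of_nonneg_right _ (by positivity)
    linarith
  · have h2v : (s + v) / (2*a) ≤ v / a := by
      rw [div_le_div_iff₀ (by positivity) ha]
      nlinarith
    calc ((s + v) / (2*a)) ^ (2*(β-1)) * (Real.exp (-c * s^2) / v)
        ≤ (v/a) ^ (2*(β-1)) * (Real.exp (-c * s^2) / v) := by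
          apply mul_le_mul_of_nonneg_right _ (by positivity)
          exact Real.rpow_le_rpow (by positivity) h2v he.le
      _ = (1/a^(2*(β-1))) * (x^(β-3/2) * Real.exp (-c*s^2)) := hsplit a ha

theorem stmt2 (c β : ℝ) (hc : 0 < c) (hβ : 1 < β) :
    ∃ C₁ C₂ : ℝ, 0 < C₁ ∧ 0 < C₂ ∧ ∀ a b : ℝ, 0 < a → 0 < b →
      C₁ * (1 + 4*a*b) ^ (β - 3/2) / a ^ (2*(β-1)) ≤
        (∫ s in Set.Ioi (0:ℝ),
          ((s + Real.sqrt (4*a*b + s^2)) / (2*a)) ^ (2*(β-1)) *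
            (Real.exp (-c * s^2) / Real.sqrt (4*a*b + s^2))) ∧
      (∫ s in Set.Ioi (0:ℝ),
          ((s + Real.sqrt (4*a*b + s^2)) / (2*a)) ^ (2*(β-1)) *
            (Real.exp (-c * s^2) / Real.sqrt (4*a*b + s^2))) ≤
        C₂ * (1 + 4*a*b) ^ (β - 3/2) / a ^ (2*(β-1)) := by
  have hp : -(1/2 : ℝ) < β - 3/2 := by linarith
  obtain ⟨K₁, K₂, hK₁, hK₂, hkey⟩ := key c (β - 3/2) hc hp
  have h2e : (0:ℝ) < (2:ℝ) ^ (2*(β-1)) := Real.rpow_pos_of_pos two_pos _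
  refine ⟨K₁ / (2:ℝ) ^ (2*(β-1)), K₂, by positivity, hK₂, ?_⟩
  intro a b ha hb
  have hm : 0 < 4*a*b := by positivity
  obtain ⟨hgint, hlow, hup⟩ := hkey (4*a*b) hm
  have hae : (0:ℝ) < a ^ (2*(β-1)) := Real.rpow_pos_of_pos ha _
  have h2ae : (0:ℝ) < (2*a) ^ (2*(β-1)) := Real.rpow_pos_of_pos (by positivity) _
  have h2a : ((2*a):ℝ) ^ (2*(β-1)) = (2:ℝ)^(2*(β-1)) * a^(2*(β-1)) :=
    Real.mul_rpow (by norm_num) ha.le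
  set f := fun s : ℝ => ((s + Real.sqrt (4*a*b + s^2)) / (2*a)) ^ (2*(β-1)) *
      (Real.exp (-c * s^2) / Real.sqrt (4*a*b + s^2)) with hfdef
  have hfmeas : Measurable f := by fun_prop
  have hfnn : ∀ s ∈ Ioi (0:ℝ), 0 ≤ f s := by
    intro s hs
    have hs0 : (0:ℝ) < s := hs
    have : (0:ℝ) ≤ (s + Real.sqrt (4*a*b + s^2)) / (2*a) := by positivity
    exact mul_nonneg (Real.rpow_nonneg this _) (by positivity)
  have hfint : IntegrableOn f (Ioi 0) := by
    apply Integrable.mono' (hgint.const_mul (1/a^(2*(β-1)))) hfmeas.aestronglyMeasurable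
    filter_upwards [ae_restrict_mem measurableSet_Ioi] with s hs
    rw [Real.norm_eq_abs, abs_of_nonneg (hfnn s hs)]
    exact (sandwich c β a b s hβ ha hb hs).2
  have hIup : (∫ s in Ioi (0:ℝ), f s)
      ≤ (1/a^(2*(β-1))) * ∫ s in Ioi (0:ℝ), (4*a*b + s^2)^(β-3/2) * Real.exp (-c*s^2) := by
    rw [← MeasureTheory.integral_const_mul]
    apply setIntegral_mono_on hfint (hgint.const_mul _) measurableSet_Ioi
    intro s hs
    exact (sandwich c β a b s hβ ha hb hs).2
  have hIlow : (1/(2*a)^(2*(β-1))) * (∫ s in Ioi (0:ℝ), (4*a*b + s^2)^(β-3/2) * Real.exp (-c*s^2))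
      ≤ ∫ s in Ioi (0:ℝ), f s := by
    rw [← MeasureTheory.integral_const_mul]
    apply setIntegral_mono_on (hgint.const_mul _) hfint measurableSet_Ioi
    intro s hs
    exact (sandwich c β a b s hβ ha hb hs).1
  constructor
  · refine le_trans ?_ hIlow
    rw [h2a]
    have h1 : K₁ * (1 + 4*a*b) ^ (β - 3/2)
        ≤ ∫ s in Ioi (0:ℝ), (4*a*b + s^2)^(β-3/2) * Real.exp (-c*s^2) := hlow
    have h2 : (0:ℝ) < (2:ℝ)^(2*(β-1)) * a^(2*(β-1)) := by positivity
    calc K₁ / (2:ℝ)^(2*(β-1)) * (1 + 4*a*b) ^ (β - 3/2) / a ^ (2*(β-1))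
        = (1/((2:ℝ)^(2*(β-1)) * a^(2*(β-1)))) * (K₁ * (1 + 4*a*b) ^ (β - 3/2)) := by
          field_simp
      _ ≤ (1/((2:ℝ)^(2*(β-1)) * a^(2*(β-1)))) *
            ∫ s in Ioi (0:ℝ), (4*a*b + s^2)^(β-3/2) * Real.exp (-c*s^2) := by
          exact mul_le_mul_of_nonneg_left h1 (by positivity)
  · refine le_trans hIup ?_
    calc (1/a^(2*(β-1))) * ∫ s in Ioi (0:ℝ), (4*a*b + s^2)^(β-3/2) * Real.exp (-c*s^2)
        ≤ (1/a^(2*(β-1))) * (K₂ * (1 + 4*a*b) ^ (β - 3/2)) :=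
          mul_le_mul_of_nonneg_left hup (by positivity)
      _ = K₂ * (1 + 4*a*b) ^ (β - 3/2) / a ^ (2*(β-1)) := by
          field_simp
end

section
/- Let c > 0, β > 1, and for a, b > 0 define f(a,b) = ∫₀^∞ u^{-β} exp(-c (√u · b - a/√u)²) du. Then there exist constants C₁, C₂ > 0 depending only on β and c such that C₁ (1+4ab)^{β-3/2} / a^{2(β-1)} ≤ f(a,b) ≤ C₂ (1+4ab)^{β-3/2} / a^{2(β-1)} for all a, b > 0. -/
open MeasureTheory Real Set

namespace S3

noncomputable def φ (c β s t : ℝ) : ℝ :=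
  t ^ (-β) * Real.exp (-(c*s) * (Real.sqrt t - 1/Real.sqrt t)^2)

lemma q_eq {t : ℝ} (ht : 0 < t) :
    (Real.sqrt t - 1/Real.sqrt t)^2 = t + 1/t - 2 := by
  have h : Real.sqrt t ^ 2 = t := Real.sq_sqrt ht.le
  have h2 : Real.sqrt t ≠ 0 := ne_of_gt (Real.sqrt_pos.mpr ht)
  field_simp
  rw [h]; ring

lemma φ_nonneg (c β s : ℝ) {t : ℝ} (ht : 0 < t) : 0 ≤ φ c β s t := by
  unfold φ
  have : (0:ℝ) < t ^ (-β) := Real.rpow_pos_of_pos ht _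
  positivity

lemma φ_nonneg_ae (c β s : ℝ) {A : Set ℝ} (hA : A ⊆ Ioi 0) (hAm : MeasurableSet A) :
    0 ≤ᵐ[volume.restrict A] φ c β s := by
  filter_upwards [ae_restrict_mem hAm] with t ht
  exact φ_nonneg c β s (hA ht)

lemma φ_meas (c β s : ℝ) : Measurable (φ c β s) := by
  unfold φ
  fun_prop

lemma aux_bdd {β κ : ℝ} (hβ : 1 < β) (hκ : 0 < κ) {t : ℝ} (ht : 0 < t) (ht1 : t ≤ 1) :
    t ^ (-β) * Real.exp (-(κ * t⁻¹)) ≤ (Nat.ceil β).factorial * κ⁻¹ ^ (Nat.ceil β) := by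
  set n := Nat.ceil β with hn
  have h1 : (κ * t⁻¹) ^ n / n.factorial ≤ Real.exp (κ * t⁻¹) :=
    Real.pow_div_factorial_le_exp _ (by positivity) n
  have h2 : Real.exp (-(κ * t⁻¹)) ≤ n.factorial * (κ⁻¹ ^ n * t ^ (n:ℕ)) := by
    rw [Real.exp_neg]
    rw [inv_le_comm₀ (Real.exp_pos _) (by positivity)]
    calc ((n.factorial : ℝ) * (κ⁻¹ ^ n * t ^ (n:ℕ)))⁻¹ = (κ * t⁻¹) ^ n / n.factorial := by
          rw [mul_pow]; ring_nf; rw [inv_inv]; ring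
      _ ≤ Real.exp (κ * t⁻¹) := h1
  calc t ^ (-β) * Real.exp (-(κ * t⁻¹)) ≤ t ^ (-β) * (n.factorial * (κ⁻¹ ^ n * t ^ (n:ℕ))) := by
        apply mul_le_mul_of_nonneg_left h2 (Real.rpow_nonneg ht.le _)
    _ = (n.factorial * κ⁻¹ ^ n) * (t ^ (-β) * t ^ (n:ℕ)) := by ring
    _ ≤ n.factorial * κ⁻¹ ^ n * 1 := by
        apply mul_le_mul_of_nonneg_left _ (by positivity)
        rw [← Real.rpow_natCast t n, ← Real.rpow_add ht]
        apply Real.rpow_le_one ht.le ht1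
        have : β ≤ (n : ℝ) := Nat.le_ceil β
        linarith
    _ = n.factorial * κ⁻¹ ^ n := mul_one _

lemma integrableOn_aux {β κ : ℝ} (hβ : 1 < β) (hκ : 0 < κ) :
    IntegrableOn (fun t => t ^ (-β) * Real.exp (-(κ * t⁻¹))) (Ioi 0) := by
  have hmeas : Measurable fun t : ℝ => t ^ (-β) * Real.exp (-(κ * t⁻¹)) := by fun_prop
  rw [← Ioc_union_Ioi_eq_Ioi (zero_le_one (α := ℝ))]
  apply IntegrableOn.union
  · apply Measure.integrableOn_of_bounded (by simp) hmeas.aestronglyMeasurable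
      (M := (Nat.ceil β).factorial * κ⁻¹ ^ (Nat.ceil β))
    filter_upwards [ae_restrict_mem measurableSet_Ioc] with t ht
    rw [Real.norm_eq_abs, abs_of_nonneg
      (mul_nonneg (Real.rpow_nonneg ht.1.le _) (Real.exp_pos _).le)]
    exact aux_bdd hβ hκ ht.1 ht.2
  · apply Integrable.mono' (g := fun t : ℝ => t ^ (-β))
      (integrableOn_Ioi_rpow_of_lt (by linarith) zero_lt_one)
      hmeas.aestronglyMeasurable.restrict
    filter_upwards [ae_restrict_mem measurableSet_Ioi] with t ht
    have ht0 : (0:ℝ) < t := lt_trans zero_lt_one ht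
    rw [Real.norm_eq_abs, abs_of_nonneg
      (mul_nonneg (Real.rpow_nonneg ht0.le _) (Real.exp_pos _).le)]
    nth_rewrite 2 [← mul_one (t ^ (-β))]
    apply mul_le_mul_of_nonneg_left _ (Real.rpow_nonneg ht0.le _)
    exact Real.exp_le_one_iff.mpr (neg_nonpos.mpr (by positivity))

lemma J_val {β κ : ℝ} (hβ : 1 < β) (hκ : 0 < κ) :
    ∫ t in Ioi 0, t ^ (-β) * Real.exp (-(κ * t⁻¹)) = (1/κ) ^ (β-1) * Real.Gamma (β-1) := by
  rw [← Real.integral_rpow_mul_exp_neg_mul_Ioi (by linarith : (0:ℝ) < β - 1) hκ]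
  rw [← integral_comp_rpow_Ioi (fun y => y ^ (β-1-1) * Real.exp (-(κ * y)))
    (p := -1) (by norm_num)]
  apply setIntegral_congr_fun measurableSet_Ioi
  intro x hx
  have hx0 : (0:ℝ) < x := hx
  have h1 : x ^ (-1:ℝ) = x⁻¹ := Real.rpow_neg_one x
  simp only [smul_eq_mul, h1, abs_neg, abs_one]
  rw [Real.inv_rpow hx0.le, ← Real.rpow_neg hx0.le]
  rw [show (-1:ℝ) - 1 = -2 by norm_num, one_mul]
  have h2 : x ^ (-2:ℝ) * x ^ (-(β-1-1)) = x ^ (-β) := by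
    rw [← Real.rpow_add hx0]; ring_nf
  rw [← mul_assoc (x ^ (-2:ℝ)), h2]

lemma integrableOn_φ {c β s : ℝ} (hc : 0 < c) (hβ : 1 < β) (hs : 0 < s) :
    IntegrableOn (φ c β s) (Ioi 0) := by
  have hcs : (0:ℝ) < c * s := by positivity
  rw [← Ioc_union_Ioi_eq_Ioi (zero_le_one (α := ℝ))]
  apply IntegrableOn.union
  · apply Integrable.mono'
      (g := fun t => Real.exp (2*(c*s)) * (t ^ (-β) * Real.exp (-(c*s * t⁻¹))))
      (((integrableOn_aux hβ hcs).mono_set Ioc_subset_Ioi_self).const_mul _)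
      ((φ_meas c β s).aestronglyMeasurable.restrict)
    filter_upwards [ae_restrict_mem measurableSet_Ioc] with t ht
    have ht0 : (0:ℝ) < t := ht.1
    rw [Real.norm_eq_abs, abs_of_nonneg (φ_nonneg c β s ht0)]
    unfold φ
    rw [q_eq ht0]
    rw [show Real.exp (2*(c*s)) * (t ^ (-β) * Real.exp (-(c*s * t⁻¹))) =
      t ^ (-β) * (Real.exp (2*(c*s)) * Real.exp (-(c*s * t⁻¹))) by ring, ← Real.exp_add]
    apply mul_le_mul_of_nonneg_left _ (Real.rpow_nonneg ht0.le _)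
    apply Real.exp_le_exp.mpr
    have h1t : 0 ≤ t := ht0.le
    have : t⁻¹ = 1/t := (one_div t).symm
    nlinarith [hcs, ht0.le, mul_nonneg hcs.le ht0.le]
  · apply Integrable.mono'
      (g := fun t => Real.exp (2*(c*s)) * Real.exp (-(c*s) * t))
      ((exp_neg_integrableOn_Ioi 1 hcs).const_mul _)
      ((φ_meas c β s).aestronglyMeasurable.restrict)
    filter_upwards [ae_restrict_mem measurableSet_Ioi] with t ht
    have ht0 : (0:ℝ) < t := lt_trans zero_lt_one ht
    rw [Real.norm_eq_abs, abs_of_nonneg (φ_nonneg c β s ht0)]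
    unfold φ
    rw [q_eq ht0, ← Real.exp_add]
    calc t ^ (-β) * Real.exp (-(c*s) * (t + 1/t - 2))
        ≤ 1 * Real.exp (-(c*s) * (t + 1/t - 2)) := by
          apply mul_le_mul_of_nonneg_right _ (Real.exp_pos _).le
          exact Real.rpow_le_one_of_one_le_of_nonpos (le_of_lt ht) (by linarith)
      _ ≤ Real.exp (2*(c*s) + -(c*s) * t) := by
          rw [one_mul]
          apply Real.exp_le_exp.mpr
          have h1t : 0 < 1/t := by positivity
          nlinarith
variable {c β s : ℝ}

lemma split (hc : 0 < c) (hβ : 1 < β) (hs : 0 < s) :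
    ∫ t in Ioi 0, φ c β s t =
      (∫ t in Ioc 0 (1/2), φ c β s t) + (∫ t in Ioc (1/2) 2, φ c β s t)
        + (∫ t in Ioi 2, φ c β s t) := by
  have hint := integrableOn_φ hc hβ hs
  rw [← Ioc_union_Ioi_eq_Ioi (by norm_num : (0:ℝ) ≤ 2),
    setIntegral_union (Ioc_disjoint_Ioi le_rfl) measurableSet_Ioi
      (hint.mono_set (by rw [← Ioc_union_Ioi_eq_Ioi (by norm_num : (0:ℝ) ≤ 2)]; exact subset_union_left))
      (hint.mono_set (by rw [← Ioc_union_Ioi_eq_Ioi (by norm_num : (0:ℝ) ≤ 2)]; exact subset_union_right)),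
    ← Ioc_union_Ioc_eq_Ioc (by norm_num : (0:ℝ) ≤ 1/2) (by norm_num : (1/2:ℝ) ≤ 2),
    setIntegral_union (Ioc_disjoint_Ioc_of_le le_rfl) measurableSet_Ioc
      (hint.mono_set (fun x hx => hx.1))
      (hint.mono_set (fun x hx => lt_trans (by norm_num) hx.1))]

lemma pieceA (hc : 0 < c) (hβ : 1 < β) (hs : 0 < s) :
    ∫ t in Ioc 0 (1/2), φ c β s t ≤
      Real.exp (-(c*s/4)) * ((1/(c*s/8)) ^ (β-1) * Real.Gamma (β-1)) := by
  have hcs : (0:ℝ) < c * s := by positivity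
  have hcs8 : (0:ℝ) < c * s / 8 := by positivity
  have haux := integrableOn_aux hβ hcs8 (β := β)
  calc ∫ t in Ioc 0 (1/2), φ c β s t
      ≤ ∫ t in Ioc 0 (1/2), Real.exp (-(c*s/4)) * (t ^ (-β) * Real.exp (-(c*s/8 * t⁻¹))) := by
        apply setIntegral_mono_on
          ((integrableOn_φ hc hβ hs).mono_set (fun x hx => hx.1))
          (((haux.mono_set (fun x hx => hx.1)).const_mul _))
          measurableSet_Ioc
        intro t ht
        have ht0 : (0:ℝ) < t := ht.1
        unfold φ
        rw [q_eq ht0, show Real.exp (-(c*s/4)) * (t ^ (-β) * Real.exp (-(c*s/8 * t⁻¹)))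
          = t ^ (-β) * (Real.exp (-(c*s/4)) * Real.exp (-(c*s/8 * t⁻¹))) by ring, ← Real.exp_add]
        apply mul_le_mul_of_nonneg_left _ (Real.rpow_nonneg ht0.le _)
        apply Real.exp_le_exp.mpr
        -- need: -(c*s)*(t + 1/t - 2) ≤ -(c*s/4) + -(c*s/8 * t⁻¹)
        rw [inv_eq_one_div]
        have h1 : t ≤ 1/2 := ht.2
        have key : 1/(4*t) ≤ t + 1/t - 2 := by
          rw [div_le_iff₀ (by positivity)]
          have : (1/t) * (4*t) = 4 := by field_simp
          nlinarith [sq_nonneg (1 - t), this]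
        have key2 : c*s/4 + c*s/8 * (1/t) ≤ c*s * (1/(4*t)) := by
          rw [← sub_nonneg]
          have e1 : c*s * (1/(4*t)) - (c*s/4 + c*s/8 * (1/t)) = c*s/8 * (1/t) - c*s/4 := by ring
          rw [e1, sub_nonneg]
          have : (2:ℝ) ≤ 1/t := by rw [le_div_iff₀ ht0]; linarith
          calc c*s/4 = c*s/8 * 2 := by ring
            _ ≤ c*s/8 * (1/t) := by
                apply mul_le_mul_of_nonneg_left this (by positivity)
        nlinarith [mul_le_mul_of_nonneg_left key hcs.le]
    _ = Real.exp (-(c*s/4)) * ∫ t in Ioc 0 (1/2), t ^ (-β) * Real.exp (-(c*s/8 * t⁻¹)) :=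
        integral_const_mul _ _
    _ ≤ Real.exp (-(c*s/4)) * ((1/(c*s/8)) ^ (β-1) * Real.Gamma (β-1)) := by
        apply mul_le_mul_of_nonneg_left _ (Real.exp_pos _).le
        rw [← J_val hβ hcs8]
        apply setIntegral_mono_set haux
        · filter_upwards [ae_restrict_mem measurableSet_Ioi] with t ht
          have ht0 : (0:ℝ) < t := ht
          positivity
        · exact HasSubset.Subset.eventuallyLE (fun x hx => hx.1)

lemma rpow_half_le {t : ℝ} (ht : 1/2 ≤ t) (hβ' : 0 ≤ β) : t ^ (-β) ≤ 2 ^ β := by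
  have h1 : t ^ (-β) ≤ (1/2 : ℝ) ^ (-β) :=
    Real.rpow_le_rpow_of_nonpos (by norm_num) ht (by linarith)
  calc t ^ (-β) ≤ (1/2 : ℝ) ^ (-β) := h1
    _ = 2 ^ β := by
        rw [show (1/2 : ℝ) = 2⁻¹ by norm_num, ← Real.rpow_neg_one 2,
          ← Real.rpow_mul (by norm_num)]
        norm_num

lemma φ_le_gauss (hc : 0 < c) (hβ : 1 < β) (hs : 0 < s) {t : ℝ}
    (ht1 : 1/2 ≤ t) (ht2 : t ≤ 2) :
    φ c β s t ≤ 2 ^ β * Real.exp (-(c*s/2) * (t-1)^2) := by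
  have ht0 : (0:ℝ) < t := by linarith
  unfold φ
  rw [q_eq ht0]
  apply mul_le_mul (rpow_half_le ht1 (by linarith)) _ (Real.exp_pos _).le (by positivity)
  apply Real.exp_le_exp.mpr
  have h1 : (1/t) * t = 1 := by field_simp
  nlinarith [sq_nonneg (t-1), mul_pos hc hs, mul_nonneg (mul_pos hc hs).le (sq_nonneg (t-1))]

lemma pieceB_gauss (hc : 0 < c) (hβ : 1 < β) (hs : 0 < s) :
    ∫ t in Ioc (1/2) 2, φ c β s t ≤ 2 ^ β * Real.sqrt (π / (c*s/2)) := by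
  have hcs2 : (0:ℝ) < c * s / 2 := by positivity
  have hgauss : Integrable (fun t : ℝ => Real.exp (-(c*s/2) * (t-1)^2)) := by
    have := (integrable_exp_neg_mul_sq hcs2).comp_sub_right 1
    simpa using this
  calc ∫ t in Ioc (1/2) 2, φ c β s t
      ≤ ∫ t in Ioc (1/2) 2, 2 ^ β * Real.exp (-(c*s/2) * (t-1)^2) := by
        apply setIntegral_mono_on
          ((integrableOn_φ hc hβ hs).mono_set (fun x hx => lt_trans (by norm_num) hx.1))
          ((hgauss.const_mul _).integrableOn)
          measurableSet_Ioc
        exact fun t ht => φ_le_gauss hc hβ hs ht.1.le ht.2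
    _ = 2 ^ β * ∫ t in Ioc (1/2) 2, Real.exp (-(c*s/2) * (t-1)^2) := integral_const_mul _ _
    _ ≤ 2 ^ β * ∫ t : ℝ, Real.exp (-(c*s/2) * (t-1)^2) := by
        apply mul_le_mul_of_nonneg_left _ (by positivity)
        apply setIntegral_le_integral hgauss
        filter_upwards with t using (Real.exp_pos _).le
    _ = 2 ^ β * Real.sqrt (π / (c*s/2)) := by
        rw [show (fun t : ℝ => Real.exp (-(c*s/2) * (t-1)^2)) =
          (fun t : ℝ => (fun x => Real.exp (-(c*s/2) * x^2)) (t - 1)) by rfl,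
          integral_sub_right_eq_self (fun x => Real.exp (-(c*s/2) * x^2)) 1,
          integral_gaussian]

lemma pieceB_const (hc : 0 < c) (hβ : 1 < β) (hs : 0 < s) :
    ∫ t in Ioc (1/2) 2, φ c β s t ≤ 2 ^ β * (3/2) := by
  calc ∫ t in Ioc (1/2) 2, φ c β s t
      ≤ ∫ _t in Ioc (1/2 : ℝ) 2, (2:ℝ) ^ β := by
        apply setIntegral_mono_on
          ((integrableOn_φ hc hβ hs).mono_set (fun x hx => lt_trans (by norm_num) hx.1))
          (integrableOn_const (by rw [Real.volume_Ioc]; exact ENNReal.ofReal_ne_top))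
          measurableSet_Ioc
        intro t ht
        have ht0 : (0:ℝ) < t := lt_trans (by norm_num) ht.1
        calc φ c β s t ≤ t ^ (-β) * 1 := by
              unfold φ
              apply mul_le_mul_of_nonneg_left _ (Real.rpow_nonneg ht0.le _)
              exact Real.exp_le_one_iff.mpr (by nlinarith [sq_nonneg (Real.sqrt t - 1/Real.sqrt t), mul_pos hc hs])
          _ = t ^ (-β) := mul_one _
          _ ≤ 2 ^ β := rpow_half_le ht.1.le (by linarith)
    _ = 2 ^ β * (3/2) := by
        rw [setIntegral_const, smul_eq_mul]
        rw [measureReal_def, Real.volume_Ioc]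
        rw [ENNReal.toReal_ofReal (by norm_num)]
        ring_nf

lemma pieceC (hc : 0 < c) (hβ : 1 < β) (hs : 0 < s) :
    ∫ t in Ioi 2, φ c β s t ≤ Real.exp (-(c*s/2)) * (2 ^ (1-β) / (β-1)) := by
  have h2 : ((2:ℝ)) ^ ((1:ℝ)-β) / (β-1) = -(2:ℝ) ^ (-β+1) / (-β+1) := by
    rw [show (-β+1 : ℝ) = -(β-1) by ring, show ((1:ℝ)-β) = -(β-1) by ring]
    rw [neg_div, div_neg, neg_neg]
  calc ∫ t in Ioi 2, φ c β s t
      ≤ ∫ t in Ioi 2, Real.exp (-(c*s/2)) * t ^ (-β) := by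
        apply setIntegral_mono_on
          ((integrableOn_φ hc hβ hs).mono_set (fun x hx => lt_trans (by norm_num) hx))
          (by exact ((integrableOn_Ioi_rpow_of_lt (a := -β) (by linarith) (by norm_num : (0:ℝ) < 2)).const_mul _))
          measurableSet_Ioi
        intro t ht
        have ht2 : (2:ℝ) ≤ t := le_of_lt ht
        have ht0 : (0:ℝ) < t := by linarith
        unfold φ
        rw [q_eq ht0, mul_comm (Real.exp _)]
        apply mul_le_mul_of_nonneg_left _ (Real.rpow_nonneg ht0.le _)
        apply Real.exp_le_exp.mpr
        have h1t : (1/t) * t = 1 := by field_simp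
        have key : (1:ℝ)/2 ≤ t + 1/t - 2 := by
          nlinarith [h1t, mul_nonneg (by linarith : (0:ℝ) ≤ t-2) (by linarith : (0:ℝ) ≤ t-1/2),
            one_div_pos.mpr ht0]
        nlinarith [mul_pos hc hs]
    _ = Real.exp (-(c*s/2)) * ∫ t in Ioi 2, t ^ (-β) := integral_const_mul _ _
    _ ≤ Real.exp (-(c*s/2)) * (2 ^ (1-β) / (β-1)) := by
        apply mul_le_mul_of_nonneg_left _ (Real.exp_pos _).le
        rw [integral_Ioi_rpow_of_lt (by linarith) (by norm_num : (0:ℝ) < 2), h2]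

lemma window (hc : 0 < c) (hβ : 1 < β) (hs : 0 < s) {p q M : ℝ}
    (hp : 0 < p) (hpq : p < q) (hM : 0 ≤ M)
    (hbound : ∀ t ∈ Ioc p q, M ≤ φ c β s t) :
    M * (q - p) ≤ ∫ t in Ioi 0, φ c β s t := by
  have hint := integrableOn_φ hc hβ hs
  have hsub : Ioc p q ⊆ Ioi 0 := fun x hx => lt_trans hp hx.1
  calc M * (q-p) = ∫ _t in Ioc p q, M := by
        rw [setIntegral_const, smul_eq_mul]
        rw [measureReal_def, Real.volume_Ioc]
        rw [ENNReal.toReal_ofReal (by linarith)]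
        ring
    _ ≤ ∫ t in Ioc p q, φ c β s t := by
        apply setIntegral_mono_on
          (integrableOn_const (by rw [Real.volume_Ioc]; exact ENNReal.ofReal_ne_top))
          (hint.mono_set hsub) measurableSet_Ioc hbound
    _ ≤ ∫ t in Ioi 0, φ c β s t :=
        setIntegral_mono_set hint (φ_nonneg_ae c β s (fun x hx => hx) measurableSet_Ioi)
          (HasSubset.Subset.eventuallyLE hsub)

lemma lower_small (hc : 0 < c) (hβ : 1 < β) (hs : 0 < s) (hs2 : s ≤ 1/2) :
    2 ^ (-β) * Real.exp (-c) * s ^ (1-β) ≤ ∫ t in Ioi 0, φ c β s t := by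
  have key : ∀ t ∈ Ioc s (2*s), (2*s) ^ (-β) * Real.exp (-c) ≤ φ c β s t := by
    intro t ht
    have ht0 : (0:ℝ) < t := lt_trans hs ht.1
    unfold φ
    rw [q_eq ht0]
    apply mul_le_mul
    · exact Real.rpow_le_rpow_of_nonpos ht0 ht.2 (by linarith)
    · apply Real.exp_le_exp.mpr
      have h1t : (1/t) * t = 1 := by field_simp
      have h2 : 1/t ≤ 1/s := by
        apply one_div_le_one_div_of_le hs ht.1.le
      have h3 : t + 1/t - 2 ≤ 1/s := by
        have ht2 : t ≤ 2*s := ht.2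
        have : t ≤ 1 := by linarith
        linarith
      have h4 : c * s * (t + 1/t - 2) ≤ c := by
        have h5 : 0 ≤ t + 1/t - 2 := by nlinarith [sq_nonneg (t-1), one_div_pos.mpr ht0]
        calc c * s * (t + 1/t - 2) ≤ c * s * (1/s) := by
              apply mul_le_mul_of_nonneg_left h3 (by positivity)
          _ = c := by field_simp
      linarith
    · exact (Real.exp_pos _).le
    · exact Real.rpow_nonneg ht0.le _
  have hw := window hc hβ hs (by positivity : (0:ℝ) < s) (by linarith : s < 2*s)
    (by positivity) key
  calc 2 ^ (-β) * Real.exp (-c) * s ^ (1-β) = (2*s) ^ (-β) * Real.exp (-c) * (2*s - s) := by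
        rw [Real.mul_rpow (by norm_num) hs.le]
        rw [show 2*s - s = s by ring]
        rw [show (1-β : ℝ) = -β + 1 by ring, Real.rpow_add hs, Real.rpow_one]
        ring
    _ ≤ _ := hw

lemma lower_big (hc : 0 < c) (hβ : 1 < β) (hs2 : 1/2 ≤ s) :
    3 ^ (-β) * Real.exp (-c) * s ^ (-(1/2) : ℝ) ≤ ∫ t in Ioi 0, φ c β s t := by
  have hs : (0:ℝ) < s := by linarith
  set δ := s ^ (-(1/2) : ℝ) with hδdef
  have hδ0 : 0 < δ := Real.rpow_pos_of_pos hs _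
  have hδsq : δ^2 = s⁻¹ := by
    rw [hδdef, ← Real.rpow_natCast (s ^ (-(1/2):ℝ)) 2, ← Real.rpow_mul hs.le,
      ← Real.rpow_neg_one s]
    norm_num
  have h24 : ((1/4:ℝ)) ^ (-(1/2):ℝ) = 2 := by
    rw [show (1/4:ℝ) = (2:ℝ) ^ (-2:ℝ) by
          rw [show (-2:ℝ) = ((-2:ℤ):ℝ) by norm_num, Real.rpow_intCast]; norm_num,
        ← Real.rpow_mul (by norm_num),
        show ((-2) * -(1/2) : ℝ) = 1 by norm_num, Real.rpow_one]
  have hδ2 : δ ≤ 2 := by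
    have h1 : δ ≤ (1/4 : ℝ) ^ (-(1/2):ℝ) :=
      Real.rpow_le_rpow_of_nonpos (by norm_num) (by linarith) (by norm_num)
    rw [h24] at h1
    exact h1
  have key : ∀ t ∈ Ioc 1 (1+δ), 3 ^ (-β) * Real.exp (-c) ≤ φ c β s t := by
    intro t ht
    have ht1 : (1:ℝ) < t := ht.1
    have ht0 : (0:ℝ) < t := by linarith
    have ht3 : t ≤ 3 := by linarith [ht.2, hδ2]
    unfold φ
    rw [q_eq ht0]
    apply mul_le_mul
    · exact Real.rpow_le_rpow_of_nonpos ht0 ht3 (by linarith)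
    · apply Real.exp_le_exp.mpr
      have h1t : (1/t) * t = 1 := by field_simp
      have hq1 : t + 1/t - 2 ≤ (t-1)^2 := by nlinarith [one_div_pos.mpr ht0]
      have hq2 : (t-1)^2 ≤ δ^2 := by nlinarith [ht.2, ht1]
      have hss : s * s⁻¹ = 1 := by field_simp
      have : c * s * (t + 1/t - 2) ≤ c := by
        calc c * s * (t + 1/t - 2) ≤ c * s * s⁻¹ := by
              apply mul_le_mul_of_nonneg_left _ (by positivity)
              calc t + 1/t - 2 ≤ (t-1)^2 := hq1
                _ ≤ δ^2 := hq2
                _ = s⁻¹ := hδsq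
          _ = c := by rw [mul_assoc, hss, mul_one]
      linarith
    · exact (Real.exp_pos _).le
    · exact Real.rpow_nonneg ht0.le _
  have hw := window hc hβ hs one_pos (by linarith : (1:ℝ) < 1 + δ) (by positivity) key
  calc 3 ^ (-β) * Real.exp (-c) * s ^ (-(1/2):ℝ)
      = 3 ^ (-β) * Real.exp (-c) * (1 + δ - 1) := by rw [hδdef]; ring_nf
    _ ≤ _ := hw

lemma pieceA' (hc : 0 < c) (hβ : 1 < β) (hs : 0 < s) :
    ∫ t in Ioc 0 (1/2), φ c β s t ≤
      Real.exp (-(c*s/4)) * (((1/(c/8)) ^ (β-1) * Real.Gamma (β-1)) * s ^ (1-β)) := by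
  refine le_trans (pieceA hc hβ hs) (le_of_eq ?_)
  congr 1
  rw [show 1/(c*s/8) = (1/(c/8)) * s⁻¹ by field_simp,
    Real.mul_rpow (by positivity) (by positivity),
    Real.inv_rpow hs.le, ← Real.rpow_neg hs.le,
    show (-(β-1) : ℝ) = 1 - β by ring]
  ring

lemma one_le_rpow_aux (hs : 0 < s) (hs1 : s ≤ 1) (hβ : 1 < β) : 1 ≤ s ^ (1-β) := by
  rcases eq_or_lt_of_le hs1 with h|h
  · rw [h, Real.one_rpow]
  · exact le_of_lt (Real.one_lt_rpow_iff_of_pos hs |>.mpr (Or.inr ⟨h, by linarith⟩))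

lemma upper_small (hc : 0 < c) (hβ : 1 < β) (hs : 0 < s) (hs2 : s ≤ 1/2) :
    ∫ t in Ioi 0, φ c β s t ≤
      ((1/(c/8)) ^ (β-1) * Real.Gamma (β-1) + 2 ^ β * (3/2) + 2 ^ (1-β) / (β-1))
        * s ^ (1-β) := by
  have h1 : (1:ℝ) ≤ s ^ (1-β) := one_le_rpow_aux hs (by linarith) hβ
  have hsp : (0:ℝ) < s ^ (1-β) := by linarith
  have hΓ : (0:ℝ) < Real.Gamma (β-1) := Real.Gamma_pos_of_pos (by linarith)
  rw [split hc hβ hs]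
  have hA : ∫ t in Ioc 0 (1/2), φ c β s t ≤
      ((1/(c/8)) ^ (β-1) * Real.Gamma (β-1)) * s ^ (1-β) := by
    refine le_trans (pieceA' hc hβ hs) ?_
    nth_rewrite 2 [← one_mul (((1/(c/8)) ^ (β-1) * Real.Gamma (β-1)) * s ^ (1-β))]
    apply mul_le_mul_of_nonneg_right (Real.exp_le_one_iff.mpr (by nlinarith [mul_pos hc hs]))
    positivity
  have hB : ∫ t in Ioc (1/2) 2, φ c β s t ≤ (2 ^ β * (3/2)) * s ^ (1-β) := by
    refine le_trans (pieceB_const hc hβ hs) ?_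
    nth_rewrite 1 [← mul_one (2 ^ β * (3/2 : ℝ))]
    apply mul_le_mul_of_nonneg_left h1 (by positivity)
  have hC : ∫ t in Ioi 2, φ c β s t ≤ (2 ^ (1-β) / (β-1)) * s ^ (1-β) := by
    refine le_trans (pieceC hc hβ hs) ?_
    have : (0:ℝ) < 2 ^ (1-β) / (β-1) := by
      apply div_pos (Real.rpow_pos_of_pos (by norm_num) _) (by linarith)
    calc Real.exp (-(c*s/2)) * (2 ^ (1-β) / (β-1)) ≤ 1 * (2 ^ (1-β) / (β-1)) := by
          apply mul_le_mul_of_nonneg_right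
            (Real.exp_le_one_iff.mpr (by nlinarith [mul_pos hc hs])) this.le
      _ = (2 ^ (1-β) / (β-1)) * 1 := by ring
      _ ≤ (2 ^ (1-β) / (β-1)) * s ^ (1-β) := mul_le_mul_of_nonneg_left h1 this.le
  linarith [hA, hB, hC]

lemma exp_neg_le_inv {x : ℝ} (hx : 0 < x) : Real.exp (-x) ≤ x⁻¹ := by
  rw [Real.exp_neg]
  apply inv_anti₀ hx
  linarith [Real.add_one_le_exp x]

lemma upper_big (hc : 0 < c) (hβ : 1 < β) (hs2 : 1/2 ≤ s) :
    ∫ t in Ioi 0, φ c β s t ≤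
      ((4/c) * ((1/(c/8)) ^ (β-1) * Real.Gamma (β-1)) * 2 ^ (β-1/2)
        + 2 ^ β * Real.sqrt (2*π/c)
        + 2 * ((2/c) * (2 ^ (1-β) / (β-1)))) * s ^ (-(1/2) : ℝ) := by
  have hs : (0:ℝ) < s := by linarith
  have hΓ : (0:ℝ) < Real.Gamma (β-1) := Real.Gamma_pos_of_pos (by linarith)
  have hsne : (0:ℝ) < s ^ (-(1/2) : ℝ) := Real.rpow_pos_of_pos hs _
  have hshalf : s ^ (-(1/2):ℝ) ≤ 2 := by
    have h24 : ((1/4:ℝ)) ^ (-(1/2):ℝ) = 2 := by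
      rw [show (1/4:ℝ) = (2:ℝ) ^ (-2:ℝ) by
            rw [show (-2:ℝ) = ((-2:ℤ):ℝ) by norm_num, Real.rpow_intCast]; norm_num,
          ← Real.rpow_mul (by norm_num),
          show ((-2) * -(1/2) : ℝ) = 1 by norm_num, Real.rpow_one]
    have h1 : s ^ (-(1/2):ℝ) ≤ (1/4 : ℝ) ^ (-(1/2):ℝ) :=
      Real.rpow_le_rpow_of_nonpos (by norm_num) (by linarith) (by norm_num)
    rw [h24] at h1; exact h1
  rw [split hc hβ hs]
  set KA := (1/(c/8)) ^ (β-1) * Real.Gamma (β-1) with hKA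
  have hKApos : 0 < KA := by rw [hKA]; positivity
  have hA : ∫ t in Ioc 0 (1/2), φ c β s t ≤ (4/c) * KA * 2 ^ (β-1/2) * s ^ (-(1/2):ℝ) := by
    refine le_trans (pieceA' hc hβ hs) ?_
    have step1 : Real.exp (-(c*s/4)) ≤ (4/c) * s⁻¹ := by
      have := exp_neg_le_inv (show (0:ℝ) < c*s/4 by positivity)
      calc Real.exp (-(c*s/4)) ≤ (c*s/4)⁻¹ := this
        _ = (4/c) * s⁻¹ := by field_simp
    calc Real.exp (-(c*s/4)) * (KA * s ^ (1-β))
        ≤ ((4/c) * s⁻¹) * (KA * s ^ (1-β)) := by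
          apply mul_le_mul_of_nonneg_right step1 (by positivity)
      _ = (4/c) * KA * (s⁻¹ * s ^ (1-β)) := by ring
      _ = (4/c) * KA * (s ^ ((1:ℝ)/2 - β) * s ^ (-(1/2):ℝ)) := by
          have e1 : s⁻¹ * s ^ (1-β) = s ^ ((1:ℝ)/2 - β) * s ^ (-(1/2):ℝ) := by
            rw [← Real.rpow_neg_one s, ← Real.rpow_add hs, ← Real.rpow_add hs]
            congr 1; ring
          rw [e1]
      _ ≤ (4/c) * KA * (2 ^ (β-1/2) * s ^ (-(1/2):ℝ)) := by
          apply mul_le_mul_of_nonneg_left _ (by positivity)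
          apply mul_le_mul_of_nonneg_right _ hsne.le
          calc s ^ ((1:ℝ)/2 - β) ≤ (1/2 : ℝ) ^ ((1:ℝ)/2 - β) :=
                Real.rpow_le_rpow_of_nonpos (by norm_num) hs2 (by linarith)
            _ = 2 ^ (β - 1/2) := by
                rw [show (1/2:ℝ) = 2⁻¹ by norm_num, Real.inv_rpow (by norm_num),
                  ← Real.rpow_neg (by norm_num)]
                congr 1; ring
      _ = (4/c) * KA * 2 ^ (β-1/2) * s ^ (-(1/2):ℝ) := by ring
  have hB : ∫ t in Ioc (1/2) 2, φ c β s t ≤ 2 ^ β * Real.sqrt (2*π/c) * s ^ (-(1/2):ℝ) := by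
    refine le_trans (pieceB_gauss hc hβ hs) ?_
    have : Real.sqrt (π / (c*s/2)) = Real.sqrt (2*π/c) * s ^ (-(1/2):ℝ) := by
      rw [show π / (c*s/2) = (2*π/c) * s⁻¹ by field_simp,
        Real.sqrt_mul (by positivity) s⁻¹,
        Real.sqrt_eq_rpow s⁻¹, Real.inv_rpow hs.le, ← Real.rpow_neg hs.le]
    rw [this, ← mul_assoc]
  have hC : ∫ t in Ioi 2, φ c β s t ≤ 2 * ((2/c) * (2 ^ (1-β) / (β-1))) * s ^ (-(1/2):ℝ) := by
    refine le_trans (pieceC hc hβ hs) ?_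
    have hKC : (0:ℝ) < 2 ^ (1-β) / (β-1) := by
      apply div_pos (Real.rpow_pos_of_pos (by norm_num) _) (by linarith)
    have step1 : Real.exp (-(c*s/2)) ≤ (2/c) * s⁻¹ := by
      have := exp_neg_le_inv (show (0:ℝ) < c*s/2 by positivity)
      calc Real.exp (-(c*s/2)) ≤ (c*s/2)⁻¹ := this
        _ = (2/c) * s⁻¹ := by field_simp
    have step2 : s⁻¹ ≤ 2 * s ^ (-(1/2):ℝ) := by
      have : s⁻¹ = s ^ (-(1/2):ℝ) * s ^ (-(1/2):ℝ) := by
        rw [← Real.rpow_add hs, ← Real.rpow_neg_one s]; norm_num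
      rw [this]
      apply mul_le_mul_of_nonneg_right hshalf hsne.le
    calc Real.exp (-(c*s/2)) * (2 ^ (1-β) / (β-1))
        ≤ ((2/c) * s⁻¹) * (2 ^ (1-β) / (β-1)) :=
          mul_le_mul_of_nonneg_right step1 hKC.le
      _ = s⁻¹ * ((2/c) * (2 ^ (1-β) / (β-1))) := by ring
      _ ≤ (2 * s ^ (-(1/2):ℝ)) * ((2/c) * (2 ^ (1-β) / (β-1))) := by
          apply mul_le_mul_of_nonneg_right step2 (by positivity)
      _ = 2 * ((2/c) * (2 ^ (1-β) / (β-1))) * s ^ (-(1/2):ℝ) := by ring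
  linarith [hA, hB, hC]

lemma rpow_between {u v x e : ℝ} (hu : 0 < u) (hux : u ≤ x) (hxv : x ≤ v) :
    min (u^e) (v^e) ≤ x^e ∧ x^e ≤ max (u^e) (v^e) := by
  rcases le_or_gt 0 e with he|he
  · exact ⟨le_trans (min_le_left _ _) (Real.rpow_le_rpow hu.le hux he),
      le_trans (Real.rpow_le_rpow (by linarith) hxv he) (le_max_right _ _)⟩
  · exact ⟨le_trans (min_le_right _ _) (Real.rpow_le_rpow_of_nonpos (by linarith) hxv he.le),
      le_trans (Real.rpow_le_rpow_of_nonpos hu hux he.le) (le_max_left _ _)⟩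

lemma combine {I P X Mlo Mhi KL KU D₁ D₂ : ℝ}
    (hMlo : 0 < Mlo) (hMhi : 0 < Mhi) (hX : 0 < X) (hP : 0 ≤ P)
    (hGlo : Mlo * X ≤ P) (hGhi : P ≤ Mhi * X)
    (hlow : KL * X ≤ I) (hup : I ≤ KU * X) (hKL : 0 < KL) (hKU : 0 < KU)
    (hD1 : D₁ ≤ KL/Mhi) (hD2 : KU/Mlo ≤ D₂) :
    D₁ * P ≤ I ∧ I ≤ D₂ * P := by
  constructor
  · calc D₁ * P ≤ (KL/Mhi) * (Mhi * X) := mul_le_mul hD1 hGhi hP (by positivity)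
      _ = KL * X := by field_simp
      _ ≤ I := hlow
  · calc I ≤ KU * X := hup
      _ = (KU/Mlo) * (Mlo * X) := by field_simp
      _ ≤ (KU/Mlo) * P := mul_le_mul_of_nonneg_left hGlo (by positivity)
      _ ≤ D₂ * P := mul_le_mul_of_nonneg_right hD2 hP

lemma h_bounds (hc : 0 < c) (hβ : 1 < β) :
    ∃ D₁ D₂ : ℝ, 0 < D₁ ∧ 0 < D₂ ∧ ∀ s : ℝ, 0 < s →
      D₁ * (s ^ (1-β) * (1+4*s) ^ (β-3/2)) ≤ (∫ t in Ioi 0, φ c β s t) ∧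
      (∫ t in Ioi 0, φ c β s t) ≤ D₂ * (s ^ (1-β) * (1+4*s) ^ (β-3/2)) := by
  have hΓ : (0:ℝ) < Real.Gamma (β-1) := Real.Gamma_pos_of_pos (by linarith)
  set e := β - 3/2 with he
  set KL1 := (2:ℝ) ^ (-β) * Real.exp (-c) with hKL1
  set KL2 := (3:ℝ) ^ (-β) * Real.exp (-c) with hKL2
  set KU1 := (1/(c/8)) ^ (β-1) * Real.Gamma (β-1) + 2 ^ β * (3/2) + 2 ^ (1-β) / (β-1) with hKU1
  set KU2 := (4/c) * ((1/(c/8)) ^ (β-1) * Real.Gamma (β-1)) * 2 ^ (β-1/2)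
      + 2 ^ β * Real.sqrt (2*π/c) + 2 * ((2/c) * (2 ^ (1-β) / (β-1))) with hKU2
  have hKL1p : 0 < KL1 := by rw [hKL1]; positivity
  have hKL2p : 0 < KL2 := by rw [hKL2]; positivity
  have hKU1p : 0 < KU1 := by
    rw [hKU1]
    have h1 : (0:ℝ) < (1/(c/8)) ^ (β-1) := Real.rpow_pos_of_pos (by positivity) _
    have h2 : (0:ℝ) < (2:ℝ) ^ β := Real.rpow_pos_of_pos (by norm_num) _
    have h3 : (0:ℝ) < (2:ℝ) ^ (1-β) / (β-1) :=
      div_pos (Real.rpow_pos_of_pos (by norm_num) _) (by linarith)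
    positivity
  have hKU2p : 0 < KU2 := by
    rw [hKU2]
    have h1 : (0:ℝ) < (1/(c/8)) ^ (β-1) := Real.rpow_pos_of_pos (by positivity) _
    have h2 : (0:ℝ) < (2:ℝ) ^ (β-1/2) := Real.rpow_pos_of_pos (by norm_num) _
    have h2' : (0:ℝ) < (2:ℝ) ^ β := Real.rpow_pos_of_pos (by norm_num) _
    have h3 : (0:ℝ) < (2:ℝ) ^ (1-β) / (β-1) :=
      div_pos (Real.rpow_pos_of_pos (by norm_num) _) (by linarith)
    have h4 : (0:ℝ) < Real.sqrt (2*π/c) := Real.sqrt_pos.mpr (by positivity)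
    positivity
  set Mlo1 := min ((1:ℝ)^e) ((3:ℝ)^e) with hMlo1
  set Mhi1 := max ((1:ℝ)^e) ((3:ℝ)^e) with hMhi1
  set Mlo2 := min ((4:ℝ)^e) ((6:ℝ)^e) with hMlo2
  set Mhi2 := max ((4:ℝ)^e) ((6:ℝ)^e) with hMhi2
  have hMlo1p : 0 < Mlo1 := lt_min (Real.rpow_pos_of_pos one_pos _) (Real.rpow_pos_of_pos (by norm_num) _)
  have hMhi1p : 0 < Mhi1 := lt_of_lt_of_le (Real.rpow_pos_of_pos one_pos _) (le_max_left _ _)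
  have hMlo2p : 0 < Mlo2 := lt_min (Real.rpow_pos_of_pos (by norm_num) _) (Real.rpow_pos_of_pos (by norm_num) _)
  have hMhi2p : 0 < Mhi2 := lt_of_lt_of_le (Real.rpow_pos_of_pos (by norm_num) _) (le_max_left _ _)
  refine ⟨min (KL1/Mhi1) (KL2/Mhi2), max (KU1/Mlo1) (KU2/Mlo2),
    lt_min (by positivity) (by positivity),
    lt_of_lt_of_le (by positivity) (le_max_left _ _), ?_⟩
  intro s hs
  have hG0 : (0:ℝ) < (1+4*s) ^ e := Real.rpow_pos_of_pos (by linarith) _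
  have hP0 : (0:ℝ) ≤ s ^ (1-β) * (1+4*s) ^ e :=
    mul_nonneg (Real.rpow_nonneg hs.le _) hG0.le
  have hXs : (0:ℝ) < s ^ (1-β) := Real.rpow_pos_of_pos hs _
  rcases le_or_gt s (1/2) with hcase|hcase
  · -- small s
    have hGb := rpow_between (e := e) one_pos (by linarith : (1:ℝ) ≤ 1+4*s)
      (by linarith : 1+4*s ≤ 3)
    apply combine hMlo1p hMhi1p hXs hP0 _ _
      (lower_small hc hβ hs hcase) (upper_small hc hβ hs hcase) hKL1p hKU1p
      (min_le_left _ _) (le_max_left _ _)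
    · nlinarith [hGb.1, hXs]
    · nlinarith [hGb.2, hXs]
  · -- large s
    have hs' : (1:ℝ)/2 ≤ s := hcase.le
    have hGb := rpow_between (e := e) (by linarith : (0:ℝ) < 4*s)
      (by linarith : 4*s ≤ 1+4*s) (by linarith : 1+4*s ≤ 6*s)
    have h4e : ((4:ℝ)*s) ^ e = 4^e * s^e := Real.mul_rpow (by norm_num) hs.le
    have h6e : ((6:ℝ)*s) ^ e = 6^e * s^e := Real.mul_rpow (by norm_num) hs.le
    have hse : (0:ℝ) < s ^ e := Real.rpow_pos_of_pos hs _
    have hX : (0:ℝ) < s ^ (-(1/2):ℝ) := Real.rpow_pos_of_pos hs _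
    have hprod : s ^ (1-β) * s ^ e = s ^ (-(1/2):ℝ) := by
      rw [← Real.rpow_add hs]; congr 1; rw [he]; ring
    have hmin : Mlo2 * s^e ≤ (1+4*s) ^ e := by
      refine le_trans ?_ hGb.1
      apply le_min
      · rw [h4e]; exact mul_le_mul_of_nonneg_right (min_le_left _ _) hse.le
      · rw [h6e]; exact mul_le_mul_of_nonneg_right (min_le_right _ _) hse.le
    have hmax : (1+4*s) ^ e ≤ Mhi2 * s^e := by
      refine le_trans hGb.2 ?_
      apply max_le
      · rw [h4e]; exact mul_le_mul_of_nonneg_right (le_max_left _ _) hse.le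
      · rw [h6e]; exact mul_le_mul_of_nonneg_right (le_max_right _ _) hse.le
    apply combine hMlo2p hMhi2p hX hP0 _ _
      (lower_big hc hβ hs') (upper_big hc hβ hs') hKL2p hKU2p
      (min_le_right _ _) (le_max_right _ _)
    · calc Mlo2 * s ^ (-(1/2):ℝ) = s ^ (1-β) * (Mlo2 * s^e) := by rw [← hprod]; ring
        _ ≤ s ^ (1-β) * (1+4*s) ^ e := mul_le_mul_of_nonneg_left hmin hXs.le
    · calc s ^ (1-β) * (1+4*s) ^ e ≤ s ^ (1-β) * (Mhi2 * s^e) :=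
          mul_le_mul_of_nonneg_left hmax hXs.le
        _ = Mhi2 * s ^ (-(1/2):ℝ) := by rw [← hprod]; ring

lemma sq_identity {a b x : ℝ} (ha : 0 < a) (hb : 0 < b) (hx : 0 < x) :
    (Real.sqrt ((a/b)*x) * b - a / Real.sqrt ((a/b)*x))^2
      = (a*b) * (Real.sqrt x - 1/Real.sqrt x)^2 := by
  have hz : Real.sqrt ((a/b)*x) ^ 2 = (a/b)*x := Real.sq_sqrt (by positivity)
  have hzpos : 0 < Real.sqrt ((a/b)*x) := Real.sqrt_pos.mpr (by positivity)
  set z := Real.sqrt ((a/b)*x) with hzdef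
  have h1 : (z * b - a / z)^2 = z^2*b^2 - 2*(a*b) + a^2/z^2 := by
    field_simp
    ring
  rw [h1, q_eq hx, hz]
  field_simp
  ring

lemma cov (hc : 0 < c) (hβ : 1 < β) {a b : ℝ} (ha : 0 < a) (hb : 0 < b) :
    (∫ u in Ioi (0:ℝ), u ^ (-β) * Real.exp (-c * (Real.sqrt u * b - a / Real.sqrt u)^2))
      = (a/b) ^ ((1:ℝ)-β) * ∫ t in Ioi 0, φ c β (a*b) t := by
  have hk0 : 0 < a/b := by positivity
  have h1 := integral_comp_mul_left_Ioi
    (fun u => u ^ (-β) * Real.exp (-c * (Real.sqrt u * b - a / Real.sqrt u)^2)) 0 hk0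
  rw [mul_zero, smul_eq_mul] at h1
  have h3 : EqOn
      (fun x : ℝ => ((a/b)*x) ^ (-β)
        * Real.exp (-c * (Real.sqrt ((a/b)*x) * b - a / Real.sqrt ((a/b)*x))^2))
      (fun x : ℝ => (a/b) ^ (-β) * φ c β (a*b) x) (Ioi 0) := by
    intro x hx
    have hx0 : (0:ℝ) < x := hx
    simp only [φ]
    rw [Real.mul_rpow hk0.le hx0.le, sq_identity ha hb hx0,
      show -c * ((a*b) * (Real.sqrt x - 1/Real.sqrt x)^2)
        = -(c*(a*b)) * (Real.sqrt x - 1/Real.sqrt x)^2 by ring]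
    ring
  have h2 : (∫ u in Ioi (0:ℝ), u ^ (-β)
        * Real.exp (-c * (Real.sqrt u * b - a / Real.sqrt u)^2))
      = (a/b) * ∫ x in Ioi (0:ℝ), ((a/b)*x) ^ (-β)
        * Real.exp (-c * (Real.sqrt ((a/b)*x) * b - a / Real.sqrt ((a/b)*x))^2) := by
    rw [h1, ← mul_assoc, mul_inv_cancel₀ hk0.ne', one_mul]
  rw [h2, setIntegral_congr_fun measurableSet_Ioi h3, integral_const_mul, ← mul_assoc]
  congr 1
  nth_rewrite 1 [← Real.rpow_one (a/b)]
  rw [← Real.rpow_add hk0, show (1:ℝ) + -β = 1 - β by ring]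

lemma key_alg {a b β : ℝ} (ha : 0 < a) (hb : 0 < b) :
    (a/b) ^ ((1:ℝ)-β) * (a*b) ^ ((1:ℝ)-β) = (a ^ (2*(β-1)))⁻¹ := by
  rw [← Real.mul_rpow (by positivity) (by positivity),
    show a/b*(a*b) = a^2 by field_simp,
    ← Real.rpow_natCast a 2, ← Real.rpow_mul ha.le, ← Real.rpow_neg ha.le]
  congr 1
  push_cast
  ring

end S3

open S3 in
theorem stmt3 (c β : ℝ) (hc : 0 < c) (hβ : 1 < β) :
    ∃ C₁ C₂ : ℝ, 0 < C₁ ∧ 0 < C₂ ∧ ∀ a b : ℝ, 0 < a → 0 < b →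
      C₁ * (1 + 4*a*b) ^ (β - 3/2) / a ^ (2*(β-1)) ≤
        (∫ u in Set.Ioi (0:ℝ),
          u ^ (-β) * Real.exp (-c * (Real.sqrt u * b - a / Real.sqrt u)^2)) ∧
      (∫ u in Set.Ioi (0:ℝ),
          u ^ (-β) * Real.exp (-c * (Real.sqrt u * b - a / Real.sqrt u)^2)) ≤
        C₂ * (1 + 4*a*b) ^ (β - 3/2) / a ^ (2*(β-1)) := by
  obtain ⟨D₁, D₂, hD₁, hD₂, hbound⟩ := h_bounds hc hβ
  refine ⟨D₁, D₂, hD₁, hD₂, ?_⟩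
  intro a b ha hb
  have hs : 0 < a*b := mul_pos ha hb
  have hk0 : 0 < a/b := by positivity
  have hkp : (0:ℝ) ≤ (a/b) ^ ((1:ℝ)-β) := Real.rpow_nonneg hk0.le _
  obtain ⟨h1, h2⟩ := hbound (a*b) hs
  rw [show (1:ℝ)+4*(a*b) = 1+4*a*b by ring] at h1 h2
  have halg : ∀ Y : ℝ, (a/b) ^ ((1:ℝ)-β) * ((a*b) ^ ((1:ℝ)-β) * Y)
      = Y / a ^ (2*(β-1)) := by
    intro Y
    rw [← mul_assoc, key_alg ha hb]
    rw [div_eq_mul_inv]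
    ring
  have hcov := cov hc hβ ha hb
  constructor
  · rw [hcov]
    calc D₁ * (1 + 4*a*b) ^ (β - 3/2) / a ^ (2*(β-1))
        = (a/b) ^ ((1:ℝ)-β) * (D₁ * ((a*b) ^ ((1:ℝ)-β) * (1+4*a*b) ^ (β-3/2))) := by
          rw [show (a/b) ^ ((1:ℝ)-β) * (D₁ * ((a*b) ^ ((1:ℝ)-β) * (1+4*a*b) ^ (β-3/2)))
            = D₁ * (1+4*a*b) ^ (β-3/2) * ((a/b) ^ ((1:ℝ)-β) * ((a*b) ^ ((1:ℝ)-β) * 1)) by ring,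
            halg 1, div_eq_mul_inv, div_eq_mul_inv]
          ring
      _ ≤ (a/b) ^ ((1:ℝ)-β) * ∫ t in Set.Ioi (0:ℝ), φ c β (a*b) t :=
          mul_le_mul_of_nonneg_left h1 hkp
  · rw [hcov]
    calc (a/b) ^ ((1:ℝ)-β) * ∫ t in Set.Ioi (0:ℝ), φ c β (a*b) t
        ≤ (a/b) ^ ((1:ℝ)-β) * (D₂ * ((a*b) ^ ((1:ℝ)-β) * (1+4*a*b) ^ (β-3/2))) :=
          mul_le_mul_of_nonneg_left h2 hkp
      _ = D₂ * (1 + 4*a*b) ^ (β - 3/2) / a ^ (2*(β-1)) := by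
          rw [show (a/b) ^ ((1:ℝ)-β) * (D₂ * ((a*b) ^ ((1:ℝ)-β) * (1+4*a*b) ^ (β-3/2)))
            = D₂ * (1+4*a*b) ^ (β-3/2) * ((a/b) ^ ((1:ℝ)-β) * ((a*b) ^ ((1:ℝ)-β) * 1)) by ring,
            halg 1, div_eq_mul_inv, div_eq_mul_inv]
          ring
end

section
/- Let c > 0 and β ≥ 3/2. Then for all a, b > 0, ∫₀^∞ u^{-β} exp(-c(√u·b - a/√u)²) du ≤ C · (1+4ab)^{β-3/2} / a^{2(β-1)}, where C = 2 ∫₀^∞ (max(1,r))^{β-3/2} r^{-1/2} e^{-cr} dr. In particular, if β = 3/2 then one may take C = √(4π/c). -/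
open MeasureTheory Real Set

lemma aux_integrable_of_even {f : ℝ → ℝ} (he : ∀ x, f (-x) = f x)
    (hf : IntegrableOn f (Ioi 0)) : Integrable f := by
  rw [← integrableOn_univ, ← Iic_union_Ioi (a := (0:ℝ)), integrableOn_union]
  refine ⟨?_, hf⟩
  rw [← Measure.map_neg_eq_self (volume : Measure ℝ)]
  have m : MeasurableEmbedding fun x : ℝ => -x := (Homeomorph.neg ℝ).measurableEmbedding
  rw [m.integrableOn_map_iff]
  simp only [Function.comp_def, he, neg_preimage, neg_Iic, neg_zero]
  exact (integrableOn_Ici_iff_integrableOn_Ioi enorm_ne_top).mpr hf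

lemma aux_integrable_h (c γ : ℝ) (hc : 0 < c) (hγ : 0 ≤ γ) :
    Integrable (fun t : ℝ => max 1 (t^2) ^ γ * Real.exp (-c * t^2)) := by
  apply aux_integrable_of_even (fun x => by simp)
  have cont : Continuous (fun t : ℝ => max 1 (t^2) ^ γ * Real.exp (-c * t^2)) := by
    apply Continuous.mul
    · exact (continuous_const.max (continuous_pow 2)).rpow_const
        (fun x => Or.inl (by positivity))
    · exact Real.continuous_exp.comp (by continuity)
  refine Integrable.mono' (g := fun t => Real.exp (-c*t^2) + t ^ (2*γ) * Real.exp (-c*t^2))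
    ?_ cont.aestronglyMeasurable.restrict ?_
  · exact ((integrable_exp_neg_mul_sq hc).integrableOn).add
      (integrableOn_rpow_mul_exp_neg_mul_sq hc (by linarith : (-1:ℝ) < 2*γ))
  · filter_upwards [self_mem_ae_restrict measurableSet_Ioi] with t ht
    have ht0 : 0 < t := ht
    have hexp : 0 < Real.exp (-c*t^2) := Real.exp_pos _
    rw [Real.norm_eq_abs, abs_of_nonneg (by positivity)]
    have : max 1 (t^2) ^ γ ≤ 1 + t ^ (2*γ) := by
      rcases le_total (t^2) 1 with h | h
      · rw [max_eq_left h, Real.one_rpow]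
        have : (0:ℝ) ≤ t ^ (2*γ) := Real.rpow_nonneg ht0.le _
        linarith
      · rw [max_eq_right h]
        have : (t^2 : ℝ) ^ γ = t ^ (2*γ) := by
          rw [← Real.rpow_natCast t 2, ← Real.rpow_mul ht0.le]
          norm_num
        rw [this]
        have : (0:ℝ) ≤ t ^ (2*γ) := Real.rpow_nonneg ht0.le _
        linarith
    nlinarith [Real.rpow_nonneg (le_trans zero_le_one (le_max_left 1 (t^2))) γ]


section
variable {a b : ℝ}

lemma aux_phi_deriv (ha : 0 < a) (hb : 0 < b) :
    ∀ u ∈ Ioi (0:ℝ), HasDerivWithinAt (fun u : ℝ => Real.sqrt u * b - a / Real.sqrt u)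
      ((b * u + a) / (2 * u * Real.sqrt u)) (Ioi 0) u := by
  intro u hu
  have hu' : (0:ℝ) < u := hu
  have hs : 0 < Real.sqrt u := Real.sqrt_pos.mpr hu'
  have h1 : HasDerivAt Real.sqrt (1/(2*Real.sqrt u)) u := Real.hasDerivAt_sqrt hu'.ne'
  have h2 : HasDerivAt (fun u : ℝ => Real.sqrt u * b) (1/(2*Real.sqrt u)*b) u := h1.mul_const b
  have h3 : HasDerivAt (fun u : ℝ => a / Real.sqrt u)
      ((0 * Real.sqrt u - a * (1/(2*Real.sqrt u))) / (Real.sqrt u)^2) u :=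
    (hasDerivAt_const u a).div h1 hs.ne'
  have h4 := h2.sub h3
  have heq : 1/(2*Real.sqrt u)*b - (0 * Real.sqrt u - a * (1/(2*Real.sqrt u))) / (Real.sqrt u)^2
      = (b * u + a) / (2 * u * Real.sqrt u) := by
    have h5 : Real.sqrt u ^ 2 = u := Real.sq_sqrt hu'.le
    field_simp
    nlinarith [h5]
  rw [heq] at h4
  exact h4.hasDerivWithinAt

lemma aux_phi_inj (ha : 0 < a) (hb : 0 < b) :
    InjOn (fun u : ℝ => Real.sqrt u * b - a / Real.sqrt u) (Ioi 0) := by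
  have : StrictMonoOn (fun u : ℝ => Real.sqrt u * b - a / Real.sqrt u) (Ioi 0) := by
    intro u hu v hv huv
    have hu' : (0:ℝ) < u := hu
    have hv' : (0:ℝ) < v := hv
    have h1 : Real.sqrt u < Real.sqrt v := Real.sqrt_lt_sqrt hu'.le huv
    have hsu : 0 < Real.sqrt u := Real.sqrt_pos.mpr hu'
    have hsv : 0 < Real.sqrt v := Real.sqrt_pos.mpr hv'
    have h2 : a / Real.sqrt v < a / Real.sqrt u := by
      apply div_lt_div_of_pos_left ha hsu h1
    have h3 : Real.sqrt u * b < Real.sqrt v * b := by nlinarith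
    simp only
    linarith
  exact this.injOn

lemma aux_phi_surj (ha : 0 < a) (hb : 0 < b) :
    (fun u : ℝ => Real.sqrt u * b - a / Real.sqrt u) '' (Ioi 0) = univ := by
  apply eq_univ_of_forall
  intro t
  set s := Real.sqrt (t^2 + 4*a*b) with hs
  have hpos : (0:ℝ) < t^2 + 4*a*b := by nlinarith [sq_nonneg t]
  have hs2 : s^2 = t^2 + 4*a*b := Real.sq_sqrt hpos.le
  have habs : |t| < s := by
    rw [hs, ← Real.sqrt_sq_eq_abs]
    exact Real.sqrt_lt_sqrt (sq_nonneg t) (by nlinarith)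
  have hts : 0 < t + s := by
    rcases abs_cases t with ⟨h, _⟩ | ⟨h, _⟩ <;> linarith
  have hq : 0 < (t+s)/(2*b) := div_pos hts (by linarith)
  refine ⟨((t+s)/(2*b))^2, pow_pos hq 2, ?_⟩
  have hsq : Real.sqrt (((t+s)/(2*b))^2) = (t+s)/(2*b) := Real.sqrt_sq hq.le
  simp only [hsq]
  field_simp
  nlinarith [hs2]
end



-- the key algebraic inequality
lemma aux_alg (a b u : ℝ) (ha : 0 < a) (hb : 0 < b) (hu : 0 < u) (M : ℝ)
    (hM1 : 1 ≤ M) (hM2 : (b*u - a)^2/u ≤ M) :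
    a^2 ≤ u * ((1 + 4*a*b) * M) := by
  by_cases hca : a^2 ≤ u*(1+4*a*b)
  · nlinarith
  · push_neg at hca
    set x := Real.sqrt (1+4*a*b) with hxdef
    have hx2 : x^2 = 1+4*a*b := Real.sq_sqrt (by nlinarith)
    have hx1 : (1:ℝ) ≤ x := by
      rw [show (1:ℝ) = Real.sqrt 1 from (Real.sqrt_one).symm]
      exact Real.sqrt_le_sqrt (by nlinarith)
    have hxpos : 0 < x := by linarith
    have e1 : 4*b*u*x^2 < a*(x^2 - 1) := by nlinarith [mul_lt_mul_of_pos_right hca hb]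
    have e2 : 0 ≤ a*x*((3*x-1)*(x-1)) :=
      mul_nonneg (mul_nonneg ha.le (by linarith)) (mul_nonneg (by linarith) (by linarith))
    have key : a ≤ x*(a - b*u) := by nlinarith [mul_lt_mul_of_pos_left e1 hxpos]
    have key2 : a^2 ≤ x^2*(a - b*u)^2 := by nlinarith
    have : (1+4*a*b)*((b*u-a)^2/u) ≤ (1+4*a*b)*M := by
      apply mul_le_mul_of_nonneg_left hM2 (by nlinarith)
    rw [← hx2]
    have : x^2*(a-b*u)^2 = u * (x^2 * ((b*u-a)^2/u)) := by field_simp; ring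
    have e3 : u * (x^2 * ((b*u-a)^2/u)) ≤ u * (x^2 * M) :=
      mul_le_mul_of_nonneg_left (mul_le_mul_of_nonneg_left hM2 (sq_nonneg x)) hu.le
    linarith [key2, e3]

lemma aux_pointwise (c β : ℝ) (hβ : 3/2 ≤ β) (a b : ℝ) (ha : 0 < a) (hb : 0 < b) :
    ∀ u ∈ Ioi (0:ℝ),
      u ^ (-β) * Real.exp (-c * (Real.sqrt u * b - a / Real.sqrt u)^2) ≤
      (2 * (1 + 4*a*b) ^ (β - 3/2) / a ^ (2*(β-1))) *
        (|(b*u + a)/(2*u*Real.sqrt u)| •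
          (max 1 ((Real.sqrt u * b - a / Real.sqrt u)^2) ^ (β - 3/2) *
            Real.exp (-c * (Real.sqrt u * b - a / Real.sqrt u)^2))) := by
  intro u hu
  have hu' : (0:ℝ) < u := hu
  have hγ : (0:ℝ) ≤ β - 3/2 := by linarith
  set γ := β - 3/2 with hγdef
  have hs : 0 < Real.sqrt u := Real.sqrt_pos.mpr hu'
  have hss : Real.sqrt u * Real.sqrt u = u := Real.mul_self_sqrt hu'.le
  set φ := Real.sqrt u * b - a / Real.sqrt u with hφdef
  set M := max 1 (φ^2) with hMdef
  have hM1 : (1:ℝ) ≤ M := le_max_left _ _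
  have hφsq : φ^2 = (b*u - a)^2 / u := by
    rw [hφdef]
    field_simp
    rw [Real.sq_sqrt hu'.le]; ring
  have hM2 : (b*u - a)^2/u ≤ M := hφsq ▸ le_max_right _ _
  have halg : a^2 ≤ u * ((1 + 4*a*b) * M) := aux_alg a b u ha hb hu' M hM1 hM2
  have hMpos : (0:ℝ) < M := by linarith
  -- rpow of the algebraic inequality
  have haγ : a ^ (2*γ) ≤ u^γ * ((1 + 4*a*b)^γ * M^γ) := by
    have h1 := Real.rpow_le_rpow (by positivity) halg hγ
    rw [Real.mul_rpow hu'.le (by positivity), Real.mul_rpow (by positivity) hMpos.le] at h1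
    calc a ^ (2*γ) = (a^2) ^ γ := by
          rw [← Real.rpow_natCast a 2, ← Real.rpow_mul ha.le]; norm_num
      _ ≤ _ := h1
  -- u^(-γ) ≤ (1+4ab)^γ * M^γ / a^(2γ)
  have h6 : u ^ (-γ) * a ^ (2*γ) ≤ (1 + 4*a*b)^γ * M^γ := by
    calc u ^ (-γ) * a ^ (2*γ) ≤ u ^ (-γ) * (u^γ * ((1 + 4*a*b)^γ * M^γ)) :=
          mul_le_mul_of_nonneg_left haγ (Real.rpow_nonneg hu'.le _)
      _ = (1 + 4*a*b)^γ * M^γ := by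
          rw [← mul_assoc, ← Real.rpow_add hu', neg_add_cancel, Real.rpow_zero, one_mul]
  -- split u^(-β)
  have hsplit : u ^ (-β) = u ^ (-γ) * (u * Real.sqrt u)⁻¹ := by
    rw [show -β = -γ + -(3/2 : ℝ) by rw [hγdef]; ring, Real.rpow_add hu']
    congr 1
    rw [show (-(3/2):ℝ) = -(1 + 1/2) by norm_num, Real.rpow_neg hu'.le,
      Real.rpow_add hu', Real.rpow_one, ← Real.sqrt_eq_rpow]
  -- the derivative bound
  have hd : (u * Real.sqrt u)⁻¹ ≤ 2/a * ((b*u + a)/(2*u*Real.sqrt u)) := by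
    rw [show 2/a * ((b*u + a)/(2*u*Real.sqrt u)) = (b*u+a)/(a*(u*Real.sqrt u)) by
      field_simp]
    rw [inv_eq_one_div, div_le_div_iff₀ (by positivity) (by positivity)]
    nlinarith [mul_pos hu' hs, mul_pos hb hu']
  -- combine
  have hcomb : u ^ (-β) ≤ (2 * (1 + 4*a*b)^γ / a ^ (2*(β-1))) * ((b*u + a)/(2*u*Real.sqrt u)) * M^γ := by
    have hK : (2 * (1 + 4*a*b)^γ / a ^ (2*(β-1))) = 2 / a * ((1 + 4*a*b)^γ / a ^ (2*γ)) := by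
      rw [show 2*(β-1) = 2*γ + 1 by rw [hγdef]; ring, Real.rpow_add ha, Real.rpow_one]
      field_simp
    have h7 : u ^ (-γ) ≤ (1 + 4*a*b)^γ * M^γ / a ^ (2*γ) := by
      rw [le_div_iff₀ (by positivity)]
      exact h6
    calc u ^ (-β) = u ^ (-γ) * (u * Real.sqrt u)⁻¹ := hsplit
      _ ≤ ((1 + 4*a*b)^γ * M^γ / a ^ (2*γ)) * (2/a * ((b*u + a)/(2*u*Real.sqrt u))) := by
          apply mul_le_mul h7 hd (by positivity)
          positivity
      _ = (2 * (1 + 4*a*b)^γ / a ^ (2*(β-1))) * ((b*u + a)/(2*u*Real.sqrt u)) * M^γ := by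
          rw [hK]; ring
  -- multiply by exp and insert abs
  have habs : |(b*u + a)/(2*u*Real.sqrt u)| = (b*u + a)/(2*u*Real.sqrt u) :=
    abs_of_pos (by positivity)
  rw [smul_eq_mul, habs]
  have hexp : (0:ℝ) < Real.exp (-c * φ^2) := Real.exp_pos _
  calc u ^ (-β) * Real.exp (-c * φ^2)
      ≤ ((2 * (1 + 4*a*b)^γ / a ^ (2*(β-1))) * ((b*u + a)/(2*u*Real.sqrt u)) * M^γ) *
        Real.exp (-c * φ^2) := mul_le_mul_of_nonneg_right hcomb hexp.le
    _ = (2 * (1 + 4*a*b)^γ / a ^ (2*(β-1))) *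
        ((b*u + a)/(2*u*Real.sqrt u) * (M^γ * Real.exp (-c * φ^2))) := by ring

lemma aux_key (c β : ℝ) (hc : 0 < c) (hβ : 3/2 ≤ β) (a b : ℝ) (ha : 0 < a) (hb : 0 < b) :
    (∫ u in Ioi (0:ℝ),
        u ^ (-β) * Real.exp (-c * (Real.sqrt u * b - a / Real.sqrt u)^2)) ≤
      (2 * ∫ t : ℝ, max 1 (t^2) ^ (β - 3/2) * Real.exp (-c * t^2)) *
        (1 + 4*a*b) ^ (β - 3/2) / a ^ (2*(β-1)) := by
  have hγ : (0:ℝ) ≤ β - 3/2 := by linarith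
  set γ := β - 3/2 with hγdef
  set φ : ℝ → ℝ := fun u => Real.sqrt u * b - a / Real.sqrt u with hφ
  set h : ℝ → ℝ := fun t => max 1 (t^2) ^ γ * Real.exp (-c * t^2) with hh
  set K : ℝ := 2 * (1 + 4*a*b) ^ γ / a ^ (2*(β-1)) with hK
  have hKpos : 0 < K := by
    rw [hK]; positivity
  have hderiv := aux_phi_deriv (a := a) (b := b) ha hb
  have hinj := aux_phi_inj (a := a) (b := b) ha hb
  have himg := aux_phi_surj (a := a) (b := b) ha hb
  have hint_h : Integrable h := aux_integrable_h c γ hc hγ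
  -- change of variables identity
  have hcov : (∫ u in Ioi (0:ℝ), |(b*u + a)/(2*u*Real.sqrt u)| • h (φ u)) = ∫ t : ℝ, h t := by
    have := integral_image_eq_integral_abs_deriv_smul measurableSet_Ioi hderiv hinj h
    rw [himg] at this
    rw [← this, setIntegral_univ]
  -- integrability of the comparison function
  have hint_rhs : IntegrableOn (fun u => |(b*u + a)/(2*u*Real.sqrt u)| • h (φ u)) (Ioi 0) := by
    have := (integrableOn_image_iff_integrableOn_abs_deriv_smul measurableSet_Ioi hderiv hinj h)
    rw [himg] at this
    exact this.mp hint_h.integrableOn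
  have hint_rhs' : IntegrableOn
      (fun u => K * (|(b*u + a)/(2*u*Real.sqrt u)| • h (φ u))) (Ioi 0) :=
    hint_rhs.const_mul K
  have hpt := aux_pointwise c β hβ a b ha hb
  -- integrability of lhs
  have hcont : ContinuousOn (fun u : ℝ => u ^ (-β) * Real.exp (-c * (φ u)^2)) (Ioi 0) := by
    apply ContinuousOn.mul
    · exact fun x hx => (Real.continuousAt_rpow_const x (-β)
        (Or.inl (ne_of_gt hx))).continuousWithinAt
    · apply Continuous.comp_continuousOn Real.continuous_exp
      apply ContinuousOn.mul continuousOn_const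
      apply ContinuousOn.pow
      apply ContinuousOn.sub
      · exact (Real.continuous_sqrt.continuousOn).mul continuousOn_const
      · exact ContinuousOn.div continuousOn_const Real.continuous_sqrt.continuousOn
          (fun x hx => (Real.sqrt_pos.mpr hx).ne')
  have hint_lhs : IntegrableOn (fun u : ℝ => u ^ (-β) * Real.exp (-c * (φ u)^2)) (Ioi 0) := by
    apply Integrable.mono' hint_rhs' (hcont.aestronglyMeasurable measurableSet_Ioi)
    filter_upwards [self_mem_ae_restrict measurableSet_Ioi] with u hu
    have hu' : (0:ℝ) < u := hu
    rw [Real.norm_eq_abs, abs_of_nonneg (by positivity)]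
    exact hpt u hu
  calc (∫ u in Ioi (0:ℝ), u ^ (-β) * Real.exp (-c * (φ u)^2))
      ≤ ∫ u in Ioi (0:ℝ), K * (|(b*u + a)/(2*u*Real.sqrt u)| • h (φ u)) :=
        setIntegral_mono_on hint_lhs hint_rhs' measurableSet_Ioi hpt
    _ = K * ∫ u in Ioi (0:ℝ), |(b*u + a)/(2*u*Real.sqrt u)| • h (φ u) :=
        MeasureTheory.integral_const_mul K _
    _ = K * ∫ t : ℝ, h t := by rw [hcov]
    _ = (2 * ∫ t : ℝ, h t) * (1 + 4*a*b) ^ γ / a ^ (2*(β-1)) := by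
        rw [hK]; ring

lemma aux_const_eq (c γ : ℝ) :
    (∫ r in Ioi (0:ℝ), max 1 r ^ γ * r ^ (-(1:ℝ)/2) * Real.exp (-c * r)) =
      ∫ t : ℝ, max 1 (t^2) ^ γ * Real.exp (-c * t^2) := by
  have himg : (fun t : ℝ => t^2) '' Ioi 0 = Ioi 0 := by
    ext r
    constructor
    · rintro ⟨t, ht, rfl⟩; exact pow_pos (show (0:ℝ) < t from ht) 2
    · intro hr
      exact ⟨Real.sqrt r, Real.sqrt_pos.mpr hr, Real.sq_sqrt (le_of_lt hr)⟩
  have hderiv : ∀ t ∈ Ioi (0:ℝ), HasDerivWithinAt (fun t : ℝ => t^2) (2*t) (Ioi 0) t := by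
    intro t ht
    simpa using (hasDerivAt_pow 2 t).hasDerivWithinAt
  have hinj : InjOn (fun t : ℝ => t^2) (Ioi 0) := by
    intro x hx y hy hxy
    have hx' : (0:ℝ) < x := hx
    have hy' : (0:ℝ) < y := hy
    simp only at hxy
    nlinarith [hxy]
  have := integral_image_eq_integral_abs_deriv_smul measurableSet_Ioi hderiv hinj
    (fun r : ℝ => max 1 r ^ γ * r ^ (-(1:ℝ)/2) * Real.exp (-c * r))
  rw [himg] at this
  rw [this]
  have : ∀ t ∈ Ioi (0:ℝ),
      |2*t| • (max 1 (t^2) ^ γ * (t^2) ^ (-(1:ℝ)/2) * Real.exp (-c * t^2)) =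
      2 * (max 1 (t^2) ^ γ * Real.exp (-c * t^2)) := by
    intro t ht
    have ht' : (0:ℝ) < t := ht
    have h1 : ((t^2:ℝ)) ^ (-(1:ℝ)/2) = t⁻¹ := by
      rw [← Real.rpow_natCast t 2, ← Real.rpow_mul ht'.le]
      norm_num
      exact (Real.rpow_neg_one t)
    rw [smul_eq_mul, h1, abs_of_pos (by linarith)]
    field_simp
  rw [setIntegral_congr_fun measurableSet_Ioi this]
  rw [MeasureTheory.integral_const_mul]
  have habs : (∫ t : ℝ, max 1 (t^2) ^ γ * Real.exp (-c * t^2)) =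
      2 * ∫ x in Ioi (0:ℝ), max 1 (x^2) ^ γ * Real.exp (-c * x^2) := by
    have := integral_comp_abs (f := fun x : ℝ => max 1 (x^2) ^ γ * Real.exp (-c * x^2))
    simpa [sq_abs] using this
  rw [habs]
theorem stmt5 (c β : ℝ) (hc : 0 < c) (hβ : 3/2 ≤ β) :
    (∀ a b : ℝ, 0 < a → 0 < b →
      (∫ u in Set.Ioi (0:ℝ),
          u ^ (-β) * Real.exp (-c * (Real.sqrt u * b - a / Real.sqrt u)^2)) ≤
        (2 * ∫ r in Set.Ioi (0:ℝ),
            (max 1 r) ^ (β - 3/2) * r ^ (-(1:ℝ)/2) * Real.exp (-c * r)) *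
          (1 + 4*a*b) ^ (β - 3/2) / a ^ (2*(β-1))) ∧
    (β = 3/2 → ∀ a b : ℝ, 0 < a → 0 < b →
      (∫ u in Set.Ioi (0:ℝ),
          u ^ (-β) * Real.exp (-c * (Real.sqrt u * b - a / Real.sqrt u)^2)) ≤
        Real.sqrt (4 * Real.pi / c) * (1 + 4*a*b) ^ (β - 3/2) / a ^ (2*(β-1))) := by
  constructor
  · intro a b ha hb
    rw [aux_const_eq c (β - 3/2)]
    exact aux_key c β hc hβ a b ha hb
  · intro hβeq a b ha hb
    have := aux_key c β hc hβ a b ha hb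
    have hgauss : (2 * ∫ t : ℝ, max 1 (t^2) ^ (β - 3/2) * Real.exp (-c * t^2)) =
        Real.sqrt (4 * Real.pi / c) := by
      rw [hβeq]
      norm_num
      simp_rw [← neg_mul]
      rw [integral_gaussian, show 4 * Real.pi / c = 2^2 * (Real.pi / c) by ring,
        Real.sqrt_mul (by norm_num), Real.sqrt_sq (by norm_num)]
    rw [← hgauss]
    exact this
end

section
/- Let d ≥ 3 be an integer and β > 0, and let 1 denote a fixed unit vector in ℝ^d. Then ∫_{|w| > 1} e^{-(|w| - w·1)} |w|^{-β} dw < ∞ if and only if β > (d+1)/2. -/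
open MeasureTheory Real RealInnerProductSpace Set

lemma measurable_rpow_const (s : ℝ) : Measurable fun x : ℝ => x ^ s := by
  have h : (fun x : ℝ => x ^ s) = fun x =>
      if x = 0 then (if s = 0 then 1 else 0)
      else if 0 < x then rexp (Real.log x * s) else rexp (Real.log x * s) * Real.cos (s * π) := by
    funext x
    split_ifs with h1 h2 h3
    · subst h1 h2; simp
    · subst h1; exact Real.zero_rpow h2
    · rw [Real.rpow_def_of_pos h3, mul_comm]
    · rw [Real.rpow_def_of_neg (by rcases lt_trichotomy x 0 with h|h|h <;> simp_all), mul_comm]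
  rw [h]
  refine Measurable.ite (measurableSet_eq) measurable_const ?_
  exact Measurable.ite measurableSet_Ioi ((Real.measurable_log.mul measurable_const).exp)
    (((Real.measurable_log.mul measurable_const).exp).mul measurable_const)

lemma lint_lt_top_of_integrable {α : Type*} [MeasurableSpace α] {μ : Measure α} {f : α → ℝ}
    (hf : Integrable f μ) : ∫⁻ a, ENNReal.ofReal (f a) ∂μ < ⊤ := by
  refine lt_of_le_of_lt (lintegral_mono fun a => ?_) hf.2
  rw [← ofReal_norm_eq_enorm]
  exact ENNReal.ofReal_le_ofReal (le_abs_self _)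

lemma aux_rpow_fin {s a : ℝ} (ha : 0 < a) (hs : s < -1) :
    ∫⁻ x in Set.Ioi a, ENNReal.ofReal (x ^ s) < ⊤ :=
  lint_lt_top_of_integrable (integrableOn_Ioi_rpow_of_lt hs ha)

lemma aux_rpow_top {s a : ℝ} (ha : 0 < a) (hs : -1 ≤ s) :
    ∫⁻ x in Set.Ioi a, ENNReal.ofReal (x ^ s) = ⊤ := by
  by_contra h
  have hint : IntegrableOn (fun x : ℝ => x ^ s) (Set.Ioi a) := by
    refine ⟨(measurable_rpow_const s).aestronglyMeasurable, ?_⟩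
    rw [hasFiniteIntegral_iff_ofReal ?nn]
    case nn =>
      refine (ae_restrict_iff' measurableSet_Ioi).mpr (ae_of_all _ fun x hx => ?_)
      exact Real.rpow_nonneg (le_of_lt (ha.trans hx)) s
    exact lt_top_iff_ne_top.mp (lt_of_le_of_lt (le_of_eq rfl) (lt_top_iff_ne_top.mpr h)) |>.lt_top
  rw [integrableOn_Ioi_rpow_iff ha] at hint
  linarith

lemma aux_gauss (m : ℕ) {c : ℝ} (hc : 0 < c) :
    ∫⁻ u : Fin m → ℝ, ENNReal.ofReal (rexp (-(c * ∑ i, u i ^ 2)))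
      = ENNReal.ofReal ((π / c) ^ ((m : ℝ) / 2)) := by
  have hmp : MeasurePreserving (⇑((MeasurableEquiv.toLp 2 (Fin m → ℝ)).symm)) volume volume :=
    EuclideanSpace.volume_preserving_symm_measurableEquiv_toLp (Fin m)
  have hmeas : Measurable fun u : Fin m → ℝ => ENNReal.ofReal (rexp (-(c * ∑ i, u i ^ 2))) := by
    apply Measurable.ennreal_ofReal
    exact (Real.measurable_exp.comp ((measurable_const.mul
      (Finset.measurable_sum _ fun i _ => (measurable_pi_apply i).pow_const 2)).neg))
  rw [← hmp.lintegral_comp hmeas]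
  have hnorm : ∀ v : EuclideanSpace ℝ (Fin m),
      ∑ i, ((MeasurableEquiv.toLp 2 (Fin m → ℝ)).symm) v i ^ 2 = ‖v‖ ^ 2 := by
    intro v
    rw [EuclideanSpace.norm_eq, Real.sq_sqrt (by positivity)]
    simp [sq_abs, MeasurableEquiv.coe_toLp_symm]
  have hint : Integrable (fun v : EuclideanSpace ℝ (Fin m) => rexp (-(c * ‖v‖ ^ 2))) := by
    have := (GaussianFourier.integrable_cexp_neg_mul_sq_norm_add
      (V := EuclideanSpace ℝ (Fin m)) (b := (c : ℂ)) (by simpa using hc) 0 0).norm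
    refine this.congr (Filter.Eventually.of_forall fun v => ?_)
    rw [eq_comm]
    simp only [zero_mul, add_zero, inner_zero_left, Complex.ofReal_zero, mul_zero,
      Complex.norm_exp]
    congr 1
    push_cast
    simp [Complex.mul_re]
    left
    norm_cast
  calc ∫⁻ v : EuclideanSpace ℝ (Fin m),
        ENNReal.ofReal (rexp (-(c * ∑ i, ((MeasurableEquiv.toLp 2 (Fin m → ℝ)).symm) v i ^ 2)))
      = ∫⁻ v : EuclideanSpace ℝ (Fin m), ENNReal.ofReal (rexp (-(c * ‖v‖ ^ 2))) := by
        simp_rw [hnorm]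
    _ = ENNReal.ofReal ((π / c) ^ ((m : ℝ) / 2)) := by
        rw [← ofReal_integral_eq_lintegral_ofReal hint
          (Filter.Eventually.of_forall fun v => (Real.exp_pos _).le)]
        congr 1
        have := GaussianFourier.integral_rexp_neg_mul_sq_norm
          (V := EuclideanSpace ℝ (Fin m)) hc
        simp_rw [neg_mul] at this
        rw [this, finrank_euclideanSpace_fin]


lemma integrable_exp_neg_mul_abs {c : ℝ} (hc : 0 < c) :
    Integrable fun x : ℝ => rexp (-(c * |x|)) := by
  have hIoi : IntegrableOn (fun x : ℝ => rexp (-(c * |x|))) (Ioi 0) := by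
    refine (exp_neg_integrableOn_Ioi 0 hc).congr_fun (fun x hx => ?_) measurableSet_Ioi
    simp only [abs_of_pos (show (0:ℝ) < x from hx), neg_mul]
  have hIic : IntegrableOn (fun x : ℝ => rexp (-(c * |x|))) (Iic 0) := by
    rw [← Measure.map_neg_eq_self (volume : Measure ℝ)]
    have m : MeasurableEmbedding fun x : ℝ => -x := (Homeomorph.neg ℝ).measurableEmbedding
    rw [m.integrableOn_map_iff]
    simp_rw [Function.comp_def, abs_neg, neg_preimage, neg_Iic, neg_zero]
    exact (integrableOn_Ici_iff_integrableOn_Ioi).mpr hIoi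
  have h := hIic.union hIoi
  rw [Iic_union_Ioi] at h
  exact integrableOn_univ.mp h


set_option maxHeartbeats 1000000 in
theorem stmt6 (d : ℕ) (hd : 3 ≤ d) (β : ℝ) (hβ : 0 < β)
    (e : EuclideanSpace ℝ (Fin d)) (he : ‖e‖ = 1) :
    (∫⁻ w in {w : EuclideanSpace ℝ (Fin d) | 1 < ‖w‖},
        ENNReal.ofReal (Real.exp (-(‖w‖ - ⟪w, e⟫)) * ‖w‖ ^ (-β))) < ⊤ ↔
      ((d : ℝ) + 1) / 2 < β := by
  obtain ⟨m, rfl⟩ : ∃ m, d = m + 1 := ⟨d - 1, by omega⟩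
  have hm : 2 ≤ m := by omega
  -- orthonormal basis with b 0 = e
  obtain ⟨b, hb0⟩ : ∃ b : OrthonormalBasis (Fin (m+1)) ℝ (EuclideanSpace ℝ (Fin (m+1))),
      b 0 = e := by
    have hON : Orthonormal ℝ (({0} : Set (Fin (m+1))).restrict (fun _ => e)) := by
      refine ⟨fun i => he, ?_⟩
      intro i j hij
      exact absurd (Subtype.ext ((Set.mem_singleton_iff.mp i.2).trans
        (Set.mem_singleton_iff.mp j.2).symm)) hij
    obtain ⟨b, hb⟩ := hON.exists_orthonormalBasis_extension_of_card_eq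
      (by simp [finrank_euclideanSpace_fin])
    exact ⟨b, hb 0 rfl⟩
  set ρ : ℝ × (Fin m → ℝ) → ℝ := fun p => Real.sqrt (p.1 ^ 2 + ∑ i, p.2 i ^ 2) with hρ
  set G : ℝ × (Fin m → ℝ) → ENNReal := fun p =>
    Set.indicator {p : ℝ × (Fin m → ℝ) | 1 < ρ p}
      (fun p => ENNReal.ofReal (rexp (-(ρ p - p.1)) * ρ p ^ (-β))) p with hG
  have hρcont : Continuous ρ := by
    apply Real.continuous_sqrt.comp
    exact (continuous_fst.pow 2).add
      (continuous_finset_sum _ fun i _ => ((continuous_apply i).comp continuous_snd).pow 2)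
  have hGmeas : Measurable G := by
    refine Measurable.indicator ?_ (measurableSet_lt measurable_const hρcont.measurable)
    apply Measurable.ennreal_ofReal
    exact (Real.measurable_exp.comp ((hρcont.measurable.sub measurable_fst).neg)).mul
      ((measurable_rpow_const (-β)).comp hρcont.measurable)
  -- transfer
  have key : (∫⁻ w in {w : EuclideanSpace ℝ (Fin (m+1)) | 1 < ‖w‖},
      ENNReal.ofReal (Real.exp (-(‖w‖ - ⟪w, e⟫)) * ‖w‖ ^ (-β))) = ∫⁻ p, G p := by
    set ψ : ℝ × (Fin m → ℝ) → EuclideanSpace ℝ (Fin (m+1)) := fun p =>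
      b.repr.symm (((MeasurableEquiv.toLp 2 (Fin (m+1) → ℝ)).symm).symm
        ((MeasurableEquiv.piFinSuccAbove (fun _ : Fin (m+1) => ℝ) 0).symm p)) with hψdef
    have hψ : MeasurePreserving ψ volume volume :=
      (b.measurePreserving_repr_symm).comp
        (((EuclideanSpace.volume_preserving_symm_measurableEquiv_toLp (Fin (m+1))).symm).comp
          ((volume_preserving_piFinSuccAbove (fun _ : Fin (m+1) => ℝ) 0).symm))
    have hcoord : ∀ p : ℝ × (Fin m → ℝ),
        ((MeasurableEquiv.toLp 2 (Fin (m+1) → ℝ)).symm).symm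
          ((MeasurableEquiv.piFinSuccAbove (fun _ : Fin (m+1) => ℝ) 0).symm p)
        = (WithLp.equiv 2 (Fin (m+1) → ℝ)).symm (Fin.insertNth (α := fun _ => ℝ) 0 p.1 p.2) := by
      intro p
      have h1 : (MeasurableEquiv.piFinSuccAbove (fun _ : Fin (m+1) => ℝ) 0).symm p
          = Fin.insertNth (α := fun _ => ℝ) 0 p.1 p.2 := by
        simp only [MeasurableEquiv.piFinSuccAbove_symm_apply]
        rfl
      rw [h1]
      rfl
    have hρnorm : ∀ p, ‖ψ p‖ = ρ p := by
      intro p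
      rw [hψdef]
      simp only [LinearIsometryEquiv.norm_map]
      rw [hcoord p, EuclideanSpace.norm_eq]
      simp only [WithLp.equiv_symm_apply, WithLp.ofLp_toLp, Real.norm_eq_abs, sq_abs]
      congr 1
      rw [Fin.sum_univ_succAbove (fun i => Fin.insertNth (α := fun _ => ℝ) 0 p.1 p.2 i ^ 2) 0]
      simp [Fin.insertNth_apply_same, Fin.insertNth_apply_succAbove]
    have hinner : ∀ p, ⟪ψ p, e⟫ = p.1 := by
      intro p
      rw [← hb0, real_inner_comm, hψdef]
      rw [← b.repr_apply_apply, LinearIsometryEquiv.apply_symm_apply]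
      rw [hcoord p]
      simp [WithLp.equiv_symm_apply, WithLp.ofLp_toLp, Fin.insertNth_apply_same]
    have hSmeas : MeasurableSet {w : EuclideanSpace ℝ (Fin (m+1)) | 1 < ‖w‖} :=
      measurableSet_lt measurable_const measurable_norm
    have hFmeas : Measurable (Set.indicator {w : EuclideanSpace ℝ (Fin (m+1)) | 1 < ‖w‖}
        (fun w => ENNReal.ofReal (Real.exp (-(‖w‖ - ⟪w, e⟫)) * ‖w‖ ^ (-β)))) := by
      refine Measurable.indicator ?_ hSmeas
      apply Measurable.ennreal_ofReal
      refine Measurable.mul ?_ ((measurable_rpow_const (-β)).comp measurable_norm)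
      exact Real.measurable_exp.comp
        ((measurable_norm.sub (Continuous.measurable (continuous_id.inner continuous_const))).neg)
    rw [← lintegral_indicator hSmeas, ← hψ.lintegral_comp hFmeas]
    refine lintegral_congr fun p => ?_
    simp only [hG]
    by_cases h1 : 1 < ρ p
    · rw [Set.indicator_of_mem
          (show ψ p ∈ {w : EuclideanSpace ℝ (Fin (m+1)) | 1 < ‖w‖} from by
            simp only [Set.mem_setOf_eq, hρnorm p]; exact h1),
        Set.indicator_of_mem (show p ∈ {p | 1 < ρ p} from h1), hρnorm p, hinner p]
    · rw [Set.indicator_of_notMem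
          (show ψ p ∉ {w : EuclideanSpace ℝ (Fin (m+1)) | 1 < ‖w‖} from by
            simp only [Set.mem_setOf_eq, hρnorm p]; exact h1),
        Set.indicator_of_notMem (show p ∉ {p | 1 < ρ p} from h1)]
  rw [key]
  have htarget : (((m+1:ℕ) : ℝ) + 1) / 2 < β ↔ (m:ℝ)/2 + 1 < β := by
    push_cast; constructor <;> intro h <;> linarith
  rw [htarget]
  constructor
  · intro hfin
    by_contra hβ'
    push_neg at hβ'
    set R : Set (ℝ × (Fin m → ℝ)) := {p | 2 < p.1} ∩ {p | ∑ i, p.2 i ^ 2 ≤ p.1} with hR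
    have hRmeas : MeasurableSet R :=
      (measurableSet_lt measurable_const measurable_fst).inter
        (measurableSet_le (Finset.measurable_sum _ fun i _ =>
          ((measurable_pi_apply i).comp measurable_snd).pow_const 2) measurable_fst)
    set L : ℝ × (Fin m → ℝ) → ENNReal := fun p =>
      R.indicator (fun p => ENNReal.ofReal (rexp (-1) * (2 * p.1) ^ (-β))) p with hL
    have hLmeas : Measurable L := by
      refine Measurable.indicator ?_ hRmeas
      exact (measurable_const.mul
        ((measurable_rpow_const (-β)).comp (measurable_fst.const_mul 2))).ennreal_ofReal
    have hLle : ∀ p, L p ≤ G p := by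
      intro p
      by_cases hp : p ∈ R
      · rw [hL]
        simp only
        rw [Set.indicator_of_mem hp]
        obtain ⟨hx2, hT⟩ := hp
        simp only [Set.mem_setOf_eq] at hx2 hT
        have hx0 : (0:ℝ) < p.1 := by linarith
        have hsq0 : (0:ℝ) ≤ ∑ i, p.2 i ^ 2 := Finset.sum_nonneg fun i _ => sq_nonneg _
        have hρsq : ρ p ^ 2 = p.1 ^ 2 + ∑ i, p.2 i ^ 2 := by
          rw [hρ]; exact Real.sq_sqrt (by positivity)
        have hxle : p.1 ≤ ρ p := by
          have habs : |p.1| ≤ ρ p := by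
            rw [hρ, ← Real.sqrt_sq_eq_abs]
            exact Real.sqrt_le_sqrt (by linarith)
          exact (le_abs_self _).trans habs
        have hρub : ρ p ≤ p.1 + 1 := by
          rw [hρ]
          calc √(p.1 ^ 2 + ∑ i, p.2 i ^ 2) ≤ √((p.1 + 1) ^ 2) :=
                Real.sqrt_le_sqrt (by nlinarith)
            _ = p.1 + 1 := Real.sqrt_sq (by linarith)
        have h1 : (1:ℝ) < ρ p := by linarith
        have hρ0 : (0:ℝ) < ρ p := by linarith
        simp only [hG]
        rw [Set.indicator_of_mem (show p ∈ {p | 1 < ρ p} from h1)]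
        apply ENNReal.ofReal_le_ofReal
        have e1 : rexp (-1) ≤ rexp (-(ρ p - p.1)) := Real.exp_le_exp.mpr (by linarith)
        have e2 : (2 * p.1) ^ (-β) ≤ ρ p ^ (-β) :=
          Real.rpow_le_rpow_of_nonpos hρ0 (by linarith) (by linarith)
        exact mul_le_mul e1 e2 (Real.rpow_nonneg (by linarith) _) (Real.exp_pos _).le
      · rw [hL]
        simp only
        rw [Set.indicator_of_notMem hp]
        exact zero_le
    set Cr : ℝ := rexp (-1) * 2 ^ (-β) * 2 ^ m / (m:ℝ) ^ ((m:ℝ)/2) with hCr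
    have hm0 : (0:ℝ) < m := by exact_mod_cast Nat.lt_of_lt_of_le (by norm_num) hm
    have hC0 : 0 < Cr := by
      rw [hCr]
      have h2 : (0:ℝ) < (2:ℝ) ^ (-β) := Real.rpow_pos_of_pos (by norm_num) _
      have h3 : (0:ℝ) < (m:ℝ) ^ ((m:ℝ)/2) := Real.rpow_pos_of_pos hm0 _
      positivity
    have hinner : ∀ x : ℝ, (∫⁻ u : Fin m → ℝ, L (x, u))
        = (Set.Ioi (2:ℝ)).indicator (fun x => ENNReal.ofReal (rexp (-1) * (2 * x) ^ (-β)) *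
            volume {u : Fin m → ℝ | ∑ i, u i ^ 2 ≤ x}) x := by
      intro x
      have hUmeas : MeasurableSet {u : Fin m → ℝ | ∑ i, u i ^ 2 ≤ x} :=
        measurableSet_le (Finset.measurable_sum _ fun i _ =>
          (measurable_pi_apply i).pow_const 2) measurable_const
      by_cases hx : x ∈ Set.Ioi (2:ℝ)
      · rw [Set.indicator_of_mem hx]
        have hLu : ∀ u : Fin m → ℝ, L (x, u) = Set.indicator {u : Fin m → ℝ | ∑ i, u i ^ 2 ≤ x}
            (fun _ => ENNReal.ofReal (rexp (-1) * (2 * x) ^ (-β))) u := by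
          intro u
          by_cases hu : u ∈ {u : Fin m → ℝ | ∑ i, u i ^ 2 ≤ x}
          · rw [hL]
            simp only
            rw [Set.indicator_of_mem (show (x, u) ∈ R from ⟨hx, hu⟩),
              Set.indicator_of_mem hu]
          · rw [hL]
            simp only
            rw [Set.indicator_of_notMem (show (x, u) ∉ R from fun hmem => hu hmem.2),
              Set.indicator_of_notMem hu]
        simp_rw [hLu]
        rw [lintegral_indicator hUmeas, setLIntegral_const]
      · rw [Set.indicator_of_notMem hx]
        have hLu : ∀ u : Fin m → ℝ, L (x, u) = 0 := by
          intro u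
          rw [hL]
          simp only
          exact Set.indicator_of_notMem (fun hmem => hx hmem.1) _
        simp_rw [hLu, lintegral_zero]
    have hcube : ∀ x : ℝ, x ∈ Set.Ioi (2:ℝ) →
        ENNReal.ofReal (2 * √(x / m)) ^ m ≤ volume {u : Fin m → ℝ | ∑ i, u i ^ 2 ≤ x} := by
      intro x hx
      have hx0 : (0:ℝ) < x := lt_trans two_pos hx
      have hsub : (Set.univ.pi fun _ : Fin m => Set.Icc (-√(x / m)) (√(x / m)))
          ⊆ {u : Fin m → ℝ | ∑ i, u i ^ 2 ≤ x} := by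
        intro u hu
        simp only [Set.mem_pi, Set.mem_univ, forall_true_left, Set.mem_Icc] at hu
        have hub : ∀ i, u i ^ 2 ≤ x / m := by
          intro i
          have h2 : |u i| ≤ √(x / m) := abs_le.mpr ⟨(hu i).1, (hu i).2⟩
          calc u i ^ 2 = |u i| ^ 2 := (sq_abs _).symm
            _ ≤ (√(x / m)) ^ 2 := by
                apply pow_le_pow_left₀ (abs_nonneg _) h2
            _ = x / m := Real.sq_sqrt (by positivity)
        simp only [Set.mem_setOf_eq]
        calc ∑ i, u i ^ 2 ≤ ∑ _i : Fin m, x / m := Finset.sum_le_sum fun i _ => hub i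
          _ = m * (x / m) := by
              rw [Finset.sum_const, Finset.card_univ, Fintype.card_fin, nsmul_eq_mul]
          _ = x := by field_simp
      calc ENNReal.ofReal (2 * √(x / m)) ^ m
          = ∏ _i : Fin m, ENNReal.ofReal (2 * √(x / m)) := by
            rw [Finset.prod_const, Finset.card_univ, Fintype.card_fin]
        _ = volume (Set.univ.pi fun _ : Fin m => Set.Icc (-√(x / m)) (√(x / m))) := by
            rw [volume_pi_pi]
            refine Finset.prod_congr rfl fun i _ => ?_
            rw [Real.volume_Icc]
            congr 1
            ring
        _ ≤ _ := measure_mono hsub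
    have heq : ∀ x : ℝ, x ∈ Set.Ioi (2:ℝ) →
        ENNReal.ofReal (rexp (-1) * (2 * x) ^ (-β)) * ENNReal.ofReal (2 * √(x / m)) ^ m
          = ENNReal.ofReal Cr * ENNReal.ofReal (x ^ ((m:ℝ)/2 - β)) := by
      intro x hx
      have hx0 : (0:ℝ) < x := lt_trans two_pos hx
      rw [← ENNReal.ofReal_pow (by positivity), ← ENNReal.ofReal_mul (by positivity),
        ← ENNReal.ofReal_mul hC0.le]
      congr 1
      have h1 : √(x / m) ^ m = (x / (m:ℝ)) ^ ((m:ℝ)/2) := by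
        rw [Real.sqrt_eq_rpow, ← Real.rpow_natCast ((x / (m:ℝ)) ^ ((1:ℝ)/2)) m,
          ← Real.rpow_mul (by positivity)]
        congr 1
        ring
      rw [mul_pow, h1, Real.div_rpow hx0.le hm0.le, Real.mul_rpow (by norm_num) hx0.le,
        hCr, sub_eq_add_neg, Real.rpow_add hx0]
      field_simp
    have hmain : (⊤ : ENNReal) ≤ ∫⁻ p, L p := by
      rw [Measure.volume_eq_prod, lintegral_prod _ hLmeas.aemeasurable]
      simp_rw [hinner]
      rw [lintegral_indicator measurableSet_Ioi]
      have hstep : (⊤ : ENNReal) = ENNReal.ofReal Cr *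
          ∫⁻ x in Set.Ioi (2:ℝ), ENNReal.ofReal (x ^ ((m:ℝ)/2 - β)) := by
        rw [aux_rpow_top (by norm_num) (by linarith), ENNReal.mul_top
          (by simp only [ne_eq, ENNReal.ofReal_eq_zero, not_le]; exact hC0)]
      rw [hstep, ← lintegral_const_mul' _ _ ENNReal.ofReal_ne_top]
      apply lintegral_mono_ae
      refine (ae_restrict_iff' measurableSet_Ioi).mpr (ae_of_all _ fun x hx => ?_)
      rw [← heq x hx]
      exact mul_le_mul_right (hcube x hx) _
    have htop : (⊤ : ENNReal) ≤ ∫⁻ p, G p := hmain.trans (lintegral_mono hLle)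
    rw [top_le_iff.mp htop] at hfin
    exact absurd hfin (by simp)
  · intro hβ'
    set c : ℝ := (4 * (m:ℝ))⁻¹ with hc
    have hc0 : 0 < c := by rw [hc]; positivity
    set M : ℝ × (Fin m → ℝ) → ℝ := fun p => rexp (-(c * (|p.1| + ∑ i, |p.2 i|))) with hM
    set B : ℝ × (Fin m → ℝ) → ENNReal := fun p =>
      (Set.Ioi (2⁻¹ : ℝ)).indicator (fun x => ENNReal.ofReal (x ^ (-β))) p.1 *
        ENNReal.ofReal (rexp (-((3 * p.1)⁻¹ * ∑ i, p.2 i ^ 2))) with hB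
    have hBmeas : Measurable B := by
      apply Measurable.mul
      · exact (Measurable.indicator (measurable_rpow_const (-β)).ennreal_ofReal
          measurableSet_Ioi).comp measurable_fst
      · apply Measurable.ennreal_ofReal
        apply Real.measurable_exp.comp
        apply Measurable.neg
        exact ((measurable_fst.const_mul 3).inv.mul
          (Finset.measurable_sum _ fun i _ =>
            ((measurable_pi_apply i).comp measurable_snd).pow_const 2))
    have hGle : ∀ p, G p ≤ ENNReal.ofReal (M p) + B p := by
      intro p
      simp only [hG]
      by_cases h1 : (1:ℝ) < ρ p
      swap
      · rw [Set.indicator_of_notMem (show p ∉ {p | 1 < ρ p} from h1)]; exact zero_le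
      rw [Set.indicator_of_mem (show p ∈ {p | 1 < ρ p} from h1)]
      have hρ0 : (0:ℝ) < ρ p := lt_trans one_pos h1
      have hρsq : ρ p ^ 2 = p.1 ^ 2 + ∑ i, p.2 i ^ 2 := by
        rw [hρ]; exact Real.sq_sqrt (by positivity)
      have hsq0 : (0:ℝ) ≤ ∑ i, p.2 i ^ 2 := Finset.sum_nonneg fun i _ => sq_nonneg _
      have hxle : p.1 ≤ ρ p := by
        have habs : |p.1| ≤ ρ p := by
          rw [hρ, ← Real.sqrt_sq_eq_abs]
          exact Real.sqrt_le_sqrt (by linarith)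
        exact (le_abs_self _).trans habs
      by_cases h2 : p.1 ≤ ρ p / 2
      · refine le_trans ?_ le_self_add
        apply ENNReal.ofReal_le_ofReal
        have e2 : ρ p ^ (-β) ≤ 1 := Real.rpow_le_one_of_one_le_of_nonpos h1.le (by linarith)
        have e1 : rexp (-(ρ p - p.1)) * ρ p ^ (-β) ≤ rexp (-(ρ p/2)) := by
          calc rexp (-(ρ p - p.1)) * ρ p ^ (-β) ≤ rexp (-(ρ p/2)) * 1 :=
                mul_le_mul (Real.exp_le_exp.mpr (by linarith)) e2
                  (Real.rpow_nonneg hρ0.le _) (Real.exp_pos _).le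
            _ = _ := mul_one _
        refine e1.trans (Real.exp_le_exp.mpr ?_)
        have hs2 : (∑ i, |p.2 i|)^2 ≤ m * ∑ i, p.2 i ^ 2 := by
          simpa [sq_abs] using sq_sum_le_card_mul_sum_sq (s := Finset.univ)
            (f := fun i => |p.2 i|)
        have hsum0 : (0:ℝ) ≤ ∑ i, |p.2 i| := Finset.sum_nonneg fun i _ => abs_nonneg _
        have hm1 : (2:ℝ) ≤ m := by exact_mod_cast hm
        have h1m : (0:ℝ) ≤ ((m:ℝ)*(m:ℝ) - 1) * p.1 ^ 2 :=
          mul_nonneg (by nlinarith) (sq_nonneg _)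
        have h2m : (0:ℝ) ≤ ((m:ℝ)*(m:ℝ) - (m:ℝ)) * ∑ i, p.2 i ^ 2 :=
          mul_nonneg (by nlinarith) hsq0
        have h3m : (0:ℝ) ≤ (m:ℝ) * ∑ i, p.2 i ^ 2 := mul_nonneg (by linarith) hsq0
        have hsqle : (|p.1| + ∑ i, |p.2 i|) ^ 2 ≤ (2 * m * ρ p) ^ 2 := by
          nlinarith [hs2, sq_abs p.1, hρsq, h1m, h2m, h3m,
            sq_nonneg (|p.1| - ∑ i, |p.2 i|)]
        have hkey : |p.1| + ∑ i, |p.2 i| ≤ 2 * m * ρ p := by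
          have hv : (0:ℝ) ≤ 2 * m * ρ p := mul_nonneg (by positivity) hρ0.le
          calc |p.1| + ∑ i, |p.2 i| = √((|p.1| + ∑ i, |p.2 i|) ^ 2) :=
                (Real.sqrt_sq (by positivity)).symm
            _ ≤ √((2 * m * ρ p) ^ 2) := Real.sqrt_le_sqrt hsqle
            _ = 2 * m * ρ p := Real.sqrt_sq hv
        have hcs : c * (|p.1| + ∑ i, |p.2 i|) ≤ ρ p / 2 := by
          rw [hc, inv_mul_le_iff₀ (by positivity)]
          nlinarith [hkey]
        linarith
      · push_neg at h2
        have hx2 : (2:ℝ)⁻¹ < p.1 := by linarith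
        have hx0 : (0:ℝ) < p.1 := lt_trans (by norm_num) hx2
        refine le_trans ?_ le_add_self
        rw [hB]
        simp only
        rw [Set.indicator_of_mem (show p.1 ∈ Set.Ioi (2⁻¹:ℝ) from hx2),
          ← ENNReal.ofReal_mul (Real.rpow_nonneg hx0.le _)]
        apply ENNReal.ofReal_le_ofReal
        have hT : (ρ p - p.1) * (ρ p + p.1) = ∑ i, p.2 i ^ 2 := by nlinarith [hρsq]
        have e1 : (3 * p.1)⁻¹ * ∑ i, p.2 i ^ 2 ≤ ρ p - p.1 := by
          rw [inv_mul_le_iff₀ (by positivity)]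
          nlinarith [hT, h2, hxle, hx0]
        have e2 : ρ p ^ (-β) ≤ p.1 ^ (-β) :=
          Real.rpow_le_rpow_of_nonpos hx0 hxle (by linarith)
        calc rexp (-(ρ p - p.1)) * ρ p ^ (-β)
            ≤ rexp (-((3 * p.1)⁻¹ * ∑ i, p.2 i ^ 2)) * p.1 ^ (-β) :=
              mul_le_mul (Real.exp_le_exp.mpr (by linarith)) e2
                (Real.rpow_nonneg hρ0.le _) (Real.exp_pos _).le
          _ = p.1 ^ (-β) * rexp (-((3 * p.1)⁻¹ * ∑ i, p.2 i ^ 2)) := mul_comm _ _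
    have hMint : Integrable M := by
      have hMeq : M = fun p : ℝ × (Fin m → ℝ) =>
          rexp (-(c * |p.1|)) * ∏ i, rexp (-(c * |p.2 i|)) := by
        funext p
        rw [hM]
        simp only
        rw [← Real.exp_sum, ← Real.exp_add]
        congr 1
        rw [mul_add, neg_add, Finset.mul_sum, ← Finset.sum_neg_distrib]
      rw [hMeq, show (volume : Measure (ℝ × (Fin m → ℝ))) = volume.prod volume from rfl]
      exact (integrable_exp_neg_mul_abs hc0).mul_prod
        (Integrable.fintype_prod (fun _ => integrable_exp_neg_mul_abs hc0))
    have hMmeas : Measurable fun p => ENNReal.ofReal (M p) := by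
      apply Measurable.ennreal_ofReal
      rw [hM]
      apply Real.measurable_exp.comp
      apply Measurable.neg
      exact measurable_const.mul (measurable_fst.abs.add
        (Finset.measurable_sum _ fun i _ => ((measurable_pi_apply i).comp measurable_snd).abs))
    have hBfin : ∫⁻ p, B p < ⊤ := by
      have hBcalc : ∫⁻ p, B p = ∫⁻ x in Set.Ioi (2⁻¹:ℝ),
          ENNReal.ofReal ((3*π) ^ ((m:ℝ)/2) * x ^ ((m:ℝ)/2 - β)) := by
        rw [Measure.volume_eq_prod, lintegral_prod _ hBmeas.aemeasurable]
        have hinner : ∀ x : ℝ, (∫⁻ u : Fin m → ℝ, B (x, u))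
            = (Set.Ioi (2⁻¹:ℝ)).indicator
              (fun x => ENNReal.ofReal ((3*π) ^ ((m:ℝ)/2) * x ^ ((m:ℝ)/2 - β))) x := by
          intro x
          by_cases hx : x ∈ Set.Ioi (2⁻¹:ℝ)
          · have hx0 : (0:ℝ) < x := lt_trans (by norm_num) hx
            rw [Set.indicator_of_mem hx]
            simp only [hB, Set.indicator_of_mem hx]
            rw [lintegral_const_mul' _ _ ENNReal.ofReal_ne_top,
              aux_gauss m (c := (3*x)⁻¹) (by positivity),
              ← ENNReal.ofReal_mul (Real.rpow_nonneg hx0.le _)]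
            congr 1
            have h1 : π / (3*x)⁻¹ = (3*π) * x := by field_simp
            rw [h1, Real.mul_rpow (by positivity) hx0.le,
              sub_eq_add_neg, Real.rpow_add hx0]
            ring
          · rw [Set.indicator_of_notMem hx]
            simp only [hB, Set.indicator_of_notMem hx, zero_mul, lintegral_zero]
        simp_rw [hinner]
        rw [lintegral_indicator measurableSet_Ioi]
      rw [hBcalc]
      have hC : (0:ℝ) ≤ (3*π) ^ ((m:ℝ)/2) := Real.rpow_nonneg (by positivity) _
      simp_rw [ENNReal.ofReal_mul hC]
      rw [lintegral_const_mul' _ _ ENNReal.ofReal_ne_top]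
      exact ENNReal.mul_lt_top ENNReal.ofReal_lt_top (aux_rpow_fin (by norm_num) (by linarith))
    calc ∫⁻ p, G p ≤ ∫⁻ p, (ENNReal.ofReal (M p) + B p) := lintegral_mono hGle
      _ = (∫⁻ p, ENNReal.ofReal (M p)) + ∫⁻ p, B p := lintegral_add_left hMmeas _
      _ < ⊤ := ENNReal.add_lt_top.mpr ⟨lint_lt_top_of_integrable hMint, hBfin⟩
end

section
/- Let d ≥ 3. Define J(x,y) = ∫₀^∞ τ^{-d/2} exp(-|x - τy|²/(4τ)) dτ for x, y ∈ ℝ^d with x ≠ 0, and K₀(x,y) = e^{-(|x||y| - x·y)/2} (1 + |x||y|)^{(d-3)/2} / |x|^{d-2}. Then there exist constants c₁, c₂ > 0 depending only on d such that c₁ K₀(x,y) ≤ J(x,y) ≤ c₂ K₀(x,y) for all x ≠ 0 and all y ∈ ℝ^d. -/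
open MeasureTheory Real RealInnerProductSpace

section
open Set

lemma aux_pow_exp (p c : ℝ) (hp : 1 ≤ p) (hc : 0 < c) :
    ∃ M : ℝ, 0 < M ∧ ∀ u : ℝ, 0 ≤ u → u ^ p * Real.exp (-(c * u)) ≤ M := by
  set n : ℕ := ⌈p⌉₊ with hn
  refine ⟨max 1 ((n / c) ^ n), lt_max_of_lt_left one_pos, fun u hu => ?_⟩
  rcases le_or_gt u 1 with h1 | h1
  · refine le_trans ?_ (le_max_left _ _)
    have h2 : u ^ p ≤ 1 := Real.rpow_le_one hu h1 (by linarith)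
    have h3 : Real.exp (-(c*u)) ≤ 1 := Real.exp_le_one_iff.2 (by nlinarith)
    nlinarith [Real.exp_nonneg (-(c*u)), Real.rpow_nonneg hu p]
  · refine le_trans ?_ (le_max_right _ _)
    have hpn : p ≤ (n : ℝ) := Nat.le_ceil p
    have h2 : u ^ p ≤ u ^ (n : ℝ) := Real.rpow_le_rpow_of_exponent_le h1.le hpn
    rw [Real.rpow_natCast] at h2
    have hnpos : 0 < (n:ℝ) := by
      have : 0 < n := Nat.ceil_pos.2 (by linarith)
      exact_mod_cast this
    have key : (c * u / n) ^ n ≤ Real.exp (c * u) := by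
      have h4 : c * u / n + 1 ≤ Real.exp (c * u / n) := by
        have := Real.add_one_le_exp (c * u / n); linarith
      have h5 : (c * u / n) ^ n ≤ (c * u / n + 1) ^ n := by
        apply pow_le_pow_left₀ (by positivity); linarith
      calc (c * u / n) ^ n ≤ (c * u / n + 1) ^ n := h5
        _ ≤ Real.exp (c * u / n) ^ n := pow_le_pow_left₀ (by positivity) h4 n
        _ = Real.exp (c * u) := by
            rw [← Real.exp_nat_mul]; congr 1; field_simp
    have h6 : u ^ n ≤ ((n:ℝ) / c) ^ n * Real.exp (c * u) := by
      have e1 : ((n:ℝ) / c) ^ n * (c * u / n) ^ n = u ^ n := by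
        rw [← mul_pow]; congr 1; field_simp
      calc u ^ n = ((n:ℝ)/c)^n * (c*u/n)^n := e1.symm
        _ ≤ ((n:ℝ)/c)^n * Real.exp (c*u) := by
            apply mul_le_mul_of_nonneg_left key (by positivity)
    calc u ^ p * Real.exp (-(c*u)) ≤ u ^ n * Real.exp (-(c*u)) := by
          apply mul_le_mul_of_nonneg_right h2 (Real.exp_nonneg _)
      _ ≤ (((n:ℝ)/c)^n * Real.exp (c*u)) * Real.exp (-(c*u)) := by
          apply mul_le_mul_of_nonneg_right h6 (Real.exp_nonneg _)
      _ = ((n:ℝ)/c)^n := by rw [mul_assoc, ← Real.exp_add]; simp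


lemma aux_cont (p : ℝ) (g : ℝ → ℝ) (hg : ContinuousOn g (Ioi 0)) :
    ContinuousOn (fun σ : ℝ => σ ^ (-p) * Real.exp (g σ)) (Ioi (0:ℝ)) := by
  apply ContinuousOn.mul
  · exact ContinuousOn.rpow_const continuousOn_id (fun x hx => Or.inl (ne_of_gt hx))
  · exact (Real.continuous_exp.comp_continuousOn hg)

lemma aux_meas (p : ℝ) (g : ℝ → ℝ) (hg : ContinuousOn g (Ioi 0)) :
    AEStronglyMeasurable (fun σ : ℝ => σ ^ (-p) * Real.exp (g σ))
      (volume.restrict (Ioi (0:ℝ))) :=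
  (aux_cont p g hg).aestronglyMeasurable measurableSet_Ioi

lemma aux_integrableOn (p c k : ℝ) (hp : 1 < p) (hc : 0 < c) (hk : 0 ≤ k) :
    IntegrableOn (fun σ : ℝ => σ ^ (-p) * Real.exp (-(c / σ) - k * σ)) (Ioi (0:ℝ)) := by
  obtain ⟨M, hM, hMb⟩ := aux_pow_exp p c (by linarith) hc
  have hgc : ContinuousOn (fun σ : ℝ => -(c / σ) - k * σ) (Ioi 0) := by
    apply ContinuousOn.sub
    · exact (continuousOn_const.div continuousOn_id (fun x hx => ne_of_gt hx)).neg
    · exact continuousOn_const.mul continuousOn_id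
  have hmeas : AEStronglyMeasurable (fun σ : ℝ => σ ^ (-p) * Real.exp (-(c / σ) - k * σ)) volume := by
    apply Measurable.aestronglyMeasurable
    fun_prop
  have hsplit : Ioc (0:ℝ) 1 ∪ Ioi 1 = Ioi 0 := Ioc_union_Ioi_eq_Ioi zero_le_one
  rw [← hsplit]
  apply IntegrableOn.union
  · apply Measure.integrableOn_of_bounded (M := M)
    · simp [measure_Ioc_lt_top.ne]
    · exact hmeas
    · filter_upwards [ae_restrict_mem measurableSet_Ioc] with σ hσ
      obtain ⟨h0, h1⟩ := hσ
      have key : σ ^ (-p) * Real.exp (-(c / σ)) ≤ M := by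
        have e1 : σ ^ (-p) = (σ⁻¹) ^ p := by
          rw [Real.rpow_neg h0.le, ← Real.inv_rpow h0.le]
        have e2 : c / σ = c * σ⁻¹ := by ring
        rw [e1, e2]
        exact hMb σ⁻¹ (by positivity)
      have h2 : Real.exp (-(c / σ) - k * σ) ≤ Real.exp (-(c / σ)) :=
        Real.exp_le_exp.2 (by nlinarith)
      have h3 : (0:ℝ) ≤ σ ^ (-p) := Real.rpow_nonneg h0.le _
      rw [Real.norm_eq_abs, abs_of_nonneg (by positivity)]
      nlinarith
  · apply Integrable.mono (g := fun σ : ℝ => σ ^ (-p))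
      ((integrableOn_Ioi_rpow_of_lt (by linarith) one_pos))
    · exact hmeas.restrict
    · filter_upwards [ae_restrict_mem measurableSet_Ioi] with σ hσ
      have h0 : (0:ℝ) < σ := lt_trans one_pos hσ
      have h3 : (0:ℝ) ≤ σ ^ (-p) := Real.rpow_nonneg h0.le _
      rw [Real.norm_eq_abs, Real.norm_eq_abs, abs_of_nonneg (by positivity),
        abs_of_nonneg h3]
      have : Real.exp (-(c / σ) - k * σ) ≤ 1 := by
        apply Real.exp_le_one_iff.2
        have : 0 < c / σ := by positivity
        nlinarith
      nlinarith

lemma aux_f_integrable (p r : ℝ) (hp : 1 < p) :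
    IntegrableOn (fun σ : ℝ => σ ^ (-p) * Real.exp (-(1 - r*σ)^2 / (4*σ))) (Ioi (0:ℝ)) := by
  have base := (aux_integrableOn p (1/4) (r^2/4) hp (by norm_num) (by positivity)).const_mul
    (Real.exp (r/2))
  apply IntegrableOn.congr_fun base ?_ measurableSet_Ioi
  intro σ hσ
  have hσ0 : (0:ℝ) < σ := hσ
  simp only
  rw [mul_comm (Real.exp (r/2)), mul_assoc, ← Real.exp_add]
  congr 1
  field_simp
  ring

lemma aux_f_nonneg (p r : ℝ) :
    ∀ σ ∈ Ioi (0:ℝ), 0 ≤ σ ^ (-p) * Real.exp (-(1 - r*σ)^2 / (4*σ)) := by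
  intro σ hσ
  have : (0:ℝ) < σ := hσ
  positivity

lemma aux_lower (p : ℝ) (hp : 3/2 ≤ p) (r : ℝ) (hr : 0 ≤ r) :
    Real.exp (-(1/4)) * (2:ℝ) ^ (-p) * (1+r) ^ (p - 3/2) ≤
      ∫ σ in Ioi (0:ℝ), σ ^ (-p) * Real.exp (-(1 - r*σ)^2 / (4*σ)) := by
  have h1r : (1:ℝ) ≤ 1 + r := by linarith
  have h0r : (0:ℝ) < 1 + r := by linarith
  set s₀ : ℝ := (1+r)⁻¹ with hs₀
  set L : ℝ := (1+r) ^ (-(3:ℝ)/2) with hL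
  have hs₀pos : 0 < s₀ := by positivity
  have hLpos : 0 < L := Real.rpow_pos_of_pos h0r _
  have hLs₀ : L ≤ s₀ := by
    rw [hL, hs₀, ← Real.rpow_neg_one]
    exact Real.rpow_le_rpow_of_exponent_le h1r (by norm_num)
  have hsub : Ioc s₀ (s₀ + L) ⊆ Ioi (0:ℝ) := fun σ hσ => lt_trans hs₀pos hσ.1
  -- pointwise bound on the interval
  have hpt : ∀ σ ∈ Ioc s₀ (s₀ + L),
      Real.exp (-(1/4)) * ((1+r)/2) ^ p ≤ σ ^ (-p) * Real.exp (-(1 - r*σ)^2 / (4*σ)) := by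
    intro σ hσ
    have hσ0 : 0 < σ := lt_trans hs₀pos hσ.1
    have hσle : σ ≤ 2 * s₀ := le_trans hσ.2 (by linarith)
    -- power part
    have hpow : ((1+r)/2) ^ p ≤ σ ^ (-p) := by
      have h2s : (0:ℝ) < 2 * s₀ := by linarith
      have e1 : ((1+r)/2 : ℝ) = (2 * s₀)⁻¹ := by
        rw [hs₀]; field_simp
      rw [e1, Real.rpow_neg hσ0.le, Real.inv_rpow h2s.le]
      apply inv_anti₀ (Real.rpow_pos_of_pos hσ0 p)
      exact Real.rpow_le_rpow hσ0.le hσle (by linarith)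
    -- exponent part
    have hexp : (1 - r*σ)^2 / (4*σ) ≤ 1/4 := by
      have hsq : (1 - r*σ)^2 ≤ (1+r)⁻¹ := by
        have hub : 1 - r*σ ≤ (1+r)⁻¹ := by
          have : r * s₀ ≤ r * σ := by nlinarith [hσ.1]
          have hrs : r * s₀ = r / (1+r) := by rw [hs₀]; ring
          rw [hs₀] at *
          have : 1 - r * σ ≤ 1 - r/(1+r) := by linarith
          have e2 : 1 - r/(1+r) = (1+r)⁻¹ := by field_simp; ring
          linarith
        have hlb : -((1+r) ^ (-(1:ℝ)/2)) ≤ 1 - r*σ := by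
          have h3 : r * σ ≤ r * s₀ + r * L := by nlinarith [hσ.2]
          have hrs : r * s₀ ≤ 1 := by
            rw [hs₀]; rw [mul_inv_le_iff₀ h0r]; linarith
          have hrL : r * L ≤ (1+r) ^ (-(1:ℝ)/2) := by
            calc r * L ≤ (1+r) * L := by nlinarith
              _ = (1+r) ^ (1:ℝ) * (1+r) ^ (-(3:ℝ)/2) := by rw [Real.rpow_one, hL]
              _ = (1+r) ^ (-(1:ℝ)/2) := by rw [← Real.rpow_add h0r]; norm_num
          linarith
        have hub' : 1 - r*σ ≤ (1+r) ^ (-(1:ℝ)/2) := by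
          refine le_trans hub ?_
          rw [← Real.rpow_neg_one]
          exact Real.rpow_le_rpow_of_exponent_le h1r (by norm_num)
        have habs : (1 - r*σ)^2 ≤ ((1+r) ^ (-(1:ℝ)/2))^2 := sq_le_sq' hlb hub'
        calc (1 - r*σ)^2 ≤ ((1+r) ^ (-(1:ℝ)/2))^2 := habs
          _ = (1+r)⁻¹ := by
            rw [← Real.rpow_natCast ((1+r) ^ (-(1:ℝ)/2)) 2, ← Real.rpow_mul h0r.le,
              ← Real.rpow_neg_one]
            norm_num
      have h4σ : (1+r)⁻¹ ≤ σ := le_of_lt hσ.1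
      calc (1 - r*σ)^2 / (4*σ) ≤ (1+r)⁻¹ / (4 * (1+r)⁻¹) := by
            apply div_le_div₀ (by positivity) hsq (by positivity)
            linarith
        _ = 1/4 := by field_simp
    calc Real.exp (-(1/4)) * ((1+r)/2) ^ p
        ≤ Real.exp (-(1 - r*σ)^2 / (4*σ)) * σ ^ (-p) := by
          apply mul_le_mul ?_ hpow (by positivity) (Real.exp_nonneg _)
          apply Real.exp_le_exp.2
          rw [neg_div]
          linarith
      _ = σ ^ (-p) * Real.exp (-(1 - r*σ)^2 / (4*σ)) := by rw [mul_comm]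
  -- integrate
  have hfint := aux_f_integrable p r (by linarith)
  have hmono : ∫ σ in Ioc s₀ (s₀ + L), (Real.exp (-(1/4)) * ((1+r)/2) ^ p) ≤
      ∫ σ in Ioc s₀ (s₀ + L), σ ^ (-p) * Real.exp (-(1 - r*σ)^2 / (4*σ)) := by
    apply setIntegral_mono_on
    · exact integrableOn_const measure_Ioc_lt_top.ne
    · exact hfint.mono_set hsub
    · exact measurableSet_Ioc
    · exact hpt
  have hconst : ∫ σ in Ioc s₀ (s₀ + L), (Real.exp (-(1/4)) * ((1+r)/2) ^ p) =
      (Real.exp (-(1/4)) * ((1+r)/2) ^ p) * L := by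
    rw [setIntegral_const, measureReal_def, Real.volume_Ioc, smul_eq_mul, mul_comm]
    congr 1
    rw [ENNReal.toReal_ofReal (by linarith)]
    ring
  have hsetmono : ∫ σ in Ioc s₀ (s₀ + L), σ ^ (-p) * Real.exp (-(1 - r*σ)^2 / (4*σ)) ≤
      ∫ σ in Ioi (0:ℝ), σ ^ (-p) * Real.exp (-(1 - r*σ)^2 / (4*σ)) := by
    apply setIntegral_mono_set hfint
    · filter_upwards [ae_restrict_mem measurableSet_Ioi] with σ hσ
      exact aux_f_nonneg p r σ hσ
    · exact Filter.Eventually.of_forall hsub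
  have hfinal : Real.exp (-(1/4)) * (2:ℝ) ^ (-p) * (1+r) ^ (p - 3/2) =
      (Real.exp (-(1/4)) * ((1+r)/2) ^ p) * L := by
    have h2p : ((1+r)/2:ℝ)^p = (1+r)^p * (2:ℝ)^(-p) := by
      rw [Real.div_rpow h0r.le (by norm_num), Real.rpow_neg (by norm_num), div_eq_mul_inv]
    have h3 : (1+r:ℝ)^(p - 3/2) = (1+r)^p * (1+r)^(-(3:ℝ)/2) := by
      rw [← Real.rpow_add h0r]
      congr 1
      ring
    rw [hL, h2p, h3]
    ring
  linarith

lemma aux_g1_integrable (p : ℝ) (hp : 1 < p) :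
    IntegrableOn (fun σ : ℝ => σ ^ (-p) * Real.exp (-((1/16)/σ))) (Ioi (0:ℝ)) := by
  apply IntegrableOn.congr_fun (aux_integrableOn p (1/16) 0 hp (by norm_num) le_rfl) ?_
    measurableSet_Ioi
  intro σ _
  simp

lemma aux_one_le (p r : ℝ) (hp : 3/2 ≤ p) (hr : 0 ≤ r) : (1:ℝ) ≤ (1+r) ^ (p - 3/2) := by
  have := Real.rpow_le_rpow_of_exponent_le (by linarith : (1:ℝ) ≤ 1 + r)
    (by linarith : (0:ℝ) ≤ p - 3/2)
  rwa [Real.rpow_zero] at this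

lemma aux_B1 (p r : ℝ) (hp : 3/2 ≤ p) (hr : 0 < r) :
    ∫ σ in Ioc (0:ℝ) (2*r)⁻¹, σ ^ (-p) * Real.exp (-(1 - r*σ)^2 / (4*σ)) ≤
      ∫ σ in Ioi (0:ℝ), σ ^ (-p) * Real.exp (-((1/16)/σ)) := by
  have hg1 := aux_g1_integrable p (by linarith)
  have hI := aux_f_integrable p r (by linarith)
  have hsub : Ioc (0:ℝ) (2*r)⁻¹ ⊆ Ioi 0 := fun σ hσ => hσ.1
  calc ∫ σ in Ioc (0:ℝ) (2*r)⁻¹, σ ^ (-p) * Real.exp (-(1 - r*σ)^2 / (4*σ))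
      ≤ ∫ σ in Ioc (0:ℝ) (2*r)⁻¹, σ ^ (-p) * Real.exp (-((1/16)/σ)) := by
        apply setIntegral_mono_on (hI.mono_set hsub) (hg1.mono_set hsub) measurableSet_Ioc
        intro σ hσ
        have hσ0 : 0 < σ := hσ.1
        have hrσ : r * σ ≤ 1/2 := by
          have : σ ≤ (2*r)⁻¹ := hσ.2
          have h2 : (2*r)⁻¹ * (2 * r) = 1 := inv_mul_cancel₀ (by positivity)
          nlinarith
        have h1 : (1:ℝ)/4 ≤ (1 - r*σ)^2 := by nlinarith
        apply mul_le_mul_of_nonneg_left ?_ (Real.rpow_nonneg hσ0.le _)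
        apply Real.exp_le_exp.2
        rw [neg_div, neg_le_neg_iff]
        rw [div_le_div_iff₀ (by positivity) (by positivity)]
        nlinarith
    _ ≤ ∫ σ in Ioi (0:ℝ), σ ^ (-p) * Real.exp (-((1/16)/σ)) := by
        apply setIntegral_mono_set hg1
        · filter_upwards [ae_restrict_mem measurableSet_Ioi] with σ hσ
          have : (0:ℝ) < σ := hσ
          positivity
        · exact Filter.Eventually.of_forall hsub

lemma aux_B2 (p r : ℝ) (hp : 3/2 ≤ p) (hr : 0 < r) :
    ∫ σ in Ioc ((2*r)⁻¹) (2/r), σ ^ (-p) * Real.exp (-(1 - r*σ)^2 / (4*σ)) ≤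
      (2:ℝ)^p * Real.sqrt (8*π) * (1+r) ^ (p - 3/2) := by
  set β : ℝ := r^3/8 with hβdef
  have hβ : 0 < β := by positivity
  have hgint : Integrable (fun σ : ℝ => (2*r)^p * Real.exp (-β * (σ - 1/r)^2)) volume :=
    ((integrable_exp_neg_mul_sq hβ).comp_sub_right (1/r)).const_mul _
  have hI := aux_f_integrable p r (by linarith : (1:ℝ) < p)
  have hsub : Ioc ((2*r)⁻¹) (2/r) ⊆ Ioi (0:ℝ) := fun σ hσ => lt_trans (by positivity) hσ.1
  have step1 : ∫ σ in Ioc ((2*r)⁻¹) (2/r), σ ^ (-p) * Real.exp (-(1 - r*σ)^2 / (4*σ)) ≤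
      ∫ σ in Ioc ((2*r)⁻¹) (2/r), (2*r)^p * Real.exp (-β * (σ - 1/r)^2) := by
    apply setIntegral_mono_on (hI.mono_set hsub) hgint.integrableOn measurableSet_Ioc
    intro σ hσ
    have hσ0 : 0 < σ := lt_trans (by positivity) hσ.1
    have hσu : (2*r)⁻¹ ≤ σ := hσ.1.le
    have hσv : σ ≤ 2/r := hσ.2
    have hpow : σ ^ (-p) ≤ (2*r)^p := by
      have h1 : ((2*r)⁻¹ : ℝ) ^ p ≤ σ ^ p := Real.rpow_le_rpow (by positivity) hσu (by linarith)
      rw [Real.rpow_neg hσ0.le]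
      rw [Real.inv_rpow (by positivity : (0:ℝ) ≤ 2*r)] at h1
      calc (σ ^ p)⁻¹ ≤ (((2*r) ^ p)⁻¹)⁻¹ := by
            apply inv_anti₀ (by positivity) h1
        _ = (2*r)^p := inv_inv _
    have hexp : Real.exp (-(1 - r*σ)^2 / (4*σ)) ≤ Real.exp (-β * (σ - 1/r)^2) := by
      apply Real.exp_le_exp.2
      have e1 : (1 - r*σ)^2 = r^2 * (σ - 1/r)^2 := by field_simp; ring
      have hσv' : r * σ ≤ 2 := by
        rw [le_div_iff₀ hr] at hσv
        linarith
      have h2 : β * (σ - 1/r)^2 * (4*σ) ≤ (1 - r*σ)^2 := by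
        rw [e1, hβdef]
        nlinarith [mul_nonneg (mul_nonneg (sq_nonneg r) (sq_nonneg (σ - 1/r)))
          (by linarith : (0:ℝ) ≤ 2 - r*σ)]
      have h2' : β * (σ - 1/r)^2 ≤ (1 - r*σ)^2 / (4*σ) := by
        rw [le_div_iff₀ (by positivity)]
        linarith
      rw [neg_div, neg_mul]
      exact neg_le_neg h2'
    exact mul_le_mul hpow hexp (Real.exp_nonneg _) (by positivity)
  have step2 : ∫ σ in Ioc ((2*r)⁻¹) (2/r), (2*r)^p * Real.exp (-β * (σ - 1/r)^2) ≤
      ∫ σ : ℝ, (2*r)^p * Real.exp (-β * (σ - 1/r)^2) := by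
    apply setIntegral_le_integral hgint
    exact Filter.Eventually.of_forall (fun σ => by positivity)
  have step3 : ∫ σ : ℝ, (2*r)^p * Real.exp (-β * (σ - 1/r)^2) =
      (2*r)^p * Real.sqrt (π / β) := by
    rw [MeasureTheory.integral_const_mul]
    congr 1
    rw [integral_sub_right_eq_self (fun x : ℝ => Real.exp (-β * x^2)) (1/r)]
    exact integral_gaussian β
  have step4 : (2*r)^p * Real.sqrt (π / β) ≤ (2:ℝ)^p * Real.sqrt (8*π) * (1+r) ^ (p - 3/2) := by
    have e2 : Real.sqrt (π / β) = Real.sqrt (8*π) * (Real.sqrt (r^3))⁻¹ := by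
      rw [← Real.sqrt_inv, ← Real.sqrt_mul (by positivity)]
      congr 1
      rw [hβdef]
      field_simp
    have e3 : Real.sqrt (r^3) = r ^ ((3:ℝ)/2) := by
      rw [Real.sqrt_eq_rpow, ← Real.rpow_natCast r 3, ← Real.rpow_mul hr.le]
      norm_num
    have e4 : (2*r)^p = 2^p * r^p := Real.mul_rpow (by norm_num) hr.le
    rw [e2, e3, e4]
    have e5 : r ^ p * (r ^ ((3:ℝ)/2))⁻¹ = r ^ (p - 3/2) := by
      rw [← Real.rpow_neg hr.le, ← Real.rpow_add hr]
      ring_nf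
    have h6 : r ^ (p - 3/2) ≤ (1+r) ^ (p - 3/2) :=
      Real.rpow_le_rpow hr.le (by linarith) (by linarith)
    calc 2^p * r^p * (Real.sqrt (8*π) * (r ^ ((3:ℝ)/2))⁻¹)
        = (2^p * Real.sqrt (8*π)) * (r ^ p * (r ^ ((3:ℝ)/2))⁻¹) := by ring
      _ = (2^p * Real.sqrt (8*π)) * r ^ (p - 3/2) := by rw [e5]
      _ ≤ (2^p * Real.sqrt (8*π)) * (1+r) ^ (p - 3/2) := by
          apply mul_le_mul_of_nonneg_left h6 (by positivity)
  linarith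

lemma aux_B3_small (p r : ℝ) (hp : 3/2 ≤ p) (hr : 0 < r) (hr1 : r ≤ 1) :
    ∫ σ in Ioi (2/r), σ ^ (-p) * Real.exp (-(1 - r*σ)^2 / (4*σ)) ≤
      ∫ σ in Ioi (2:ℝ), σ ^ (-p) := by
  have hv : (2:ℝ) ≤ 2/r := by
    rw [le_div_iff₀ hr]; nlinarith
  have hv0 : (0:ℝ) < 2/r := by positivity
  have hint2 : IntegrableOn (fun σ : ℝ => σ ^ (-p)) (Ioi (2:ℝ)) :=
    integrableOn_Ioi_rpow_of_lt (by linarith) two_pos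
  calc ∫ σ in Ioi (2/r), σ ^ (-p) * Real.exp (-(1 - r*σ)^2 / (4*σ))
      ≤ ∫ σ in Ioi (2/r), σ ^ (-p) := by
        apply setIntegral_mono_on
          ((aux_f_integrable p r (by linarith)).mono_set (Ioi_subset_Ioi hv0.le))
          (integrableOn_Ioi_rpow_of_lt (by linarith) hv0) measurableSet_Ioi
        intro σ hσ
        have hσ0 : 0 < σ := lt_trans hv0 hσ
        have h1 : Real.exp (-(1 - r*σ)^2 / (4*σ)) ≤ 1 := by
          apply Real.exp_le_one_iff.2
          rw [neg_div]
          have : 0 ≤ (1 - r*σ)^2 / (4*σ) := by positivity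
          linarith
        nlinarith [Real.rpow_nonneg hσ0.le (-p), Real.exp_nonneg (-(1 - r*σ)^2 / (4*σ))]
    _ ≤ ∫ σ in Ioi (2:ℝ), σ ^ (-p) := by
        apply setIntegral_mono_set hint2
        · filter_upwards [ae_restrict_mem measurableSet_Ioi] with σ hσ
          exact Real.rpow_nonneg (le_trans two_pos.le (le_of_lt hσ)) _
        · exact Filter.Eventually.of_forall (Ioi_subset_Ioi hv)

lemma aux_B3_big (p r : ℝ) (hp : 3/2 ≤ p) (hr1 : 1 < r) :
    ∫ σ in Ioi (2/r), σ ^ (-p) * Real.exp (-(1 - r*σ)^2 / (4*σ)) ≤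
      16 * (2:ℝ) ^ (-p) * (1+r) ^ (p - 3/2) := by
  have hr : (0:ℝ) < r := by linarith
  have hv0 : (0:ℝ) < 2/r := by positivity
  set k : ℝ := r^2/16 with hkdef
  have hk : 0 < k := by positivity
  have hgint : IntegrableOn (fun σ : ℝ => (r/2)^p * Real.exp (-(k*σ))) (Ioi (2/r)) := by
    apply Integrable.const_mul
    apply IntegrableOn.congr_fun (exp_neg_integrableOn_Ioi (2/r) hk) ?_ measurableSet_Ioi
    intro σ _
    simp [neg_mul]
  have step1 : ∫ σ in Ioi (2/r), σ ^ (-p) * Real.exp (-(1 - r*σ)^2 / (4*σ)) ≤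
      ∫ σ in Ioi (2/r), (r/2)^p * Real.exp (-(k*σ)) := by
    apply setIntegral_mono_on
      ((aux_f_integrable p r (by linarith)).mono_set (Ioi_subset_Ioi hv0.le))
      hgint measurableSet_Ioi
    intro σ hσ
    have hσv : 2/r < σ := hσ
    have hσ0 : 0 < σ := lt_trans hv0 hσv
    have hrσ : 2 ≤ r * σ := by
      rw [div_lt_iff₀ hr] at hσv
      linarith
    have hpow : σ ^ (-p) ≤ (r/2)^p := by
      have h1 : ((2:ℝ)/r) ^ p ≤ σ ^ p := Real.rpow_le_rpow (by positivity) hσv.le (by linarith)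
      have e1 : ((r:ℝ)/2) = ((2:ℝ)/r)⁻¹ := by field_simp
      rw [Real.rpow_neg hσ0.le, e1, Real.inv_rpow (by positivity)]
      exact inv_anti₀ (by positivity) h1
    have hexp : Real.exp (-(1 - r*σ)^2 / (4*σ)) ≤ Real.exp (-(k*σ)) := by
      apply Real.exp_le_exp.2
      have h2 : k * σ * (4*σ) ≤ (1 - r*σ)^2 := by
        rw [hkdef]
        nlinarith [sq_nonneg (r*σ - 2)]
      have h2' : k * σ ≤ (1 - r*σ)^2 / (4*σ) := by
        rw [le_div_iff₀ (by positivity)]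
        linarith
      rw [neg_div]
      exact neg_le_neg h2'
    exact mul_le_mul hpow hexp (Real.exp_nonneg _) (by positivity)
  have step2 : ∫ σ in Ioi (2/r), (r/2)^p * Real.exp (-(k*σ)) =
      (r/2)^p * (k⁻¹ * Real.exp (-(k * (2/r)))) := by
    rw [MeasureTheory.integral_const_mul]
    congr 1
    rw [integral_comp_mul_left_Ioi (fun x => Real.exp (-x)) (2/r) hk, integral_exp_neg_Ioi]
    simp [smul_eq_mul]
  have step3 : (r/2)^p * (k⁻¹ * Real.exp (-(k * (2/r)))) ≤ 16 * (2:ℝ)^(-p) * (1+r)^(p-3/2) := by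
    have hexp1 : Real.exp (-(k * (2/r))) ≤ 1 := by
      apply Real.exp_le_one_iff.2
      have : 0 ≤ k * (2/r) := by positivity
      linarith
    have e4 : (r/2)^p = r^p * (2:ℝ)^(-p) := by
      rw [Real.div_rpow hr.le (by norm_num), Real.rpow_neg (by norm_num), div_eq_mul_inv]
    have e5 : k⁻¹ = 16 * r ^ (-(2:ℝ)) := by
      have h8 : r ^ (-(2:ℝ)) = (r ^ (2:ℕ))⁻¹ := by
        rw [Real.rpow_neg hr.le]
        congr 1
        rw [← Real.rpow_natCast r 2]
        norm_num
      rw [hkdef, h8]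
      field_simp
    have e6 : r^p * r^(-(2:ℝ)) = r ^ (p - 2) := by
      rw [← Real.rpow_add hr]
      ring_nf
    have h7 : r ^ (p-2) ≤ (1+r) ^ (p - 3/2) := by
      calc r ^ (p-2) ≤ r ^ (p - 3/2) :=
            Real.rpow_le_rpow_of_exponent_le hr1.le (by linarith)
        _ ≤ (1+r) ^ (p - 3/2) := Real.rpow_le_rpow hr.le (by linarith) (by linarith)
    calc (r/2)^p * (k⁻¹ * Real.exp (-(k * (2/r))))
        ≤ (r/2)^p * (k⁻¹ * 1) := by
          apply mul_le_mul_of_nonneg_left ?_ (by positivity)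
          apply mul_le_mul_of_nonneg_left hexp1 (by positivity)
      _ = 16 * (2:ℝ)^(-p) * (r^p * r^(-(2:ℝ))) := by rw [e4, e5]; ring
      _ = 16 * (2:ℝ)^(-p) * r^(p-2) := by rw [e6]
      _ ≤ 16 * (2:ℝ)^(-p) * (1+r)^(p-3/2) := by
          apply mul_le_mul_of_nonneg_left h7 (by positivity)
  linarith

lemma aux_upper (p : ℝ) (hp : 3/2 ≤ p) :
    ∃ C : ℝ, 0 < C ∧ ∀ r : ℝ, 0 ≤ r →
      (∫ σ in Ioi (0:ℝ), σ ^ (-p) * Real.exp (-(1 - r*σ)^2 / (4*σ))) ≤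
        C * (1+r) ^ (p - 3/2) := by
  set K₁ : ℝ := ∫ σ in Ioi (0:ℝ), σ ^ (-p) * Real.exp (-((1/16)/σ)) with hK₁
  set K₃ : ℝ := ∫ σ in Ioi (2:ℝ), σ ^ (-p) with hK₃
  have hK₁0 : 0 ≤ K₁ := by
    apply setIntegral_nonneg measurableSet_Ioi
    intro σ hσ
    have : (0:ℝ) < σ := hσ
    positivity
  have hK₃0 : 0 ≤ K₃ := by
    apply setIntegral_nonneg measurableSet_Ioi
    intro σ hσ
    exact Real.rpow_nonneg (le_trans two_pos.le hσ.le) _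
  set CB : ℝ := (2:ℝ)^p * Real.sqrt (8*π) with hCB
  have hCB0 : 0 ≤ CB := by positivity
  set C3 : ℝ := 16 * (2:ℝ)^(-p) with hC3
  have hC30 : 0 ≤ C3 := by positivity
  refine ⟨K₁ + K₃ + CB + C3 + 1, by positivity, fun r hr => ?_⟩
  have hone := aux_one_le p r hp hr
  have hfint := aux_f_integrable p r (by linarith : (1:ℝ) < p)
  rcases eq_or_lt_of_le hr with hr0 | hrpos
  · -- r = 0
    have hle : ∫ σ in Ioi (0:ℝ), σ ^ (-p) * Real.exp (-(1 - r*σ)^2 / (4*σ)) ≤ K₁ := by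
      rw [hK₁]
      apply setIntegral_mono_on hfint (aux_g1_integrable p (by linarith)) measurableSet_Ioi
      intro σ hσ
      have hσ0 : (0:ℝ) < σ := hσ
      apply mul_le_mul_of_nonneg_left ?_ (Real.rpow_nonneg hσ0.le _)
      apply Real.exp_le_exp.2
      rw [neg_div, neg_le_neg_iff, div_le_div_iff₀ (by positivity) (by positivity), ← hr0]
      nlinarith
    nlinarith
  · -- r > 0
    have hu0 : (0:ℝ) < (2*r)⁻¹ := by positivity
    have huv : ((2*r)⁻¹ : ℝ) ≤ 2/r := by
      rw [inv_le_iff_one_le_mul₀ (by positivity), div_mul_eq_mul_div, le_div_iff₀ hrpos]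
      nlinarith
    have hsplit2 : Ioc ((2*r)⁻¹) (2/r) ∪ Ioi (2/r) = Ioi ((2*r)⁻¹ : ℝ) :=
      Ioc_union_Ioi_eq_Ioi huv
    have hsplit1 : Ioc (0:ℝ) ((2*r)⁻¹) ∪ Ioi ((2*r)⁻¹) = Ioi (0:ℝ) :=
      Ioc_union_Ioi_eq_Ioi hu0.le
    have hIu : IntegrableOn (fun σ : ℝ => σ ^ (-p) * Real.exp (-(1 - r*σ)^2 / (4*σ)))
        (Ioi ((2*r)⁻¹ : ℝ)) := hfint.mono_set (Ioi_subset_Ioi hu0.le)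
    have heq1 : ∫ σ in Ioi (0:ℝ), σ ^ (-p) * Real.exp (-(1 - r*σ)^2 / (4*σ)) =
        (∫ σ in Ioc (0:ℝ) ((2*r)⁻¹), σ ^ (-p) * Real.exp (-(1 - r*σ)^2 / (4*σ))) +
        ∫ σ in Ioi ((2*r)⁻¹ : ℝ), σ ^ (-p) * Real.exp (-(1 - r*σ)^2 / (4*σ)) := by
      rw [← hsplit1]
      exact setIntegral_union Ioc_disjoint_Ioi_same measurableSet_Ioi
        (hfint.mono_set (by rw [← hsplit1]; exact subset_union_left)) hIu
    have heq2 : ∫ σ in Ioi ((2*r)⁻¹ : ℝ), σ ^ (-p) * Real.exp (-(1 - r*σ)^2 / (4*σ)) =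
        (∫ σ in Ioc ((2*r)⁻¹) (2/r), σ ^ (-p) * Real.exp (-(1 - r*σ)^2 / (4*σ))) +
        ∫ σ in Ioi (2/r), σ ^ (-p) * Real.exp (-(1 - r*σ)^2 / (4*σ)) := by
      rw [← hsplit2]
      exact setIntegral_union Ioc_disjoint_Ioi_same measurableSet_Ioi
        (hIu.mono_set (by rw [← hsplit2]; exact subset_union_left))
        (hIu.mono_set (by rw [← hsplit2]; exact subset_union_right))
    have hB1 := aux_B1 p r hp hrpos
    have hB2 := aux_B2 p r hp hrpos
    rw [← hK₁] at hB1
    have hB3 : ∫ σ in Ioi (2/r), σ ^ (-p) * Real.exp (-(1 - r*σ)^2 / (4*σ)) ≤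
        (K₃ + C3) * (1+r) ^ (p - 3/2) := by
      rcases le_or_gt r 1 with hr1 | hr1
      · have := aux_B3_small p r hp hrpos hr1
        rw [← hK₃] at this
        nlinarith
      · have := aux_B3_big p r hp hr1
        rw [← hC3] at this
        nlinarith [mul_nonneg hK₃0 (le_trans zero_le_one hone)]
    rw [heq1, heq2]
    have hx : (0:ℝ) ≤ (1+r) ^ (p - 3/2) := by linarith
    nlinarith

theorem stmt8 (d : ℕ) (hd : 3 ≤ d) :
    ∃ c₁ c₂ : ℝ, 0 < c₁ ∧ 0 < c₂ ∧
      ∀ x y : EuclideanSpace ℝ (Fin d), x ≠ 0 →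
        c₁ * (Real.exp (-(‖x‖*‖y‖ - ⟪x, y⟫)/2) * (1 + ‖x‖*‖y‖) ^ (((d:ℝ)-3)/2) / ‖x‖ ^ ((d:ℝ)-2)) ≤
          (∫ τ in Set.Ioi (0:ℝ), τ ^ (-(d:ℝ)/2) * Real.exp (-‖x - τ • y‖^2 / (4*τ))) ∧
        (∫ τ in Set.Ioi (0:ℝ), τ ^ (-(d:ℝ)/2) * Real.exp (-‖x - τ • y‖^2 / (4*τ))) ≤
          c₂ * (Real.exp (-(‖x‖*‖y‖ - ⟪x, y⟫)/2) * (1 + ‖x‖*‖y‖) ^ (((d:ℝ)-3)/2) / ‖x‖ ^ ((d:ℝ)-2)) := by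
  set p : ℝ := (d:ℝ)/2 with hpdef
  have hd3 : (3:ℝ) ≤ (d:ℝ) := by exact_mod_cast hd
  have hp : 3/2 ≤ p := by rw [hpdef]; linarith
  obtain ⟨C, hC, hCb⟩ := aux_upper p hp
  refine ⟨Real.exp (-(1/4)) * (2:ℝ)^(-p), C, by positivity, hC, fun x y hx => ?_⟩
  set a : ℝ := ‖x‖ with hadef
  set b : ℝ := ‖y‖ with hbdef
  have ha : 0 < a := norm_pos_iff.2 hx
  have hb : 0 ≤ b := norm_nonneg y
  set c : ℝ := ⟪x, y⟫ with hcdef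
  set r : ℝ := a * b with hrdef
  have hr : 0 ≤ r := by positivity
  have ha2 : (0:ℝ) < a^2 := by positivity
  -- pointwise identity 1
  have hpt1 : ∀ τ ∈ Ioi (0:ℝ),
      τ ^ (-(d:ℝ)/2) * Real.exp (-‖x - τ • y‖^2 / (4*τ)) =
      Real.exp ((c - r)/2) * (τ ^ (-p) * Real.exp (-(a - b*τ)^2 / (4*τ))) := by
    intro τ hτ
    have hτ0 : (0:ℝ) < τ := hτ
    have hnorm : ‖x - τ • y‖^2 = a^2 - 2*τ*c + τ^2*b^2 := by
      rw [norm_sub_sq_real, real_inner_smul_right, norm_smul, Real.norm_eq_abs,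
        abs_of_pos hτ0, mul_pow]
      ring
    have hexp1 : τ ^ (-(d:ℝ)/2) = τ ^ (-p) := by
      congr 1
      rw [hpdef]
      ring
    rw [hexp1, hnorm,
      show Real.exp ((c - r)/2) * (τ ^ (-p) * Real.exp (-(a - b*τ)^2 / (4*τ))) =
        τ ^ (-p) * Real.exp ((c - r)/2 + -(a - b*τ)^2 / (4*τ)) by rw [Real.exp_add]; ring]
    congr 1
    rw [hrdef]
    field_simp
    ring
  have hstep1 : (∫ τ in Ioi (0:ℝ), τ ^ (-(d:ℝ)/2) * Real.exp (-‖x - τ • y‖^2 / (4*τ))) =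
      Real.exp ((c - r)/2) * ∫ τ in Ioi (0:ℝ), τ ^ (-p) * Real.exp (-(a - b*τ)^2 / (4*τ)) := by
    rw [← MeasureTheory.integral_const_mul]
    exact setIntegral_congr_fun measurableSet_Ioi hpt1
  -- change of variables
  have hCoV : (∫ τ in Ioi (0:ℝ), τ ^ (-p) * Real.exp (-(a - b*τ)^2 / (4*τ))) =
      a^2 * ∫ σ in Ioi (0:ℝ),
        (a^2*σ) ^ (-p) * Real.exp (-(a - b*(a^2*σ))^2 / (4*(a^2*σ))) := by
    have h := integral_comp_mul_left_Ioi
      (fun τ => τ ^ (-p) * Real.exp (-(a - b*τ)^2 / (4*τ))) 0 ha2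
    rw [mul_zero] at h
    rw [h, smul_eq_mul, ← mul_assoc, mul_inv_cancel₀ (ne_of_gt ha2), one_mul]
  -- pointwise identity 2
  have hpt2 : ∀ σ ∈ Ioi (0:ℝ),
      (a^2*σ) ^ (-p) * Real.exp (-(a - b*(a^2*σ))^2 / (4*(a^2*σ))) =
      (a^2) ^ (-p) * (σ ^ (-p) * Real.exp (-(1 - r*σ)^2 / (4*σ))) := by
    intro σ hσ
    have hσ0 : (0:ℝ) < σ := hσ
    rw [Real.mul_rpow ha2.le hσ0.le, mul_assoc]
    congr 2
    have e1 : (a - b*(a^2*σ))^2 = a^2 * (1 - r*σ)^2 := by rw [hrdef]; ring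
    rw [e1]
    field_simp
  have hstep2 : (∫ σ in Ioi (0:ℝ),
      (a^2*σ) ^ (-p) * Real.exp (-(a - b*(a^2*σ))^2 / (4*(a^2*σ)))) =
      (a^2) ^ (-p) * ∫ σ in Ioi (0:ℝ), σ ^ (-p) * Real.exp (-(1 - r*σ)^2 / (4*σ)) := by
    rw [← MeasureTheory.integral_const_mul]
    exact setIntegral_congr_fun measurableSet_Ioi hpt2
  set I : ℝ := ∫ σ in Ioi (0:ℝ), σ ^ (-p) * Real.exp (-(1 - r*σ)^2 / (4*σ)) with hIdef
  have hEQ : (∫ τ in Ioi (0:ℝ), τ ^ (-(d:ℝ)/2) * Real.exp (-‖x - τ • y‖^2 / (4*τ))) =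
      (Real.exp ((c - r)/2) * (a^2 * (a^2) ^ (-p))) * I := by
    rw [hstep1, hCoV, hstep2]
    ring
  -- RHS equality
  have hRHS : Real.exp (-(r - c)/2) * (1 + r) ^ (((d:ℝ)-3)/2) / a ^ ((d:ℝ)-2) =
      (Real.exp ((c - r)/2) * (a^2 * (a^2) ^ (-p))) * (1+r) ^ (p - 3/2) := by
    have t2 : (a^2 : ℝ) = a ^ (2:ℝ) := by
      rw [← Real.rpow_natCast a 2]
      norm_num
    have e2 : a^2 * (a^2) ^ (-p) = (a ^ ((d:ℝ)-2))⁻¹ := by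
      rw [t2, ← Real.rpow_mul ha.le, ← Real.rpow_add ha, ← Real.rpow_neg ha.le]
      congr 1
      rw [hpdef]
      ring
    have e3 : -(r - c)/2 = (c - r)/2 := by ring
    have e4 : (((d:ℝ)-3)/2) = p - 3/2 := by rw [hpdef]; ring
    rw [e2, e3, e4]
    ring
  have hE' : 0 < Real.exp ((c - r)/2) * (a^2 * (a^2) ^ (-p)) := by positivity
  have hlow := aux_lower p hp r hr
  have hup := hCb r hr
  rw [← hIdef] at hlow hup
  constructor
  · rw [hEQ, hRHS]
    nlinarith [mul_le_mul_of_nonneg_left hlow hE'.le]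
  · rw [hEQ, hRHS]
    nlinarith [mul_le_mul_of_nonneg_left hup hE'.le]

end
end

section
/- Let d ≥ 4, A = { (z₁,z₂) ∈ ℝ × ℝ^{d-1} : z₁ > 4, |z₂| ≤ √z₁ }, and V(z) = -(1/z₁) 1_A(z). Then with x = 0 and y = (1,0,…,0), ∫_{ℝ^d} |V(z)| e^{-(|z||y| - z·y)/2} (1 + |z||y|)^{(d-3)/2} / |z|^{d-2} dz = +∞. -/
open MeasureTheory Real RealInnerProductSpace ENNReal

lemma aux_inv_div (c : ℝ) (hc : 0 < c) :
    ∫⁻ t in Set.Ioi (4 : ℝ), ENNReal.ofReal (c * t ^ (-1 : ℝ)) = ⊤ := by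
  by_contra h
  have hmeas : Measurable fun t : ℝ => c * t ^ (-1 : ℝ) := by fun_prop
  have hnn : 0 ≤ᵐ[volume.restrict (Set.Ioi (4:ℝ))] fun t : ℝ => c * t ^ (-1 : ℝ) := by
    filter_upwards [ae_restrict_mem measurableSet_Ioi] with t ht
    have ht' : (0:ℝ) < t := lt_trans (by norm_num) ht
    positivity
  have hint : IntegrableOn (fun t : ℝ => c * t ^ (-1 : ℝ)) (Set.Ioi 4) :=
    ⟨hmeas.aestronglyMeasurable, (hasFiniteIntegral_iff_ofReal hnn).2 (lt_top_iff_ne_top.2 h)⟩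
  have h2 : IntegrableOn (fun t : ℝ => t ^ (-1 : ℝ)) (Set.Ioi 4) := by
    have h3 := hint.const_mul c⁻¹
    simp [← mul_assoc, inv_mul_cancel₀ hc.ne'] at h3
    exact h3
  rw [integrableOn_Ioi_rpow_iff (by norm_num : (0:ℝ) < 4)] at h2
  norm_num at h2

theorem main_aux (d : ℕ) (hd : 4 ≤ d) (i0 : Fin d) :
    (∫⁻ z : EuclideanSpace ℝ (Fin d),
        ENNReal.ofReal
          (|Set.indicator {w : EuclideanSpace ℝ (Fin d) | 4 < w i0 ∧ ‖w‖^2 - (w i0)^2 ≤ w i0}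
              (fun w => -(w i0)⁻¹) z| *
            (Real.exp (-(‖z‖ * ‖(EuclideanSpace.single i0 1 : EuclideanSpace ℝ (Fin d))‖ -
                  ⟪z, (EuclideanSpace.single i0 1 : EuclideanSpace ℝ (Fin d))⟫)/2) *
              (1 + ‖z‖ * ‖(EuclideanSpace.single i0 1 : EuclideanSpace ℝ (Fin d))‖) ^ (((d:ℝ)-3)/2) /
                ‖z‖ ^ ((d:ℝ)-2)))) = ⊤ := by
  obtain ⟨n, rfl⟩ : ∃ n, d = n + 1 := ⟨d - 1, by omega⟩
  have hn : 3 ≤ n := by omega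
  have hnr : (3:ℝ) ≤ (n:ℝ) := by exact_mod_cast hn
  have hdr4 : (4:ℝ) ≤ ((n+1 : ℕ) : ℝ) := by exact_mod_cast hd
  set p : ℝ := (((n+1 : ℕ) : ℝ) - 3)/2 with hp'
  set q : ℝ := ((n+1 : ℕ) : ℝ) - 2 with hq'
  have hp : 0 ≤ p := by rw [hp']; push_cast; linarith
  have hq : 2 ≤ q := by rw [hq']; push_cast; linarith
  set eexp : ℝ := p - q - 1 with he'
  set C : ℝ := Real.exp (-(1/2)) * (2:ℝ) ^ (-q) with hC'
  have hC : 0 < C := by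
    rw [hC']
    positivity
  set A : Set (EuclideanSpace ℝ (Fin (n+1))) :=
    {w : EuclideanSpace ℝ (Fin (n+1)) | 4 < w i0 ∧ ‖w‖^2 - (w i0)^2 ≤ w i0} with hA
  have hsingle : ‖(EuclideanSpace.single i0 1 : EuclideanSpace ℝ (Fin (n+1)))‖ = 1 := by
    simp
  have hinner : ∀ z : EuclideanSpace ℝ (Fin (n+1)),
      ⟪z, (EuclideanSpace.single i0 1 : EuclideanSpace ℝ (Fin (n+1)))⟫ = z i0 := by
    intro z
    rw [EuclideanSpace.inner_single_right]
    simp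
  simp only [hsingle, hinner, mul_one]
  -- norm squared decomposition
  have hnormsq : ∀ z : EuclideanSpace ℝ (Fin (n+1)),
      ‖z‖^2 = (z i0)^2 + ∑ j : Fin n, (z (i0.succAbove j))^2 := by
    intro z
    rw [EuclideanSpace.norm_eq, Real.sq_sqrt (by positivity)]
    rw [Fin.sum_univ_succAbove (fun i => ‖z i‖^2) i0]
    simp [Real.norm_eq_abs, sq_abs]
  set S : Set (EuclideanSpace ℝ (Fin (n+1))) :=
    {z : EuclideanSpace ℝ (Fin (n+1)) | 4 < z i0 ∧
      ∀ j : Fin n, |z (i0.succAbove j)| ≤ Real.sqrt (z i0) / (n+1)} with hS'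
  -- pointwise lower bound
  have hpoint : ∀ z : EuclideanSpace ℝ (Fin (n+1)),
      S.indicator (fun z => ENNReal.ofReal (C * (z i0) ^ eexp)) z ≤
      ENNReal.ofReal (|A.indicator (fun w => -(w i0)⁻¹) z| *
        (Real.exp (-(‖z‖ - z i0)/2) * (1+‖z‖) ^ p / ‖z‖ ^ q)) := by
    intro z
    rcases Classical.em (z ∈ S) with hz | hz
    · rw [Set.indicator_of_mem hz]
      obtain ⟨ht, hcube⟩ := hz
      have ht0 : (0:ℝ) < z i0 := by linarith
      have hsum : ∑ j : Fin n, (z (i0.succAbove j))^2 ≤ z i0 := by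
        calc ∑ j : Fin n, (z (i0.succAbove j))^2
            ≤ ∑ _j : Fin n, (Real.sqrt (z i0) / (n+1))^2 := by
              apply Finset.sum_le_sum
              intro j _
              rw [← sq_abs]
              exact pow_le_pow_left₀ (abs_nonneg _) (hcube j) 2
          _ = (n:ℝ) * (z i0) / ((n:ℝ)+1)^2 := by
              rw [Finset.sum_const, Finset.card_univ, Fintype.card_fin, nsmul_eq_mul,
                div_pow, Real.sq_sqrt ht0.le]
              ring
          _ ≤ z i0 := by
              rw [div_le_iff₀ (by positivity)]
              nlinarith [mul_nonneg ht0.le (by positivity : (0:ℝ) ≤ (n:ℝ)^2 + (n:ℝ) + 1)]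
      have hzA : z ∈ A := by
        refine ⟨ht, ?_⟩
        have hdiff : ‖z‖^2 - (z i0)^2 = ∑ j : Fin n, (z (i0.succAbove j))^2 := by
          rw [hnormsq z]; ring
        rw [hdiff]; exact hsum
      have hz_ge : z i0 ≤ ‖z‖ := by
        have h1 : (z i0)^2 ≤ ‖z‖^2 := by
          rw [hnormsq z]
          have hnn : (0:ℝ) ≤ ∑ j : Fin n, (z (i0.succAbove j))^2 :=
            Finset.sum_nonneg fun j _ => sq_nonneg _
          linarith
        calc z i0 = Real.sqrt ((z i0)^2) := (Real.sqrt_sq ht0.le).symm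
          _ ≤ Real.sqrt (‖z‖^2) := Real.sqrt_le_sqrt h1
          _ = ‖z‖ := Real.sqrt_sq (norm_nonneg z)
      have hz_le : ‖z‖ ≤ z i0 + 1 := by
        have h1 : ‖z‖^2 ≤ (z i0 + 1)^2 := by
          rw [hnormsq z]
          nlinarith [hsum]
        calc ‖z‖ = Real.sqrt (‖z‖^2) := (Real.sqrt_sq (norm_nonneg z)).symm
          _ ≤ Real.sqrt ((z i0 + 1)^2) := Real.sqrt_le_sqrt h1
          _ = z i0 + 1 := Real.sqrt_sq (by linarith)
      have hz_pos : (0:ℝ) < ‖z‖ := lt_of_lt_of_le ht0 hz_ge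
      have hz2t : ‖z‖ ≤ 2 * z i0 := by linarith
      rw [Set.indicator_of_mem hzA, abs_neg, abs_inv, abs_of_pos ht0]
      apply ENNReal.ofReal_le_ofReal
      have lhs_eq : C * (z i0) ^ eexp =
          (z i0)⁻¹ * (Real.exp (-(1/2)) * (z i0) ^ p * (2 * z i0) ^ (-q)) := by
        rw [hC', he', Real.rpow_sub ht0, Real.rpow_sub ht0, Real.rpow_one,
          Real.mul_rpow (by norm_num : (0:ℝ) ≤ 2) ht0.le,
          Real.rpow_neg ht0.le q]
        ring
      have rhs_eq : Real.exp (-(‖z‖ - z i0)/2) * (1+‖z‖) ^ p / ‖z‖ ^ q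
          = Real.exp (-(‖z‖ - z i0)/2) * (1+‖z‖) ^ p * ‖z‖ ^ (-q) := by
        rw [Real.rpow_neg (norm_nonneg z)]
        ring
      rw [lhs_eq, rhs_eq]
      have e1 : Real.exp (-(1/2)) ≤ Real.exp (-(‖z‖ - z i0)/2) := by
        apply Real.exp_le_exp.2; linarith
      have e2 : (z i0) ^ p ≤ (1+‖z‖) ^ p :=
        Real.rpow_le_rpow ht0.le (by linarith) hp
      have e3 : (2 * z i0) ^ (-q) ≤ ‖z‖ ^ (-q) :=
        Real.rpow_le_rpow_of_nonpos hz_pos hz2t (by linarith)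
      refine mul_le_mul_of_nonneg_left ?_ (inv_nonneg.2 ht0.le)
      refine mul_le_mul (mul_le_mul e1 e2 (by positivity) (Real.exp_pos _).le) e3
        (by positivity) (by positivity)
    · rw [Set.indicator_of_notMem hz]
      exact zero_le
  -- coordinate measurability
  have hcoord : ∀ i : Fin (n+1),
      Measurable fun z : EuclideanSpace ℝ (Fin (n+1)) => z i :=
    fun i => (measurable_pi_apply i).comp (WithLp.measurable_ofLp 2 _)
  have hSm : MeasurableSet S := by
    have hSeq : S = {z : EuclideanSpace ℝ (Fin (n+1)) | 4 < z i0} ∩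
        ⋂ j : Fin n, {z : EuclideanSpace ℝ (Fin (n+1)) |
          |z (i0.succAbove j)| ≤ Real.sqrt (z i0) / (n+1)} := by
      ext z
      simp [hS', Set.mem_iInter]
    rw [hSeq]
    refine (measurableSet_lt measurable_const (hcoord i0)).inter ?_
    refine MeasurableSet.iInter fun j => ?_
    exact measurableSet_le ((hcoord _).abs) (((hcoord i0).sqrt).div_const _)
  have hgm : Measurable fun z : EuclideanSpace ℝ (Fin (n+1)) =>
      ENNReal.ofReal (C * (z i0) ^ eexp) := by
    apply Measurable.ennreal_ofReal
    have := hcoord i0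
    fun_prop
  have hHm : Measurable (S.indicator fun z : EuclideanSpace ℝ (Fin (n+1)) =>
      ENNReal.ofReal (C * (z i0) ^ eexp)) := hgm.indicator hSm
  -- measure preserving transfer
  have m1 := (EuclideanSpace.volume_preserving_symm_measurableEquiv_toLp (Fin (n+1))).symm
  have m2 := (volume_preserving_piFinSuccAbove (fun _ : Fin (n+1) => ℝ) i0).symm
  have htrans := (m1.comp m2).lintegral_comp hHm
  have hcomp : ∀ pr : ℝ × (Fin n → ℝ),
      ((⇑(MeasurableEquiv.toLp 2 (Fin (n+1) → ℝ)) ∘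
        ⇑(MeasurableEquiv.piFinSuccAbove (fun _ : Fin (n+1) => ℝ) i0).symm) pr :
          EuclideanSpace ℝ (Fin (n+1))) = (WithLp.toLp 2 (i0.insertNth pr.1 pr.2) :
            EuclideanSpace ℝ (Fin (n+1))) := fun pr => rfl
  set S' : Set (ℝ × (Fin n → ℝ)) :=
    {pr : ℝ × (Fin n → ℝ) | 4 < pr.1 ∧
      ∀ j : Fin n, |pr.2 j| ≤ Real.sqrt pr.1 / (n+1)} with hS''
  set g' : ℝ × (Fin n → ℝ) → ℝ≥0∞ :=
    fun pr => ENNReal.ofReal (C * pr.1 ^ eexp) with hg''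
  have hmem_iff : ∀ pr : ℝ × (Fin n → ℝ),
      ((WithLp.toLp 2 (i0.insertNth pr.1 pr.2) : EuclideanSpace ℝ (Fin (n+1))) ∈ S) ↔ pr ∈ S' := by
    intro pr
    have happ0 : (WithLp.toLp 2 (i0.insertNth pr.1 pr.2) : EuclideanSpace ℝ (Fin (n+1))) i0 = pr.1 :=
      by exact Fin.insertNth_apply_same (α := fun _ => ℝ) i0 pr.1 pr.2
    have happj : ∀ j : Fin n,
        (WithLp.toLp 2 (i0.insertNth pr.1 pr.2) : EuclideanSpace ℝ (Fin (n+1))) (i0.succAbove j) = pr.2 j :=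
      fun j => by exact Fin.insertNth_apply_succAbove (α := fun _ => ℝ) i0 pr.1 pr.2 j
    constructor
    · rintro ⟨h1, h2⟩
      rw [happ0] at h1
      refine ⟨h1, fun j => ?_⟩
      have h3 := h2 j
      rwa [happj j, happ0] at h3
    · rintro ⟨h1, h2⟩
      refine ⟨?_, fun j => ?_⟩
      · rw [happ0]; exact h1
      · rw [happj j, happ0]; exact h2 j
  have hfun : ∀ pr : ℝ × (Fin n → ℝ),
      S.indicator (fun z : EuclideanSpace ℝ (Fin (n+1)) =>
        ENNReal.ofReal (C * (z i0) ^ eexp))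
        ((⇑(MeasurableEquiv.toLp 2 (Fin (n+1) → ℝ)) ∘
          ⇑(MeasurableEquiv.piFinSuccAbove (fun _ : Fin (n+1) => ℝ) i0).symm) pr)
      = S'.indicator g' pr := by
    intro pr
    rw [hcomp pr]
    rcases Classical.em ((WithLp.toLp 2 (i0.insertNth pr.1 pr.2) : EuclideanSpace ℝ (Fin (n+1))) ∈ S)
      with hm | hm
    · rw [Set.indicator_of_mem hm, Set.indicator_of_mem ((hmem_iff pr).1 hm)]
      simp [hg'', Fin.insertNth_apply_same]
    · rw [Set.indicator_of_notMem hm,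
        Set.indicator_of_notMem (fun h => hm ((hmem_iff pr).2 h))]
  -- measurability on the product space
  have hS'm : MeasurableSet S' := by
    have hSeq : S' = {pr : ℝ × (Fin n → ℝ) | 4 < pr.1} ∩
        ⋂ j : Fin n, {pr : ℝ × (Fin n → ℝ) |
          |pr.2 j| ≤ Real.sqrt pr.1 / (n+1)} := by
      ext pr
      simp [hS'', Set.mem_iInter]
    rw [hSeq]
    refine (measurableSet_lt measurable_const measurable_fst).inter ?_
    refine MeasurableSet.iInter fun j => ?_
    exact measurableSet_le ((measurable_snd.eval).abs)
      ((measurable_fst.sqrt).div_const _)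
  have hg'm : Measurable g' := by
    apply Measurable.ennreal_ofReal
    fun_prop
  -- the inner integral for fixed t > 4
  have hinner_int : ∀ t : ℝ, t ∈ Set.Ioi (4:ℝ) →
      (∫⁻ w : Fin n → ℝ, S'.indicator g' (t, w)) =
        ENNReal.ofReal (C * t ^ eexp) *
          ENNReal.ofReal (2 * (Real.sqrt t / (n+1))) ^ n := by
    intro t ht
    have ht4 : (4:ℝ) < t := ht
    have hval : ∀ w : Fin n → ℝ, S'.indicator g' (t, w) =
        Set.indicator (Set.pi Set.univ fun _ : Fin n =>
            Set.Icc (-(Real.sqrt t/(n+1))) (Real.sqrt t/(n+1)))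
          (fun _ => ENNReal.ofReal (C * t ^ eexp)) w := by
      intro w
      have hmm : (t, w) ∈ S' ↔
          w ∈ (Set.pi Set.univ fun _ : Fin n =>
            Set.Icc (-(Real.sqrt t/(n+1))) (Real.sqrt t/(n+1))) := by
        simp only [hS'', Set.mem_setOf_eq, Set.mem_pi, Set.mem_univ, forall_true_left,
          Set.mem_Icc, ← abs_le]
        exact ⟨fun h => h.2, fun h => ⟨ht4, h⟩⟩
      rcases Classical.em ((t, w) ∈ S') with hm | hm
      · rw [Set.indicator_of_mem hm, Set.indicator_of_mem (hmm.1 hm)]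
      · rw [Set.indicator_of_notMem hm, Set.indicator_of_notMem (fun h => hm (hmm.2 h))]
    simp_rw [hval]
    rw [lintegral_indicator_const (MeasurableSet.univ_pi fun _ => measurableSet_Icc)]
    rw [volume_pi_pi]
    have hlen : (volume (Set.Icc (-(Real.sqrt t/(n+1))) (Real.sqrt t/(n+1))))
        = ENNReal.ofReal (2 * (Real.sqrt t / (n+1))) := by
      rw [Real.volume_Icc]
      congr 1
      ring
    simp only [hlen, Finset.prod_const, Finset.card_univ, Fintype.card_fin]
  -- the constant for the 1D divergent integral
  set c : ℝ := C * (2/((n:ℝ)+1))^n with hc'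
  have hcpos : 0 < c := by
    rw [hc']
    positivity
  have hkey : ∀ t : ℝ, t ∈ Set.Ioi (4:ℝ) →
      ENNReal.ofReal (c * t ^ (-1:ℝ)) ≤
        ENNReal.ofReal (C * t ^ eexp) *
          ENNReal.ofReal (2 * (Real.sqrt t / (n+1))) ^ n := by
    intro t ht
    have ht0 : (0:ℝ) < t := lt_trans (by norm_num) ht
    rw [← ENNReal.ofReal_pow (by positivity), ← ENNReal.ofReal_mul (by positivity)]
    apply ENNReal.ofReal_le_ofReal
    apply le_of_eq
    have h1 : (2 * (Real.sqrt t / (n+1)))^n = (2/((n:ℝ)+1))^n * Real.sqrt t ^ n := by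
      rw [← mul_pow]
      congr 1
      ring
    have h2 : Real.sqrt t ^ n = t ^ ((n:ℝ)/2) := by
      rw [← Real.rpow_natCast (Real.sqrt t) n, Real.sqrt_eq_rpow,
        ← Real.rpow_mul ht0.le]
      congr 1
      ring
    have h3 : t ^ (-1:ℝ) = t ^ eexp * t ^ ((n:ℝ)/2) := by
      rw [← Real.rpow_add ht0]
      congr 1
      rw [he', hp', hq']
      push_cast
      ring
    rw [hc', h3, h1, h2]
    ring
  -- assemble
  refine eq_top_iff.2 ?_
  calc (⊤ : ℝ≥0∞)
      = ∫⁻ t in Set.Ioi (4:ℝ), ENNReal.ofReal (c * t ^ (-1:ℝ)) := (aux_inv_div c hcpos).symm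
    _ ≤ ∫⁻ t in Set.Ioi (4:ℝ), ∫⁻ w : Fin n → ℝ, S'.indicator g' (t, w) := by
        refine setLIntegral_mono' measurableSet_Ioi fun t ht => ?_
        rw [hinner_int t ht]
        exact hkey t ht
    _ ≤ ∫⁻ t : ℝ, ∫⁻ w : Fin n → ℝ, S'.indicator g' (t, w) :=
        setLIntegral_le_lintegral _ _
    _ = ∫⁻ pr : ℝ × (Fin n → ℝ), S'.indicator g' pr := by
        rw [MeasureTheory.Measure.volume_eq_prod,
          lintegral_prod _ (hg'm.indicator hS'm).aemeasurable]
    _ = ∫⁻ pr : ℝ × (Fin n → ℝ),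
        S.indicator (fun z : EuclideanSpace ℝ (Fin (n+1)) =>
          ENNReal.ofReal (C * (z i0) ^ eexp))
          ((⇑(MeasurableEquiv.toLp 2 (Fin (n+1) → ℝ)) ∘
            ⇑(MeasurableEquiv.piFinSuccAbove (fun _ : Fin (n+1) => ℝ) i0).symm) pr) := by
        refine lintegral_congr fun pr => ?_
        rw [hfun pr]
    _ = ∫⁻ z : EuclideanSpace ℝ (Fin (n+1)),
        S.indicator (fun z : EuclideanSpace ℝ (Fin (n+1)) =>
          ENNReal.ofReal (C * (z i0) ^ eexp)) z := htrans
    _ ≤ _ := lintegral_mono hpoint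

theorem stmt14 (d : ℕ) (hd : 4 ≤ d) :
    (∫⁻ z : EuclideanSpace ℝ (Fin d),
        ENNReal.ofReal
          (|Set.indicator {w : EuclideanSpace ℝ (Fin d) | 4 < w ⟨0, by omega⟩ ∧ ‖w‖^2 - (w ⟨0, by omega⟩)^2 ≤ w ⟨0, by omega⟩}
              (fun w => -(w ⟨0, by omega⟩)⁻¹) z| *
            (Real.exp (-(‖z‖ * ‖(EuclideanSpace.single (⟨0, by omega⟩ : Fin d) 1 : EuclideanSpace ℝ (Fin d))‖ -
                  ⟪z, (EuclideanSpace.single (⟨0, by omega⟩ : Fin d) 1 : EuclideanSpace ℝ (Fin d))⟫)/2) *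
              (1 + ‖z‖ * ‖(EuclideanSpace.single (⟨0, by omega⟩ : Fin d) 1 : EuclideanSpace ℝ (Fin d))‖) ^ (((d:ℝ)-3)/2) /
                ‖z‖ ^ ((d:ℝ)-2)))) = ⊤ := by
  exact main_aux d hd ⟨0, by omega⟩
end
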